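/- arXiv:2301.11576 — 6 statements merged into one kernel-verified Lean document; each statement's English description precedes it below -/
import Mathlib

section
/- Let (U_l)_{l ∈ Z^d} be square-integrable random variables on a probability space and (z_k) a sequence in Z^d with self-intersection count V_n. If C_0 := ∑_{l ∈ Z^d} sup_{r ∈ Z^d} |E[U_{r+l} U_r]| < ∞, then E[(∑_{k=0}^{n-1} U_{z_k})^2] ≤ C_0 · V_n for all n ≥ 1. -/
open Finset MeasureTheory

/-- Local time of the sequence `z` at site `l` up to time `n`. -/
def localTime (d : ℕ) (z : ℕ → (Fin d → ℤ)) (n : ℕ) (l : Fin d → ℤ) : ℕ :=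
  ((Finset.range n).filter fun k => z k = l).card

/-- Self-intersection count `V_n = ∑_l N_n(l)^2`. -/
def selfInt (d : ℕ) (z : ℕ → (Fin d → ℤ)) (n : ℕ) : ℕ :=
  ∑ l ∈ (Finset.range n).image z, (localTime d z n l) ^ 2

/-- If `C₀ = ∑_l sup_r |E[U_{r+l} U_r]| < ∞`, then
`E[(∑_{k<n} U_{z_k})^2] ≤ C₀ · V_n`. -/
theorem stmt2 {Ω : Type*} [MeasurableSpace Ω] (P : Measure Ω) [IsProbabilityMeasure P]
    (d : ℕ) (U : (Fin d → ℤ) → Ω → ℝ)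
    (hmeas : ∀ l, Measurable (U l))
    (hL2 : ∀ l, MemLp (U l) 2 P)
    (hbdd : ∀ l : Fin d → ℤ,
      BddAbove (Set.range fun r : Fin d → ℤ => |∫ ω, U (r + l) ω * U r ω ∂P|))
    (hsum : Summable fun l : Fin d → ℤ =>
      ⨆ r : Fin d → ℤ, |∫ ω, U (r + l) ω * U r ω ∂P|)
    (z : ℕ → (Fin d → ℤ)) (n : ℕ) (hn : 1 ≤ n) :
    ∫ ω, (∑ k ∈ Finset.range n, U (z k) ω) ^ 2 ∂P ≤
      (∑' l : Fin d → ℤ, ⨆ r : Fin d → ℤ, |∫ ω, U (r + l) ω * U r ω ∂P|) *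
        (selfInt d z n : ℝ) := by
  classical
  set φ : (Fin d → ℤ) → ℝ := fun l => ⨆ r : Fin d → ℤ, |∫ ω, U (r + l) ω * U r ω ∂P|
    with hφdef
  have hφ0 : ∀ l, 0 ≤ φ l := fun l => (abs_nonneg _).trans (le_ciSup (hbdd l) 0)
  set C : ℝ := ∑' l, φ l with hCdef
  set S : Finset (Fin d → ℤ) := (Finset.range n).image z with hSdef
  set N : (Fin d → ℤ) → ℕ := localTime d z n with hNdef
  have hsum' : Summable φ := hsum
  -- integrability of products
  have hint : ∀ a b, Integrable (fun ω => U a ω * U b ω) P := by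
    intro a b
    have h : MemLp ((U b) • (U a)) 1 P := (hL2 a).smul (hL2 b) (hpqr := ⟨by
      rw [inv_one]
      exact ENNReal.inv_two_add_inv_two⟩)
    rw [memLp_one_iff_integrable] at h
    have he : (fun ω => U a ω * U b ω) = (U b) • (U a) := by
      funext ω; simp [mul_comm]
    rw [he]; exact h
  -- covariance bound
  have hcov : ∀ a b : Fin d → ℤ, ∫ ω, U a ω * U b ω ∂P ≤ φ (a - b) := by
    intro a b
    have h1 : |∫ ω, U (b + (a - b)) ω * U b ω ∂P| ≤ φ (a - b) := le_ciSup (hbdd (a - b)) b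
    rw [add_sub_cancel] at h1
    exact (le_abs_self _).trans h1
  -- expand the square
  have hexp : ∫ ω, (∑ k ∈ Finset.range n, U (z k) ω) ^ 2 ∂P
      = ∑ j ∈ Finset.range n, ∑ k ∈ Finset.range n, ∫ ω, U (z j) ω * U (z k) ω ∂P := by
    have h1 : ∀ ω, (∑ k ∈ Finset.range n, U (z k) ω) ^ 2
        = ∑ j ∈ Finset.range n, ∑ k ∈ Finset.range n, U (z j) ω * U (z k) ω := by
      intro ω; rw [sq, Finset.sum_mul_sum]
    simp_rw [h1]
    rw [integral_finset_sum _ fun j _ => integrable_finset_sum _ fun k _ => hint _ _]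
    exact Finset.sum_congr rfl fun j _ => integral_finset_sum _ fun k _ => hint _ _
  -- row/column sums of φ over S are bounded by C
  have hrow : ∀ a : Fin d → ℤ, ∑ b ∈ S, φ (a - b) ≤ C := by
    intro a
    have hi : ∀ x ∈ S, ∀ y ∈ S, a - x = a - y → x = y := fun x _ y _ h =>
      sub_right_injective h
    calc ∑ b ∈ S, φ (a - b) = ∑ l ∈ S.image (fun b => a - b), φ l :=
          (Finset.sum_image hi).symm
      _ ≤ C := Summable.sum_le_tsum _ (fun l _ => hφ0 l) hsum'
  have hcol : ∀ b : Fin d → ℤ, ∑ a ∈ S, φ (a - b) ≤ C := by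
    intro b
    have hi : ∀ x ∈ S, ∀ y ∈ S, x - b = y - b → x = y := fun x _ y _ h =>
      sub_left_injective h
    calc ∑ a ∈ S, φ (a - b) = ∑ l ∈ S.image (fun a => a - b), φ l :=
          (Finset.sum_image hi).symm
      _ ≤ C := Summable.sum_le_tsum _ (fun l _ => hφ0 l) hsum'
  have hV : (selfInt d z n : ℝ) = ∑ a ∈ S, (N a : ℝ) ^ 2 := by
    simp only [selfInt, hSdef, hNdef]
    push_cast
    rfl
  -- group sums over time by sites
  have hgroup : ∀ (f : (Fin d → ℤ) → ℝ),
      ∑ k ∈ Finset.range n, f (z k) = ∑ a ∈ S, (N a : ℝ) * f a := by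
    intro f
    rw [Finset.sum_comp f z]
    refine Finset.sum_congr rfl fun a _ => ?_
    rw [nsmul_eq_mul]
    rfl
  -- the two halves of the AM-GM bound
  have e1 : ∑ a ∈ S, ∑ b ∈ S, (N a : ℝ) ^ 2 * φ (a - b) ≤ C * ∑ a ∈ S, (N a : ℝ) ^ 2 := by
    calc ∑ a ∈ S, ∑ b ∈ S, (N a : ℝ) ^ 2 * φ (a - b)
        = ∑ a ∈ S, (N a : ℝ) ^ 2 * ∑ b ∈ S, φ (a - b) :=
          Finset.sum_congr rfl fun a _ => (Finset.mul_sum _ _ _).symm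
      _ ≤ ∑ a ∈ S, (N a : ℝ) ^ 2 * C :=
          Finset.sum_le_sum fun a _ => mul_le_mul_of_nonneg_left (hrow a) (sq_nonneg _)
      _ = C * ∑ a ∈ S, (N a : ℝ) ^ 2 := by rw [← Finset.sum_mul, mul_comm]
  have e2 : ∑ a ∈ S, ∑ b ∈ S, (N b : ℝ) ^ 2 * φ (a - b) ≤ C * ∑ a ∈ S, (N a : ℝ) ^ 2 := by
    rw [Finset.sum_comm]
    calc ∑ b ∈ S, ∑ a ∈ S, (N b : ℝ) ^ 2 * φ (a - b)
        = ∑ b ∈ S, (N b : ℝ) ^ 2 * ∑ a ∈ S, φ (a - b) :=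
          Finset.sum_congr rfl fun b _ => (Finset.mul_sum _ _ _).symm
      _ ≤ ∑ b ∈ S, (N b : ℝ) ^ 2 * C :=
          Finset.sum_le_sum fun b _ => mul_le_mul_of_nonneg_left (hcol b) (sq_nonneg _)
      _ = C * ∑ a ∈ S, (N a : ℝ) ^ 2 := by rw [← Finset.sum_mul, mul_comm]
  rw [hexp, hV]
  calc ∑ j ∈ Finset.range n, ∑ k ∈ Finset.range n, ∫ ω, U (z j) ω * U (z k) ω ∂P
      ≤ ∑ j ∈ Finset.range n, ∑ k ∈ Finset.range n, φ (z j - z k) :=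
        Finset.sum_le_sum fun j _ => Finset.sum_le_sum fun k _ => hcov _ _
    _ = ∑ a ∈ S, ∑ b ∈ S, ((N a : ℝ) * (N b : ℝ)) * φ (a - b) := by
        have h1 : ∀ j, ∑ k ∈ Finset.range n, φ (z j - z k)
            = ∑ b ∈ S, (N b : ℝ) * φ (z j - b) := fun j => hgroup fun b => φ (z j - b)
        simp_rw [h1]
        calc ∑ j ∈ Finset.range n, ∑ b ∈ S, (N b : ℝ) * φ (z j - b)
            = ∑ b ∈ S, (N b : ℝ) * ∑ j ∈ Finset.range n, φ (z j - b) := by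
              rw [Finset.sum_comm]
              exact Finset.sum_congr rfl fun b _ => (Finset.mul_sum _ _ _).symm
          _ = ∑ b ∈ S, (N b : ℝ) * ∑ a ∈ S, (N a : ℝ) * φ (a - b) :=
              Finset.sum_congr rfl fun b _ => by rw [hgroup fun a => φ (a - b)]
          _ = ∑ a ∈ S, ∑ b ∈ S, ((N a : ℝ) * (N b : ℝ)) * φ (a - b) := by
              rw [Finset.sum_comm]
              refine Finset.sum_congr rfl fun b _ => ?_
              rw [Finset.mul_sum]
              exact Finset.sum_congr rfl fun a _ => by ring
    _ ≤ ∑ a ∈ S, ∑ b ∈ S, (((N a : ℝ) ^ 2 + (N b : ℝ) ^ 2) / 2) * φ (a - b) := by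
        refine Finset.sum_le_sum fun a _ => Finset.sum_le_sum fun b _ => ?_
        refine mul_le_mul_of_nonneg_right ?_ (hφ0 _)
        nlinarith [sq_nonneg ((N a : ℝ) - (N b : ℝ))]
    _ = (∑ a ∈ S, ∑ b ∈ S, (N a : ℝ) ^ 2 * φ (a - b)
          + ∑ a ∈ S, ∑ b ∈ S, (N b : ℝ) ^ 2 * φ (a - b)) / 2 := by
        simp only [← Finset.sum_add_distrib, Finset.sum_div]
        exact Finset.sum_congr rfl fun a _ => Finset.sum_congr rfl fun b _ => by ring
    _ ≤ C * ∑ a ∈ S, (N a : ℝ) ^ 2 := by linarith [e1, e2]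
end

section
/- Let (U_l)_{l ∈ Z^d} be centered random variables uniformly bounded by K with ∑_l sup_r |E[U_{r+l} U_r]| < ∞, and let (z_k) be a sequence in Z^d whose self-intersection counts satisfy V_n ≤ C_1 n^2/(log n)^β for some β > 1. Then S_n/n → 0 almost surely, where S_n = ∑_{k=0}^{n-1} U_{z_k}. -/
open Finset MeasureTheory Filter

noncomputable def aseq (k : ℕ) : ℝ := (k + 729) / Real.log (k + 729)

noncomputable def nseq (k : ℕ) : ℕ := ⌈Real.exp (aseq k)⌉₊

lemma log_ge_one (k : ℕ) : 1 ≤ Real.log (k + 729) := by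
  rw [Real.le_log_iff_exp_le (by positivity)]
  calc Real.exp 1 ≤ 3 := by
        have := Real.exp_one_lt_d9; linarith
    _ ≤ (k : ℝ) + 729 := by have : (0:ℝ) ≤ k := Nat.cast_nonneg k; linarith

lemma log_sq_le (k : ℕ) : (Real.log (k + 729)) ^ 2 ≤ (k : ℝ) + 729 := by
  set x : ℝ := (k : ℝ) + 729 with hx
  have hx0 : (0:ℝ) < x := by have : (0:ℝ) ≤ k := Nat.cast_nonneg k; simp [hx]; linarith
  set u : ℝ := x ^ ((1:ℝ)/3) with hu
  have hu0 : 0 < u := Real.rpow_pos_of_pos hx0 _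
  have hu9 : 9 ≤ u := by
    have h729 : (729:ℝ) ≤ x := by have : (0:ℝ) ≤ k := Nat.cast_nonneg k; rw [hx]; linarith
    have : ((9:ℝ) ^ (3:ℕ)) ^ ((1:ℝ)/3) ≤ x ^ ((1:ℝ)/3) := by
      have h9 : ((9:ℝ)^(3:ℕ)) = 729 := by norm_num
      apply Real.rpow_le_rpow (by positivity) (by rw [h9]; linarith) (by norm_num)
    calc (9:ℝ) = ((9:ℝ) ^ (3:ℕ)) ^ ((1:ℝ)/3) := by
          rw [← Real.rpow_natCast (9:ℝ) 3, ← Real.rpow_mul (by norm_num)]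
          norm_num
      _ ≤ u := this
  have hcube : u ^ (3:ℕ) = x := by
    rw [hu, ← Real.rpow_natCast _ 3, ← Real.rpow_mul hx0.le]
    norm_num
  have hlog : Real.log x ≤ 3 * u := by
    have : Real.log u ≤ u - 1 := Real.log_le_sub_one_of_pos hu0
    have hlu : Real.log x = 3 * Real.log u := by
      rw [hu, Real.log_rpow hx0]; ring
    linarith
  have hlog0 : 0 ≤ Real.log x := by linarith [log_ge_one k]
  calc (Real.log x) ^ 2 ≤ (3*u)^2 := by nlinarith
    _ ≤ u ^ (3:ℕ) := by nlinarith
    _ = x := hcube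

lemma aseq_ge_log (k : ℕ) : Real.log (k + 729) ≤ aseq k := by
  have h1 := log_ge_one k
  have h2 := log_sq_le k
  rw [aseq, le_div_iff₀ (by linarith)]
  nlinarith

lemma aseq_pos (k : ℕ) : 0 < aseq k := lt_of_lt_of_le (by linarith [log_ge_one k]) (aseq_ge_log k)

lemma nseq_ge_exp (k : ℕ) : Real.exp (aseq k) ≤ nseq k := Nat.le_ceil _

lemma nseq_ge (k : ℕ) : k + 729 ≤ nseq k := by
  have h : (k:ℝ) + 729 ≤ Real.exp (aseq k) := by
    calc (k:ℝ) + 729 = Real.exp (Real.log ((k:ℝ) + 729)) := by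
          rw [Real.exp_log]; have : (0:ℝ) ≤ k := Nat.cast_nonneg k; linarith
      _ ≤ Real.exp (aseq k) := Real.exp_le_exp.2 (aseq_ge_log k)
  have : ((k:ℝ) + 729 : ℝ) ≤ (nseq k : ℝ) := le_trans h (nseq_ge_exp k)
  exact_mod_cast this

lemma nseq_gt (k : ℕ) : k < nseq k := by have := nseq_ge k; omega

lemma nseq_ge_two (k : ℕ) : 2 ≤ nseq k := by have := nseq_ge k; omega

lemma aseq_mono : Monotone aseq := by
  apply monotone_nat_of_le_succ
  intro k
  have h3 : (1:ℝ) ≤ Real.log (k+729) := log_ge_one k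
  have h4 : Real.log ((k:ℝ)+1+729) ≤ Real.log ((k:ℝ)+729) + 1/((k:ℝ)+729) := by
    have hpos : (0:ℝ) < (k:ℝ) + 729 := by have : (0:ℝ) ≤ k := Nat.cast_nonneg k; linarith
    have : Real.log ((k:ℝ)+1+729) - Real.log ((k:ℝ)+729) = Real.log (((k:ℝ)+1+729)/((k:ℝ)+729)) := by
      rw [Real.log_div (by linarith) (by linarith)]
    have h5 : Real.log (((k:ℝ)+1+729)/((k:ℝ)+729)) ≤ ((k:ℝ)+1+729)/((k:ℝ)+729) - 1 :=
      Real.log_le_sub_one_of_pos (by positivity)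
    have h6 : ((k:ℝ)+1+729)/((k:ℝ)+729) - 1 = 1/((k:ℝ)+729) := by field_simp; ring
    linarith
  have hkc : (0:ℝ) ≤ k := Nat.cast_nonneg k
  have hp : (0:ℝ) < (k:ℝ)+729 := by linarith
  have h3' : (1:ℝ) ≤ Real.log ((k:ℝ)+1+729) := by
    have := log_ge_one (k+1); push_cast at this; linarith
  rw [aseq, aseq]
  push_cast
  rw [div_le_div_iff₀ (by linarith) (by linarith)]
  have hmul := mul_le_mul_of_nonneg_left h4 hp.le
  have hc : ((k:ℝ)+729) * (1/((k:ℝ)+729)) = 1 := by field_simp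
  nlinarith [h3, h3']


lemma nseq_mono : Monotone nseq :=
  fun _ _ h => Nat.ceil_le_ceil (Real.exp_le_exp.2 (aseq_mono h))

lemma aseq_gap (k : ℕ) : aseq (k+1) ≤ aseq k + 1 / Real.log ((k:ℝ)+729) := by
  have h1 := log_ge_one k
  have hkc : (0:ℝ) ≤ k := Nat.cast_nonneg k
  have h2 : Real.log ((k:ℝ)+729) ≤ Real.log ((k:ℝ)+1+729) :=
    Real.log_le_log (by linarith) (by linarith)
  have hstep : aseq (k+1) ≤ ((k:ℝ)+1+729) / Real.log ((k:ℝ)+729) := by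
    rw [aseq]; push_cast
    apply div_le_div_of_nonneg_left (by linarith) (by linarith) h2
  have : ((k:ℝ)+1+729) / Real.log ((k:ℝ)+729)
      = aseq k + 1 / Real.log ((k:ℝ)+729) := by
    rw [aseq]; field_simp; ring
  linarith

lemma aseq_atTop : Tendsto aseq atTop atTop := by
  apply tendsto_atTop_mono aseq_ge_log
  apply (Real.tendsto_log_atTop).comp
  apply tendsto_atTop_add_const_right
  exact tendsto_natCast_atTop_atTop

lemma nseq_ratio : Tendsto (fun k => ((nseq (k+1) : ℝ) - nseq k) / nseq k) atTop (nhds 0) := by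
  set u : ℕ → ℝ := fun k => Real.exp (1 / Real.log ((k:ℝ)+729)) - 1 + Real.exp (-aseq k) with hu
  have hB0 : ∀ k, 0 ≤ ((nseq (k+1) : ℝ) - nseq k) / nseq k := by
    intro k
    have := nseq_mono (Nat.le_succ k)
    have h2 := nseq_ge_two k
    apply div_nonneg _ (by positivity)
    have : (nseq k : ℝ) ≤ nseq (k+1) := by exact_mod_cast this
    linarith
  have hBu : ∀ k, ((nseq (k+1) : ℝ) - nseq k) / nseq k ≤ u k := by
    intro k
    have hL := log_ge_one k
    have hnum : (nseq (k+1) : ℝ) - nseq k ≤ u k * nseq k := by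
      have hceil : (nseq (k+1) : ℝ) ≤ Real.exp (aseq (k+1)) + 1 :=
        le_of_lt (Nat.ceil_lt_add_one (Real.exp_pos _).le)
      have hlow : Real.exp (aseq k) ≤ (nseq k : ℝ) := nseq_ge_exp k
      have hfac : Real.exp (aseq (k+1)) + 1 - Real.exp (aseq k)
          = (Real.exp (aseq (k+1) - aseq k) - 1 + Real.exp (-aseq k)) * Real.exp (aseq k) := by
        have e1 : Real.exp (aseq (k+1) - aseq k) * Real.exp (aseq k) = Real.exp (aseq (k+1)) := by
          rw [← Real.exp_add]; ring_nf
        have e2 : Real.exp (-aseq k) * Real.exp (aseq k) = 1 := by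
          rw [← Real.exp_add]; simp
        linear_combination -e1 - e2
      have hfac_le : Real.exp (aseq (k+1) - aseq k) - 1 + Real.exp (-aseq k) ≤ u k := by
        have : aseq (k+1) - aseq k ≤ 1 / Real.log ((k:ℝ)+729) := by
          have := aseq_gap k; linarith
        have := Real.exp_le_exp.2 this
        rw [hu]; simp only; linarith
      have hfac_nonneg : 0 ≤ Real.exp (aseq (k+1) - aseq k) - 1 + Real.exp (-aseq k) := by
        have : (1:ℝ) ≤ Real.exp (aseq (k+1) - aseq k) := by
          rw [Real.one_le_exp_iff]
          have := aseq_mono (Nat.le_succ k); linarith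
        have := Real.exp_pos (-aseq k)
        linarith
      have hu_nonneg : 0 ≤ u k := le_trans hfac_nonneg hfac_le
      calc (nseq (k+1) : ℝ) - nseq k ≤ Real.exp (aseq (k+1)) + 1 - Real.exp (aseq k) := by linarith
        _ = (Real.exp (aseq (k+1) - aseq k) - 1 + Real.exp (-aseq k)) * Real.exp (aseq k) := hfac
        _ ≤ u k * Real.exp (aseq k) := by
            apply mul_le_mul_of_nonneg_right hfac_le (Real.exp_pos _).le
        _ ≤ u k * nseq k := by
            apply mul_le_mul_of_nonneg_left hlow hu_nonneg
    rw [div_le_iff₀]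
    · exact hnum
    · have := nseq_ge_two k
      have : (2:ℝ) ≤ nseq k := by exact_mod_cast this
      linarith
  have hu0 : Tendsto u atTop (nhds 0) := by
    have h1 : Tendsto (fun k : ℕ => Real.exp (1 / Real.log ((k:ℝ)+729)) - 1) atTop (nhds 0) := by
      have hlog : Tendsto (fun k : ℕ => Real.log ((k:ℝ)+729)) atTop atTop :=
        Real.tendsto_log_atTop.comp (tendsto_atTop_add_const_right _ _ tendsto_natCast_atTop_atTop)
      have : Tendsto (fun k : ℕ => 1 / Real.log ((k:ℝ)+729)) atTop (nhds 0) := by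
        simpa [one_div, Pi.inv_def] using hlog.inv_tendsto_atTop
      have := (Real.continuous_exp.tendsto 0).comp this
      simp only [Function.comp_def, Real.exp_zero] at this
      simpa using this.sub_const 1
    have h2 : Tendsto (fun k : ℕ => Real.exp (-aseq k)) atTop (nhds 0) :=
      Real.tendsto_exp_atBot.comp (tendsto_neg_atBot_iff.2 aseq_atTop)
    have := h1.add h2
    rw [hu]
    simpa [one_div] using this
  exact squeeze_zero hB0 hBu hu0


lemma summable_nseq_log {β : ℝ} (hβ : 1 < β) :
    Summable (fun k : ℕ => ((Real.log (nseq k)) ^ β)⁻¹) := by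
  have hβ0 : (0:ℝ) < β := by linarith
  set ε : ℝ := (β-1)/(2*β) with hε_def
  have hε : (0:ℝ) < ε := div_pos (by linarith) (by linarith)
  set p : ℝ := (1+β)/2 with hp
  have hp1 : 1 < p := by rw [hp]; linarith
  have hg : Summable (fun k : ℕ => ((k:ℝ) ^ p)⁻¹) := Real.summable_nat_rpow_inv.2 hp1
  apply summable_of_isBigO_nat hg
  apply Asymptotics.IsBigO.of_bound 1
  have hlog_small : ∀ᶠ x : ℝ in atTop, Real.log x ≤ x ^ ε := by
    have h := (isLittleO_log_rpow_atTop hε).def (by norm_num : (0:ℝ) < 1)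
    filter_upwards [h, eventually_ge_atTop (1:ℝ)] with x hx hx1
    have h1 : |Real.log x| ≤ 1 * |x ^ ε| := by simpa [Real.norm_eq_abs] using hx
    have h2 : (0:ℝ) ≤ x ^ ε := Real.rpow_nonneg (by linarith) _
    calc Real.log x ≤ |Real.log x| := le_abs_self _
      _ ≤ 1 * |x ^ ε| := h1
      _ = x ^ ε := by rw [one_mul, abs_of_nonneg h2]
  have hcomp : Tendsto (fun k : ℕ => ((k:ℝ)+729)) atTop atTop :=
    tendsto_atTop_add_const_right _ _ tendsto_natCast_atTop_atTop
  filter_upwards [hcomp.eventually hlog_small, eventually_ge_atTop 1] with k hk hk1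
  set m : ℝ := (k:ℝ) + 729 with hm
  have hk1' : (1:ℝ) ≤ (k:ℝ) := by exact_mod_cast hk1
  have hm1 : (1:ℝ) ≤ m := by rw [hm]; linarith
  have hm0 : (0:ℝ) < m := by linarith
  have hL1 : (1:ℝ) ≤ Real.log m := log_ge_one k
  have hlogn : aseq k ≤ Real.log (nseq k) := by
    have h1 : Real.exp (aseq k) ≤ (nseq k : ℝ) := nseq_ge_exp k
    calc aseq k = Real.log (Real.exp (aseq k)) := (Real.log_exp _).symm
      _ ≤ Real.log (nseq k) := Real.log_le_log (Real.exp_pos _) h1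
  have ha_pos : 0 < aseq k := aseq_pos k
  -- m^(1-ε) ≤ aseq k
  have hmε : (0:ℝ) < m ^ ε := Real.rpow_pos_of_pos hm0 _
  have haseq : m ^ (1 - ε) ≤ aseq k := by
    have heq : aseq k = m / Real.log m := by rw [aseq, hm]
    rw [heq, Real.rpow_sub hm0, Real.rpow_one]
    exact div_le_div_of_nonneg_left (by linarith) (by linarith) hk
  -- k^p ≤ (log nseq k)^β
  have hkey : (k:ℝ) ^ p ≤ (Real.log (nseq k)) ^ β := by
    calc (k:ℝ) ^ p ≤ m ^ p := Real.rpow_le_rpow (by linarith) (by rw [hm]; linarith) (by linarith)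
      _ = (m ^ (1-ε)) ^ β := by
          rw [← Real.rpow_mul hm0.le]
          congr 1
          rw [hε_def, hp]; field_simp; ring
      _ ≤ (aseq k) ^ β := Real.rpow_le_rpow (Real.rpow_nonneg hm0.le _) haseq hβ0.le
      _ ≤ (Real.log (nseq k)) ^ β := Real.rpow_le_rpow ha_pos.le hlogn hβ0.le
  have hkp : (0:ℝ) < (k:ℝ) ^ p := Real.rpow_pos_of_pos (by linarith) _
  have hval : ((Real.log (nseq k)) ^ β)⁻¹ ≤ ((k:ℝ) ^ p)⁻¹ := by
    apply inv_anti₀ hkp hkey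
  rw [Real.norm_eq_abs, Real.norm_eq_abs, one_mul]
  rw [abs_of_nonneg (by positivity), abs_of_nonneg (by positivity)]
  exact hval

lemma double_sum_le {d : ℕ} (z : ℕ → (Fin d → ℤ)) (f : (Fin d → ℤ) → ℝ)
    (hf0 : ∀ l, 0 ≤ f l) (hsum : Summable f) (n : ℕ) :
    ∑ j ∈ Finset.range n, ∑ k ∈ Finset.range n, f (z j - z k)
      ≤ (∑' l, f l) * (selfInt d z n : ℝ) := by
  classical
  set I := (Finset.range n).image z with hI
  set N : (Fin d → ℤ) → ℕ := fun a => localTime d z n a with hN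
  have hcomp : ∀ g : (Fin d → ℤ) → ℝ,
      ∑ j ∈ Finset.range n, g (z j) = ∑ a ∈ I, (N a : ℝ) * g a := by
    intro g
    rw [Finset.sum_comp]
    apply Finset.sum_congr rfl
    intro a _
    rw [nsmul_eq_mul]
    rfl
  have step1 : ∑ j ∈ Finset.range n, ∑ k ∈ Finset.range n, f (z j - z k)
      = ∑ a ∈ I, (N a:ℝ) * ∑ b ∈ I, (N b:ℝ) * f (a - b) := by
    rw [hcomp (fun a => ∑ k ∈ Finset.range n, f (a - z k))]
    apply Finset.sum_congr rfl; intro a _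
    congr 1
    exact hcomp (fun b => f (a - b))
  have hrow : ∀ c, ∑ b ∈ I, f (c - b) ≤ ∑' l, f l := by
    intro c
    have h1 : ∑ b ∈ I, f (c - b) = ∑ l ∈ I.image (fun b => c - b), f l :=
      (Finset.sum_image (fun x _ y _ h => sub_right_injective h)).symm
    rw [h1]
    exact Summable.sum_le_tsum _ (fun l _ => hf0 l) hsum
  have hcol : ∀ c, ∑ a ∈ I, f (a - c) ≤ ∑' l, f l := by
    intro c
    have h1 : ∑ a ∈ I, f (a - c) = ∑ l ∈ I.image (fun a => a - c), f l :=
      (Finset.sum_image (fun x _ y _ h => sub_left_injective h)).symm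
    rw [h1]
    exact Summable.sum_le_tsum _ (fun l _ => hf0 l) hsum
  have hsplit : ∑ a ∈ I, (N a:ℝ) * ∑ b ∈ I, (N b:ℝ) * f (a-b)
      ≤ (∑ a ∈ I, ∑ b ∈ I, ((N a:ℝ)^2/2) * f (a-b))
        + ∑ a ∈ I, ∑ b ∈ I, ((N b:ℝ)^2/2) * f (a-b) := by
    rw [← Finset.sum_add_distrib]
    apply Finset.sum_le_sum; intro a _
    rw [Finset.mul_sum, ← Finset.sum_add_distrib]
    apply Finset.sum_le_sum; intro b _
    have h2 : (N a:ℝ)*(N b:ℝ) ≤ (N a:ℝ)^2/2 + (N b:ℝ)^2/2 := by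
      nlinarith [sq_nonneg ((N a:ℝ) - (N b:ℝ))]
    calc (N a:ℝ) * ((N b:ℝ) * f (a-b)) = ((N a:ℝ)*(N b:ℝ)) * f (a-b) := by ring
      _ ≤ ((N a:ℝ)^2/2 + (N b:ℝ)^2/2) * f (a-b) := mul_le_mul_of_nonneg_right h2 (hf0 _)
      _ = ((N a:ℝ)^2/2) * f (a-b) + ((N b:ℝ)^2/2) * f (a-b) := by ring
  have hVcast : ∑ a ∈ I, (N a:ℝ)^2 = (selfInt d z n : ℝ) := by
    rw [selfInt]
    push_cast
    rfl
  have hfirst : ∑ a ∈ I, ∑ b ∈ I, ((N a:ℝ)^2/2) * f (a-b)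
      ≤ (∑' l, f l) / 2 * (selfInt d z n : ℝ) := by
    calc ∑ a ∈ I, ∑ b ∈ I, ((N a:ℝ)^2/2) * f (a-b)
        = ∑ a ∈ I, ((N a:ℝ)^2/2) * ∑ b ∈ I, f (a-b) := by
          apply Finset.sum_congr rfl; intro a _; rw [Finset.mul_sum]
      _ ≤ ∑ a ∈ I, ((N a:ℝ)^2/2) * (∑' l, f l) := by
          apply Finset.sum_le_sum; intro a _
          exact mul_le_mul_of_nonneg_left (hrow a) (by positivity)
      _ = (∑' l, f l) / 2 * (selfInt d z n : ℝ) := by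
          rw [← hVcast, Finset.mul_sum]
          apply Finset.sum_congr rfl; intro a _; ring
  have hsecond : ∑ a ∈ I, ∑ b ∈ I, ((N b:ℝ)^2/2) * f (a-b)
      ≤ (∑' l, f l) / 2 * (selfInt d z n : ℝ) := by
    rw [Finset.sum_comm]
    calc ∑ b ∈ I, ∑ a ∈ I, ((N b:ℝ)^2/2) * f (a-b)
        = ∑ b ∈ I, ((N b:ℝ)^2/2) * ∑ a ∈ I, f (a-b) := by
          apply Finset.sum_congr rfl; intro b _; rw [Finset.mul_sum]
      _ ≤ ∑ b ∈ I, ((N b:ℝ)^2/2) * (∑' l, f l) := by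
          apply Finset.sum_le_sum; intro b _
          exact mul_le_mul_of_nonneg_left (hcol b) (by positivity)
      _ = (∑' l, f l) / 2 * (selfInt d z n : ℝ) := by
          rw [← hVcast, Finset.mul_sum]
          apply Finset.sum_congr rfl; intro b _; ring
  rw [step1]
  calc ∑ a ∈ I, (N a:ℝ) * ∑ b ∈ I, (N b:ℝ) * f (a - b)
      ≤ _ + _ := hsplit
    _ ≤ (∑' l, f l) / 2 * (selfInt d z n : ℝ) + (∑' l, f l) / 2 * (selfInt d z n : ℝ) :=
        add_le_add hfirst hsecond
    _ = (∑' l, f l) * (selfInt d z n : ℝ) := by ring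

/-- Strong law of large numbers along `(z_k)`: if the `U_l` are centered, uniformly bounded,
with summable `sup_r |E[U_{r+l} U_r]|`, and `V_n ≤ C₁ n²/(log n)^β` with `β > 1`,
then `S_n/n → 0` a.s. -/
theorem stmt3 {Ω : Type*} [MeasurableSpace Ω] (P : Measure Ω) [IsProbabilityMeasure P]
    (d : ℕ) (U : (Fin d → ℤ) → Ω → ℝ) (K : ℝ)
    (hmeas : ∀ l, Measurable (U l))
    (hcent : ∀ l, ∫ ω, U l ω ∂P = 0)
    (hbound : ∀ l, ∀ᵐ ω ∂P, |U l ω| ≤ K)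
    (hbdd : ∀ l : Fin d → ℤ,
      BddAbove (Set.range fun r : Fin d → ℤ => |∫ ω, U (r + l) ω * U r ω ∂P|))
    (hsum : Summable fun l : Fin d → ℤ =>
      ⨆ r : Fin d → ℤ, |∫ ω, U (r + l) ω * U r ω ∂P|)
    (z : ℕ → (Fin d → ℤ)) (C₁ β : ℝ) (hβ : 1 < β)
    (hV : ∀ n : ℕ, 2 ≤ n → (selfInt d z n : ℝ) ≤ C₁ * n ^ 2 / (Real.log n) ^ β) :
    ∀ᵐ ω ∂P, Tendsto (fun n : ℕ => (∑ k ∈ Finset.range n, U (z k) ω) / n)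
      atTop (nhds 0) := by

  classical
  have hK0 : 0 ≤ K := by
    have hne : (ae P).NeBot := ae_neBot.2 (IsProbabilityMeasure.ne_zero P)
    obtain ⟨ω, hω⟩ := (hbound (z 0)).exists
    exact le_trans (abs_nonneg _) hω
  set f : (Fin d → ℤ) → ℝ := fun l => ⨆ r, |∫ ω, U (r + l) ω * U r ω ∂P| with hf_def
  have hf0 : ∀ l, 0 ≤ f l := fun l => le_trans (abs_nonneg _) (le_ciSup (hbdd l) 0)
  have hsum' : Summable f := hsum
  set C₀ : ℝ := ∑' l, f l with hC₀_def
  have hC₀0 : 0 ≤ C₀ := tsum_nonneg hf0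
  have hC₁ : 0 < C₁ := by
    have h2 := hV 2 le_rfl
    have hV2 : (1:ℝ) ≤ (selfInt d z 2 : ℝ) := by
      have h1 : 1 ≤ selfInt d z 2 := by
        rw [selfInt]
        have hz0 : z 0 ∈ (Finset.range 2).image z := Finset.mem_image_of_mem z (by simp)
        have hmem : 0 ∈ (Finset.range 2).filter (fun k => z k = z 0) := by simp
        have hc : 1 ≤ localTime d z 2 (z 0) := Finset.card_pos.2 ⟨0, hmem⟩
        have hsq : 1 ≤ localTime d z 2 (z 0) ^ 2 := Nat.one_le_pow _ _ hc
        exact le_trans hsq (Finset.single_le_sum (f := fun l => localTime d z 2 l ^ 2) (fun _ _ => Nat.zero_le _) hz0)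
      exact_mod_cast h1
    have hlogβ : 0 < (Real.log 2) ^ β := Real.rpow_pos_of_pos (Real.log_pos (by norm_num)) β
    by_contra h
    push_neg at h
    have hnp : C₁ * ((2:ℕ):ℝ) ^ 2 / (Real.log ((2:ℕ):ℝ)) ^ β ≤ 0 := by
      push_cast
      apply div_nonpos_of_nonpos_of_nonneg (by nlinarith) hlogβ.le
    linarith
  have hGK : ∀ᵐ ω ∂P, ∀ j : ℕ, |U (z j) ω| ≤ K := ae_all_iff.2 (fun j => hbound (z j))
  have hUUint : ∀ a b : Fin d → ℤ, Integrable (fun ω => U a ω * U b ω) P := by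
    intro a b
    refine ⟨((hmeas a).mul (hmeas b)).aestronglyMeasurable, ?_⟩
    apply HasFiniteIntegral.of_bounded (C := K * K)
    filter_upwards [hbound a, hbound b] with ω h1 h2
    rw [Real.norm_eq_abs, abs_mul]
    exact mul_le_mul h1 h2 (abs_nonneg _) hK0
  have hcov : ∀ a b : Fin d → ℤ, |∫ ω, U a ω * U b ω ∂P| ≤ f (a - b) := by
    intro a b
    have h := le_ciSup (hbdd (a - b)) b
    have e : b + (a - b) = a := by abel
    rw [e] at h
    exact h
  set S : ℕ → Ω → ℝ := fun n ω => ∑ k ∈ Finset.range n, U (z k) ω with hS_def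
  have hSmeas : ∀ n, Measurable (S n) := by
    intro n
    exact Finset.measurable_sum _ (fun k _ => hmeas (z k))
  have hSabs : ∀ n : ℕ, ∀ ω, (∀ j : ℕ, |U (z j) ω| ≤ K) → |S n ω| ≤ n * K := by
    intro n ω hω
    calc |S n ω| ≤ ∑ k ∈ Finset.range n, |U (z k) ω| := Finset.abs_sum_le_sum_abs _ _
      _ ≤ ∑ _k ∈ Finset.range n, K := Finset.sum_le_sum (fun k _ => hω k)
      _ = n * K := by rw [Finset.sum_const, Finset.card_range, nsmul_eq_mul]
  have hS2int : ∀ n, Integrable (fun ω => (S n ω)^2) P := by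
    intro n
    refine ⟨((hSmeas n).pow_const 2).aestronglyMeasurable, ?_⟩
    apply HasFiniteIntegral.of_bounded (C := ((n:ℝ)*K)^2)
    filter_upwards [hGK] with ω hω
    rw [Real.norm_eq_abs, abs_pow]
    exact pow_le_pow_left₀ (abs_nonneg _) (hSabs n ω hω) 2
  have hS2 : ∀ n, ∫ ω, (S n ω)^2 ∂P ≤ C₀ * (selfInt d z n : ℝ) := by
    intro n
    have hexp : ∫ ω, (S n ω)^2 ∂P
        = ∑ j ∈ Finset.range n, ∑ k ∈ Finset.range n, ∫ ω, U (z j) ω * U (z k) ω ∂P := by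
      have h1 : ∀ ω, (S n ω)^2
          = ∑ j ∈ Finset.range n, ∑ k ∈ Finset.range n, U (z j) ω * U (z k) ω := by
        intro ω
        rw [hS_def]
        simp only
        rw [sq, Finset.sum_mul_sum]
      simp_rw [h1]
      rw [integral_finset_sum _ (fun j _ => integrable_finset_sum _ (fun k _ => hUUint _ _))]
      apply Finset.sum_congr rfl; intro j _
      rw [integral_finset_sum _ (fun k _ => hUUint _ _)]
    rw [hexp]
    calc ∑ j ∈ Finset.range n, ∑ k ∈ Finset.range n, ∫ ω, U (z j) ω * U (z k) ω ∂P
        ≤ ∑ j ∈ Finset.range n, ∑ k ∈ Finset.range n, f (z j - z k) := by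
          apply Finset.sum_le_sum; intro j _
          apply Finset.sum_le_sum; intro k _
          exact le_trans (le_abs_self _) (hcov _ _)
      _ ≤ C₀ * (selfInt d z n : ℝ) := double_sum_le z f hf0 hsum' n
  -- Chebyshev bound along the subsequence
  set A : ℕ → ℕ → Set Ω := fun m k => {ω | (nseq k : ℝ)/((m:ℝ)+1) ≤ |S (nseq k) ω|} with hA_def
  have hAk : ∀ (m k : ℕ), P (A m k)
      ≤ ENNReal.ofReal (((m:ℝ)+1)^2 * (C₀ * C₁) * ((Real.log (nseq k)) ^ β)⁻¹) := by
    intro m k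
    have hn2 : 2 ≤ nseq k := nseq_ge_two k
    have hn0 : (0:ℝ) < (nseq k : ℝ) := by
      have : (2:ℝ) ≤ (nseq k : ℝ) := by exact_mod_cast hn2
      linarith
    set t : ℝ := (nseq k : ℝ)/((m:ℝ)+1) with ht_def
    have ht0 : 0 < t := by positivity
    have hsubset : A m k ⊆ {ω | t^2 ≤ (S (nseq k) ω)^2} := by
      intro ω hω
      simp only [hA_def, Set.mem_setOf_eq] at hω ⊢
      calc t^2 ≤ |S (nseq k) ω|^2 := pow_le_pow_left₀ ht0.le hω 2
        _ = (S (nseq k) ω)^2 := sq_abs _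
    have hcheb := mul_meas_ge_le_integral_of_nonneg
      (ae_of_all _ (fun ω => sq_nonneg (S (nseq k) ω))) (hS2int (nseq k)) (t^2)
    have hlogpos : 0 < (Real.log (nseq k)) ^ β := by
      apply Real.rpow_pos_of_pos
      apply Real.log_pos
      have : (2:ℝ) ≤ (nseq k : ℝ) := by exact_mod_cast hn2
      linarith
    have hVbound : ∫ ω, (S (nseq k) ω)^2 ∂P
        ≤ C₀ * C₁ * (nseq k : ℝ)^2 / (Real.log (nseq k)) ^ β := by
      calc ∫ ω, (S (nseq k) ω)^2 ∂P ≤ C₀ * (selfInt d z (nseq k) : ℝ) := hS2 _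
        _ ≤ C₀ * (C₁ * (nseq k : ℝ)^2 / (Real.log (nseq k)) ^ β) :=
            mul_le_mul_of_nonneg_left (hV (nseq k) hn2) hC₀0
        _ = C₀ * C₁ * (nseq k : ℝ)^2 / (Real.log (nseq k)) ^ β := by ring
    have htoReal : (P {ω | t^2 ≤ (S (nseq k) ω)^2}).toReal
        ≤ ((m:ℝ)+1)^2 * (C₀ * C₁) * ((Real.log (nseq k)) ^ β)⁻¹ := by
      have ht2 : 0 < t^2 := by positivity
      have hq := le_trans hcheb hVbound
      rw [← le_div_iff₀' ht2] at hq
      calc (P {ω | t^2 ≤ (S (nseq k) ω)^2}).toReal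
          ≤ C₀ * C₁ * (nseq k : ℝ)^2 / (Real.log (nseq k)) ^ β / t^2 := hq
        _ = ((m:ℝ)+1)^2 * (C₀ * C₁) * ((Real.log (nseq k)) ^ β)⁻¹ := by
            rw [ht_def]
            field_simp
    have hnonneg : 0 ≤ ((m:ℝ)+1)^2 * (C₀ * C₁) * ((Real.log (nseq k)) ^ β)⁻¹ := by
      apply mul_nonneg (mul_nonneg (by positivity) (mul_nonneg hC₀0 hC₁.le)) (by positivity)
    calc P (A m k) ≤ P {ω | t^2 ≤ (S (nseq k) ω)^2} := measure_mono hsubset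
      _ ≤ ENNReal.ofReal (((m:ℝ)+1)^2 * (C₀ * C₁) * ((Real.log (nseq k)) ^ β)⁻¹) := by
          rw [ENNReal.le_ofReal_iff_toReal_le (measure_ne_top P _) hnonneg]
          exact htoReal
  have hBC : ∀ m : ℕ, ∀ᵐ ω ∂P, ∀ᶠ k in atTop, ω ∉ A m k := by
    intro m
    apply ae_eventually_notMem
    have hb : Summable (fun k => ((m:ℝ)+1)^2 * (C₀ * C₁) * ((Real.log (nseq k)) ^ β)⁻¹) :=
      (summable_nseq_log hβ).mul_left _
    have hbne : ∀ k : ℕ, 0 ≤ ((m:ℝ)+1)^2 * (C₀ * C₁) * ((Real.log (nseq k)) ^ β)⁻¹ :=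
      fun k => mul_nonneg (mul_nonneg (by positivity) (mul_nonneg hC₀0 hC₁.le)) (by positivity)
    have hle : ∑' k, P (A m k)
        ≤ ∑' k, ENNReal.ofReal (((m:ℝ)+1)^2 * (C₀ * C₁) * ((Real.log (nseq k)) ^ β)⁻¹) :=
      ENNReal.tsum_le_tsum (fun k => hAk m k)
    have heq : ∑' k, ENNReal.ofReal (((m:ℝ)+1)^2 * (C₀ * C₁) * ((Real.log (nseq k)) ^ β)⁻¹)
        = ENNReal.ofReal (∑' k, ((m:ℝ)+1)^2 * (C₀ * C₁) * ((Real.log (nseq k)) ^ β)⁻¹) :=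
      (ENNReal.ofReal_tsum_of_nonneg hbne hb).symm
    exact ne_top_of_le_ne_top (by rw [heq]; exact ENNReal.ofReal_ne_top) hle
  -- pointwise conclusion
  filter_upwards [hGK, ae_all_iff.2 hBC] with ω hωK hωBC
  have hsubconv : Tendsto (fun k => |S (nseq k) ω| / (nseq k : ℝ)) atTop (nhds 0) := by
    rw [Metric.tendsto_atTop]
    intro ε hε
    obtain ⟨m, hm⟩ := exists_nat_one_div_lt hε
    obtain ⟨k0, hk0⟩ := eventually_atTop.1 (hωBC m)
    refine ⟨k0, fun k hk => ?_⟩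
    have hnot : ¬ ((nseq k : ℝ)/((m:ℝ)+1) ≤ |S (nseq k) ω|) := by
      have := hk0 k hk
      simpa [hA_def, Set.mem_setOf_eq] using this
    push_neg at hnot
    have hn0 : (0:ℝ) < (nseq k : ℝ) := by
      have : 2 ≤ nseq k := nseq_ge_two k
      have : (2:ℝ) ≤ (nseq k : ℝ) := by exact_mod_cast this
      linarith
    rw [Real.dist_eq, sub_zero, abs_of_nonneg (by positivity)]
    calc |S (nseq k) ω| / (nseq k : ℝ) < ((nseq k : ℝ)/((m:ℝ)+1)) / (nseq k : ℝ) := by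
          exact (div_lt_div_iff_of_pos_right hn0).2 hnot
      _ = 1/((m:ℝ)+1) := by field_simp
      _ < ε := hm
  -- index function κ
  set κ : ℕ → ℕ := fun n => Nat.findGreatest (fun j => nseq j ≤ n) n with hκ_def
  have hκ_spec : ∀ n, nseq 0 ≤ n → nseq (κ n) ≤ n := by
    intro n hn
    exact Nat.findGreatest_spec (P := fun j => nseq j ≤ n) (Nat.zero_le n) hn
  have hκ_lt : ∀ n, nseq 0 ≤ n → n < nseq (κ n + 1) := by
    intro n hn
    by_contra h
    push_neg at h
    have h1 : κ n + 1 ≤ n := by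
      have := nseq_gt (κ n + 1)
      omega
    exact Nat.findGreatest_is_greatest (lt_add_one _) h1 h
  have hκ_top : Tendsto κ atTop atTop := by
    rw [tendsto_atTop_atTop]
    intro J
    refine ⟨nseq J, fun n hn => ?_⟩
    have hJn : J ≤ n := le_trans (le_of_lt (nseq_gt J)) hn
    exact Nat.le_findGreatest hJn hn
  have hgap : Tendsto (fun k => K * (((nseq (k+1) : ℝ) - nseq k) / (nseq k : ℝ)))
      atTop (nhds 0) := by
    have := nseq_ratio.const_mul K
    simpa using this
  have hbndk : Tendsto (fun k => |S (nseq k) ω| / (nseq k : ℝ)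
      + K * (((nseq (k+1) : ℝ) - nseq k) / (nseq k : ℝ))) atTop (nhds 0) := by
    simpa using hsubconv.add hgap
  have hcompose := hbndk.comp hκ_top
  refine squeeze_zero_norm' ?_ hcompose
  filter_upwards [eventually_ge_atTop (nseq 0)] with n hn
  simp only [Function.comp]
  have h1 : nseq (κ n) ≤ n := hκ_spec n hn
  have h2 : n < nseq (κ n + 1) := hκ_lt n hn
  have hnk2 : (2:ℝ) ≤ (nseq (κ n) : ℝ) := by exact_mod_cast nseq_ge_two (κ n)
  have hnk0 : (0:ℝ) < (nseq (κ n) : ℝ) := by linarith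
  have hcast1 : ((nseq (κ n)):ℝ) ≤ (n:ℝ) := by exact_mod_cast h1
  have hn0 : (0:ℝ) < (n:ℝ) := lt_of_lt_of_le hnk0 hcast1
  have hcast2 : (n:ℝ) ≤ (nseq (κ n + 1) : ℝ) := by exact_mod_cast (le_of_lt h2)
  have hdiff : |S n ω - S (nseq (κ n)) ω| ≤ K * ((n:ℝ) - nseq (κ n)) := by
    have he : S n ω - S (nseq (κ n)) ω = ∑ j ∈ Finset.Ico (nseq (κ n)) n, U (z j) ω := by
      rw [hS_def]
      simp only
      rw [Finset.sum_Ico_eq_sub _ h1]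
    rw [he]
    calc |∑ j ∈ Finset.Ico (nseq (κ n)) n, U (z j) ω|
        ≤ ∑ j ∈ Finset.Ico (nseq (κ n)) n, |U (z j) ω| := Finset.abs_sum_le_sum_abs _ _
      _ ≤ ∑ _j ∈ Finset.Ico (nseq (κ n)) n, K := Finset.sum_le_sum (fun j _ => hωK j)
      _ = ((n - nseq (κ n) : ℕ) : ℝ) * K := by
          rw [Finset.sum_const, Nat.card_Ico, nsmul_eq_mul]
      _ = K * ((n:ℝ) - nseq (κ n)) := by rw [Nat.cast_sub h1]; ring
  have h3 : |S n ω| ≤ |S (nseq (κ n)) ω| + K * ((nseq (κ n + 1):ℝ) - nseq (κ n)) := by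
    have habs := abs_sub_abs_le_abs_sub (S n ω) (S (nseq (κ n)) ω)
    have hmul : K * ((n:ℝ) - nseq (κ n)) ≤ K * ((nseq (κ n + 1):ℝ) - nseq (κ n)) :=
      mul_le_mul_of_nonneg_left (by linarith) hK0
    linarith
  have hnum : 0 ≤ |S (nseq (κ n)) ω| + K * ((nseq (κ n + 1):ℝ) - nseq (κ n)) :=
    add_nonneg (abs_nonneg _) (mul_nonneg hK0 (by linarith))
  have hgoal : ‖(∑ k ∈ Finset.range n, U (z k) ω)/(n:ℝ)‖ = |S n ω| / (n:ℝ) := by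
    rw [Real.norm_eq_abs, abs_div, abs_of_nonneg (le_of_lt hn0)]
  rw [hgoal]
  calc |S n ω|/(n:ℝ)
      ≤ (|S (nseq (κ n)) ω| + K * ((nseq (κ n + 1):ℝ) - nseq (κ n)))/(n:ℝ) :=
        (div_le_div_iff_of_pos_right hn0).2 h3
    _ ≤ (|S (nseq (κ n)) ω| + K * ((nseq (κ n + 1):ℝ) - nseq (κ n)))/(nseq (κ n):ℝ) :=
        div_le_div_of_nonneg_left hnum hnk0 hcast1
    _ = |S (nseq (κ n)) ω| / (nseq (κ n):ℝ)
        + K * (((nseq (κ n + 1):ℝ) - nseq (κ n)) / (nseq (κ n):ℝ)) := by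
        rw [add_div]; ring
end

section
/- Let X and Y be positively quadrant dependent (PQD) random variables with finite second moments, and let f, g be absolutely continuous functions on R with |f'| ≤ M and |g'| ≤ M almost everywhere, and E[f(X)^2 + g(Y)^2] < ∞. Then |Cov(f(X), g(Y))| ≤ M^2 · Cov(X, Y). -/
open MeasureTheory

namespace Stmt5Aux
open MeasureTheory Set


noncomputable def hind (a s : ℝ) : ℝ := if s < a then 1 else 0

lemma hind_meas : Measurable (fun p : ℝ × ℝ => hind p.1 p.2) := by
  have : (fun p : ℝ × ℝ => hind p.1 p.2) = (Set.Ioi (0:ℝ)).indicator (fun _ => (1:ℝ)) ∘ (fun p => p.1 - p.2) := by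
    ext p
    simp [hind, Set.indicator, sub_pos]
  rw [this]
  exact ((measurable_const.indicator measurableSet_Ioi)).comp (measurable_fst.sub measurable_snd)

lemma hind_meas_s (a : ℝ) : Measurable (hind a) := by
  have : hind a = (Set.Iio a).indicator (fun _ => (1:ℝ)) := by
    ext s; simp [hind, Set.indicator]
  rw [this]; exact measurable_const.indicator measurableSet_Iio

lemma hind_abs_diff_le (a b s : ℝ) : |hind b s - hind a s| ≤ 1 := by
  unfold hind; split_ifs <;> norm_num

lemma hind_diff_zero {a b s : ℝ} (hs : s ∉ Set.Ico (min a b) (max a b)) :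
    hind b s - hind a s = 0 := by
  simp only [Set.mem_Ico, not_and, not_lt] at hs
  rcases lt_or_ge s (min a b) with h | h
  · have h1 : s < a := lt_of_lt_of_le h (min_le_left a b)
    have h2 : s < b := lt_of_lt_of_le h (min_le_right a b)
    simp [hind, h1, h2]
  · have h' : max a b ≤ s := hs h
    have h1 : ¬ s < a := not_lt.mpr (le_trans (le_max_left a b) h')
    have h2 : ¬ s < b := not_lt.mpr (le_trans (le_max_right a b) h')
    simp [hind, h1, h2]

lemma Mnonneg {F : ℝ → ℝ} {Mf : ℝ} (hF : ∀ᵐ t, |F t| ≤ Mf) : 0 ≤ Mf := by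
  by_contra h
  push_neg at h
  have h2 : ∀ᵐ t : ℝ, False := hF.mono (fun t ht => by have := abs_nonneg (F t); linarith)
  have h3 : (volume : Measure ℝ) Set.univ = 0 := by simpa [ae_iff] using h2
  simp [Real.volume_univ] at h3

lemma hind_norm_bound {F : ℝ → ℝ} {Mf : ℝ} (a b : ℝ) :
    ∀ᵐ s, |F s| ≤ Mf →
      ‖F s * (hind b s - hind a s)‖ ≤
        (Set.Ico (min a b) (max a b)).indicator (fun _ => Mf) s := by
  filter_upwards with s hs
  by_cases hmem : s ∈ Set.Ico (min a b) (max a b)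
  · rw [Set.indicator_of_mem hmem]
    have h1 := hind_abs_diff_le a b s
    have h0 := abs_nonneg (F s)
    calc ‖F s * (hind b s - hind a s)‖ = |F s| * |hind b s - hind a s| := abs_mul _ _
    _ ≤ Mf * 1 := mul_le_mul hs h1 (abs_nonneg _) (le_trans h0 hs)
    _ = Mf := mul_one _
  · rw [Set.indicator_of_notMem hmem, hind_diff_zero hmem]
    simp

lemma indicator_const_int (Mf a b : ℝ) :
    Integrable ((Set.Ico (min a b) (max a b)).indicator (fun _ => Mf)) volume := by
  refine (integrableOn_const measure_Ico_lt_top.ne).integrable_indicator measurableSet_Ico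

lemma intOn {F : ℝ → ℝ} {Mf : ℝ} (hFm : Measurable F) (hF : ∀ᵐ t, |F t| ≤ Mf) (a b : ℝ) :
    Integrable (fun s => F s * (hind b s - hind a s)) volume := by
  apply Integrable.mono' (indicator_const_int Mf a b)
  · exact (hFm.mul ((hind_meas_s b).sub (hind_meas_s a))).aestronglyMeasurable
  · exact (hind_norm_bound a b).mp (hF.mono fun s hs h => h hs)

lemma intBound {F : ℝ → ℝ} {Mf : ℝ} (hFm : Measurable F) (hF : ∀ᵐ t, |F t| ≤ Mf) (a b : ℝ) :
    ∫ s, ‖F s * (hind b s - hind a s)‖ ≤ Mf * |b - a| := by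
  have hb : ∀ᵐ s, ‖F s * (hind b s - hind a s)‖ ≤
      (Set.Ico (min a b) (max a b)).indicator (fun _ => Mf) s :=
    (hind_norm_bound a b).mp (hF.mono fun s hs h => h hs)
  calc ∫ s, ‖F s * (hind b s - hind a s)‖
      ≤ ∫ s, (Set.Ico (min a b) (max a b)).indicator (fun _ => Mf) s :=
        integral_mono_ae (intOn hFm hF a b).norm (indicator_const_int Mf a b) hb
    _ = ((volume : Measure ℝ) (Set.Ico (min a b) (max a b))).toReal • Mf :=
        integral_indicator_const _ measurableSet_Ico
    _ = Mf * |b - a| := by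
        rw [Real.volume_Ico, ENNReal.toReal_ofReal (by simp [min_le_max] : (0:ℝ) ≤ max a b - min a b)]
        rw [smul_eq_mul, max_sub_min_eq_abs, abs_sub_comm]
        ring

lemma int_mul {Ω : Type*} [MeasurableSpace Ω] {P : Measure Ω} {u v : Ω → ℝ}
    (hu : MemLp u 2 P) (hv : MemLp v 2 P) : Integrable (fun ω => u ω * v ω) P := by
  apply Integrable.mono' (((hu.integrable_sq.add hv.integrable_sq)).div_const 2)
  · exact hu.aestronglyMeasurable.mul hv.aestronglyMeasurable
  · filter_upwards with ω
    rw [Real.norm_eq_abs, abs_mul]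
    simp only [Pi.add_apply]
    have h1 := sq_nonneg (|u ω| - |v ω|)
    have h2 := sq_abs (u ω)
    have h3 := sq_abs (v ω)
    nlinarith [abs_nonneg (u ω), abs_nonneg (v ω)]


lemma hind_diff_eq (a b : ℝ) (h : a ≤ b) (s : ℝ) :
    hind b s - hind a s = (Set.Ico a b).indicator (fun _ => (1:ℝ)) s := by
  simp only [hind, Set.indicator, Set.mem_Ico]
  by_cases h1 : s < a <;> by_cases h2 : s < b <;>
    simp [h1, h2, not_lt.mp, le_of_lt] <;> first | linarith | (rw [if_neg]; intro hc; linarith)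

lemma L1 (F : ℝ → ℝ) (a b : ℝ) :
    ∫ s, F s * (hind b s - hind a s) = ∫ t in a..b, F t := by
  rcases le_total a b with h | h
  · rw [intervalIntegral.integral_of_le h]
    have : ∀ s, F s * (hind b s - hind a s) = (Set.Ico a b).indicator F s := by
      intro s
      rw [hind_diff_eq a b h]
      by_cases hs : s ∈ Set.Ico a b <;> simp [Set.indicator, hs]
    simp_rw [this]
    rw [integral_indicator measurableSet_Ico, integral_Ico_eq_integral_Ioo,
      ← integral_Ioc_eq_integral_Ioo]
  · rw [intervalIntegral.integral_symm]
    rw [intervalIntegral.integral_of_le h]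
    have : ∀ s, F s * (hind b s - hind a s) = -((Set.Ico b a).indicator F s) := by
      intro s
      have := hind_diff_eq b a h s
      by_cases hs : s ∈ Set.Ico b a <;> simp [Set.indicator, hs] at this ⊢
      · rw [show hind b s - hind a s = -1 by linarith]; ring
      · right; linarith
    simp_rw [this]
    rw [integral_neg, integral_indicator measurableSet_Ico, integral_Ico_eq_integral_Ioo,
      ← integral_Ioc_eq_integral_Ioo]

variable {Ω : Type*} [MeasurableSpace Ω]

noncomputable def Kfun (P : Measure Ω) (X Y : Ω → ℝ) (z : ℝ × ℝ) : ℝ :=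
  ∫ ω : Ω × Ω, (hind (X ω.1) z.1 - hind (X ω.2) z.1) * (hind (Y ω.1) z.2 - hind (Y ω.2) z.2)
    ∂(P.prod P)


lemma PhiMeas (X Y : Ω → ℝ) (hXm : Measurable X) (hYm : Measurable Y)
    (F G : ℝ → ℝ) (hFm : Measurable F) (hGm : Measurable G) :
    Measurable (fun p : (Ω × Ω) × (ℝ × ℝ) =>
      (F p.2.1 * (hind (X p.1.1) p.2.1 - hind (X p.1.2) p.2.1)) *
      (G p.2.2 * (hind (Y p.1.1) p.2.2 - hind (Y p.1.2) p.2.2))) := by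
  have hindXm : Measurable (fun p : (Ω × Ω) × (ℝ × ℝ) => hind (X p.1.1) p.2.1) :=
    hind_meas.comp ((hXm.comp (measurable_fst.comp measurable_fst)).prodMk
      (measurable_fst.comp measurable_snd))
  have hindXm2 : Measurable (fun p : (Ω × Ω) × (ℝ × ℝ) => hind (X p.1.2) p.2.1) :=
    hind_meas.comp ((hXm.comp (measurable_snd.comp measurable_fst)).prodMk
      (measurable_fst.comp measurable_snd))
  have hindYm : Measurable (fun p : (Ω × Ω) × (ℝ × ℝ) => hind (Y p.1.1) p.2.2) :=
    hind_meas.comp ((hYm.comp (measurable_fst.comp measurable_fst)).prodMk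
      (measurable_snd.comp measurable_snd))
  have hindYm2 : Measurable (fun p : (Ω × Ω) × (ℝ × ℝ) => hind (Y p.1.2) p.2.2) :=
    hind_meas.comp ((hYm.comp (measurable_snd.comp measurable_fst)).prodMk
      (measurable_snd.comp measurable_snd))
  apply Measurable.mul
  · exact (hFm.comp (measurable_fst.comp measurable_snd)).mul (hindXm.sub hindXm2)
  · exact (hGm.comp (measurable_snd.comp measurable_snd)).mul (hindYm.sub hindYm2)

lemma PhiInt (P : Measure Ω) [IsProbabilityMeasure P]
    (X Y : Ω → ℝ) (hXm : Measurable X) (hYm : Measurable Y)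
    (hX : MemLp X 2 P) (hY : MemLp Y 2 P)
    (F G : ℝ → ℝ) (Mf Mg : ℝ) (hFm : Measurable F) (hGm : Measurable G)
    (hF : ∀ᵐ t, |F t| ≤ Mf) (hG : ∀ᵐ t, |G t| ≤ Mg) :
    Integrable (fun p : (Ω × Ω) × (ℝ × ℝ) =>
      (F p.2.1 * (hind (X p.1.1) p.2.1 - hind (X p.1.2) p.2.1)) *
      (G p.2.2 * (hind (Y p.1.1) p.2.2 - hind (Y p.1.2) p.2.2)))
      ((P.prod P).prod ((volume : Measure ℝ).prod volume)) := by
  set Q : Measure (Ω × Ω) := P.prod P with hQ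
  set vol2 : Measure (ℝ × ℝ) := (volume : Measure ℝ).prod volume with hvol2
  have hMf0 : 0 ≤ Mf := Mnonneg hF
  have hMg0 : 0 ≤ Mg := Mnonneg hG
  have hmpfst : MeasurePreserving (Prod.fst : Ω × Ω → Ω) Q P :=
    ⟨measurable_fst, Measure.fst_prod⟩
  have hmpsnd : MeasurePreserving (Prod.snd : Ω × Ω → Ω) Q P :=
    ⟨measurable_snd, Measure.snd_prod⟩
  have hU : MemLp (fun ω : Ω × Ω => X ω.1 - X ω.2) 2 Q :=
    (hX.comp_measurePreserving hmpfst).sub (hX.comp_measurePreserving hmpsnd)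
  have hV : MemLp (fun ω : Ω × Ω => Y ω.1 - Y ω.2) 2 Q :=
    (hY.comp_measurePreserving hmpfst).sub (hY.comp_measurePreserving hmpsnd)
  set A : Ω × Ω → ℝ → ℝ := fun ω s => F s * (hind (X ω.1) s - hind (X ω.2) s) with hA
  set B : Ω × Ω → ℝ → ℝ := fun ω t => G t * (hind (Y ω.1) t - hind (Y ω.2) t) with hB
  have hΦm : Measurable (fun p : (Ω × Ω) × (ℝ × ℝ) => A p.1 p.2.1 * B p.1 p.2.2) :=
    PhiMeas X Y hXm hYm F G hFm hGm
  rw [integrable_prod_iff hΦm.aestronglyMeasurable]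
  constructor
  · filter_upwards with ω
    exact (intOn hFm hF (X ω.2) (X ω.1)).mul_prod (intOn hGm hG (Y ω.2) (Y ω.1))
  · apply Integrable.mono'
      (g := fun ω : Ω × Ω => (Mf * Mg) * |(X ω.1 - X ω.2) * (Y ω.1 - Y ω.2)|)
    · exact ((int_mul hU hV).abs.const_mul (Mf * Mg))
    · exact hΦm.aestronglyMeasurable.norm.integral_prod_right'
    · filter_upwards with ω
      have hnn : 0 ≤ ∫ z : ℝ × ℝ, ‖A ω z.1 * B ω z.2‖ ∂vol2 :=
        integral_nonneg fun z => norm_nonneg _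
      rw [Real.norm_eq_abs, abs_of_nonneg hnn]
      have heq : ∫ z : ℝ × ℝ, ‖A ω z.1 * B ω z.2‖ ∂vol2 = (∫ s, ‖A ω s‖) * (∫ t, ‖B ω t‖) := by
        rw [← integral_prod_mul (fun s => ‖A ω s‖) (fun t => ‖B ω t‖)]
        congr 1
        funext z
        exact norm_mul _ _
      rw [heq]
      have h1 := intBound hFm hF (X ω.2) (X ω.1)
      have h2 := intBound hGm hG (Y ω.2) (Y ω.1)
      calc (∫ s, ‖A ω s‖) * (∫ t, ‖B ω t‖)
          ≤ (Mf * |X ω.1 - X ω.2|) * (Mg * |Y ω.1 - Y ω.2|) := by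
            apply mul_le_mul h1 h2 (integral_nonneg fun t => norm_nonneg _)
            exact mul_nonneg hMf0 (abs_nonneg _)
        _ = (Mf * Mg) * |(X ω.1 - X ω.2) * (Y ω.1 - Y ω.2)| := by rw [abs_mul]; ring

lemma prod_expand (P : Measure Ω) [IsProbabilityMeasure P] (u v : Ω → ℝ)
    (hu : Integrable u P) (hv : Integrable v P) (huv : Integrable (fun ω => u ω * v ω) P) :
    ∫ ω : Ω × Ω, (u ω.1 - u ω.2) * (v ω.1 - v ω.2) ∂(P.prod P)
      = 2 * ((∫ ω, u ω * v ω ∂P) - (∫ ω, u ω ∂P) * (∫ ω, v ω ∂P)) := by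
  set Q : Measure (Ω × Ω) := P.prod P with hQ
  have e1 : ∫ ω : Ω × Ω, (u ω.1 * v ω.1) * 1 ∂Q = (∫ ω, u ω * v ω ∂P) * 1 := by
    simpa using integral_prod_mul (μ := P) (ν := P) (fun a => u a * v a) (fun _ => (1:ℝ))
  have e2 : ∫ ω : Ω × Ω, u ω.1 * v ω.2 ∂Q = (∫ ω, u ω ∂P) * (∫ ω, v ω ∂P) :=
    integral_prod_mul (μ := P) (ν := P) u v
  have e3 : ∫ ω : Ω × Ω, v ω.1 * u ω.2 ∂Q = (∫ ω, v ω ∂P) * (∫ ω, u ω ∂P) :=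
    integral_prod_mul (μ := P) (ν := P) v u
  have e4 : ∫ ω : Ω × Ω, (1:ℝ) * (u ω.2 * v ω.2) ∂Q = 1 * (∫ ω, u ω * v ω ∂P) := by
    simpa using integral_prod_mul (μ := P) (ν := P) (fun _ => (1:ℝ)) (fun a => u a * v a)
  have I1 : Integrable (fun ω : Ω × Ω => (u ω.1 * v ω.1) * 1) Q :=
    huv.mul_prod (integrable_const (1:ℝ))
  have I2 : Integrable (fun ω : Ω × Ω => u ω.1 * v ω.2) Q := hu.mul_prod hv
  have I3 : Integrable (fun ω : Ω × Ω => v ω.1 * u ω.2) Q := hv.mul_prod hu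
  have I4 : Integrable (fun ω : Ω × Ω => (1:ℝ) * (u ω.2 * v ω.2)) Q :=
    (integrable_const (1:ℝ)).mul_prod huv
  calc ∫ ω : Ω × Ω, (u ω.1 - u ω.2) * (v ω.1 - v ω.2) ∂Q
      = ∫ ω : Ω × Ω, ((u ω.1 * v ω.1) * 1 - u ω.1 * v ω.2
          - v ω.1 * u ω.2 + (1:ℝ) * (u ω.2 * v ω.2)) ∂Q := by
        refine integral_congr_ae (Filter.Eventually.of_forall fun ω => ?_)
        show (u ω.1 - u ω.2) * (v ω.1 - v ω.2) = _
        ring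
    _ = (∫ ω : Ω × Ω, (u ω.1 * v ω.1) * 1 ∂Q) - (∫ ω : Ω × Ω, u ω.1 * v ω.2 ∂Q)
          - (∫ ω : Ω × Ω, v ω.1 * u ω.2 ∂Q) + (∫ ω : Ω × Ω, (1:ℝ) * (u ω.2 * v ω.2) ∂Q) := by
        have I12 : Integrable (fun ω : Ω × Ω => (u ω.1 * v ω.1) * 1 - u ω.1 * v ω.2) Q :=
          I1.sub I2
        have I123 : Integrable (fun ω : Ω × Ω =>
            (u ω.1 * v ω.1) * 1 - u ω.1 * v ω.2 - v ω.1 * u ω.2) Q := I12.sub I3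
        rw [integral_add I123 I4, integral_sub I12 I3, integral_sub I1 I2]
    _ = 2 * ((∫ ω, u ω * v ω ∂P) - (∫ ω, u ω ∂P) * (∫ ω, v ω ∂P)) := by
        rw [e1, e2, e3, e4]; ring

lemma core (P : Measure Ω) [IsProbabilityMeasure P]
    (X Y : Ω → ℝ) (hXm : Measurable X) (hYm : Measurable Y)
    (hX : MemLp X 2 P) (hY : MemLp Y 2 P)
    (f g F G : ℝ → ℝ) (Mf Mg : ℝ)
    (hFm : Measurable F) (hGm : Measurable G)
    (hF : ∀ᵐ t, |F t| ≤ Mf) (hG : ∀ᵐ t, |G t| ≤ Mg)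
    (hfac : ∀ a b : ℝ, f b - f a = ∫ t in a..b, F t)
    (hgac : ∀ a b : ℝ, g b - g a = ∫ t in a..b, G t)
    (hfX : MemLp (fun ω => f (X ω)) 2 P) (hgY : MemLp (fun ω => g (Y ω)) 2 P) :
    (∫ ω, f (X ω) * g (Y ω) ∂P) - (∫ ω, f (X ω) ∂P) * (∫ ω, g (Y ω) ∂P) =
      (1/2) * ∫ z : ℝ × ℝ, F z.1 * G z.2 * Kfun P X Y z ∂((volume : Measure ℝ).prod volume) := by
  set Q : Measure (Ω × Ω) := P.prod P with hQ
  set vol2 : Measure (ℝ × ℝ) := (volume : Measure ℝ).prod volume with hvol2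
  have hMf0 : 0 ≤ Mf := Mnonneg hF
  have hMg0 : 0 ≤ Mg := Mnonneg hG
  -- measure preserving projections
  have hmpfst : MeasurePreserving (Prod.fst : Ω × Ω → Ω) Q P :=
    ⟨measurable_fst, Measure.fst_prod⟩
  have hmpsnd : MeasurePreserving (Prod.snd : Ω × Ω → Ω) Q P :=
    ⟨measurable_snd, Measure.snd_prod⟩
  have hU : MemLp (fun ω : Ω × Ω => X ω.1 - X ω.2) 2 Q :=
    (hX.comp_measurePreserving hmpfst).sub (hX.comp_measurePreserving hmpsnd)
  have hV : MemLp (fun ω : Ω × Ω => Y ω.1 - Y ω.2) 2 Q :=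
    (hY.comp_measurePreserving hmpfst).sub (hY.comp_measurePreserving hmpsnd)
  -- the big integrand
  set A : Ω × Ω → ℝ → ℝ := fun ω s => F s * (hind (X ω.1) s - hind (X ω.2) s) with hA
  set B : Ω × Ω → ℝ → ℝ := fun ω t => G t * (hind (Y ω.1) t - hind (Y ω.2) t) with hB
  set Φ : (Ω × Ω) × (ℝ × ℝ) → ℝ := fun p => A p.1 p.2.1 * B p.1 p.2.2 with hΦ
  have hindXm : Measurable (fun p : (Ω × Ω) × (ℝ × ℝ) => hind (X p.1.1) p.2.1) :=
    hind_meas.comp ((hXm.comp (measurable_fst.comp measurable_fst)).prodMk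
      (measurable_fst.comp measurable_snd))
  have hindXm2 : Measurable (fun p : (Ω × Ω) × (ℝ × ℝ) => hind (X p.1.2) p.2.1) :=
    hind_meas.comp ((hXm.comp (measurable_snd.comp measurable_fst)).prodMk
      (measurable_fst.comp measurable_snd))
  have hindYm : Measurable (fun p : (Ω × Ω) × (ℝ × ℝ) => hind (Y p.1.1) p.2.2) :=
    hind_meas.comp ((hYm.comp (measurable_fst.comp measurable_fst)).prodMk
      (measurable_snd.comp measurable_snd))
  have hindYm2 : Measurable (fun p : (Ω × Ω) × (ℝ × ℝ) => hind (Y p.1.2) p.2.2) :=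
    hind_meas.comp ((hYm.comp (measurable_snd.comp measurable_fst)).prodMk
      (measurable_snd.comp measurable_snd))
  have hΦm : Measurable Φ := by
    apply Measurable.mul
    · exact (hFm.comp (measurable_fst.comp measurable_snd)).mul (hindXm.sub hindXm2)
    · exact (hGm.comp (measurable_snd.comp measurable_snd)).mul (hindYm.sub hindYm2)
  have hΦint : Integrable Φ (Q.prod vol2) := by
    rw [integrable_prod_iff hΦm.aestronglyMeasurable]
    constructor
    · filter_upwards with ω
      exact (intOn hFm hF (X ω.2) (X ω.1)).mul_prod (intOn hGm hG (Y ω.2) (Y ω.1))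
    · apply Integrable.mono'
        (g := fun ω : Ω × Ω => (Mf * Mg) * |(X ω.1 - X ω.2) * (Y ω.1 - Y ω.2)|)
      · exact ((int_mul hU hV).abs.const_mul (Mf * Mg))
      · exact hΦm.aestronglyMeasurable.norm.integral_prod_right'
      · filter_upwards with ω
        have hnn : 0 ≤ ∫ z, ‖Φ (ω, z)‖ ∂vol2 := integral_nonneg fun z => norm_nonneg _
        rw [Real.norm_eq_abs, abs_of_nonneg hnn]
        have heq : ∫ z, ‖Φ (ω, z)‖ ∂vol2 = (∫ s, ‖A ω s‖) * (∫ t, ‖B ω t‖) := by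
          rw [← integral_prod_mul (fun s => ‖A ω s‖) (fun t => ‖B ω t‖)]
          congr 1
          funext z
          exact norm_mul _ _
        rw [heq]
        have h1 := intBound hFm hF (X ω.2) (X ω.1)
        have h2 := intBound hGm hG (Y ω.2) (Y ω.1)
        calc (∫ s, ‖A ω s‖) * (∫ t, ‖B ω t‖)
            ≤ (Mf * |X ω.1 - X ω.2|) * (Mg * |Y ω.1 - Y ω.2|) := by
              apply mul_le_mul h1 h2 (integral_nonneg fun t => norm_nonneg _)
              exact mul_nonneg hMf0 (abs_nonneg _)
          _ = (Mf * Mg) * |(X ω.1 - X ω.2) * (Y ω.1 - Y ω.2)| := by rw [abs_mul]; ring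
  have hswap : ∫ ω, ∫ z, Φ (ω, z) ∂vol2 ∂Q = ∫ z, ∫ ω, Φ (ω, z) ∂Q ∂vol2 :=
    integral_integral_swap hΦint
  -- inner integral over z
  have hDeq : ∀ ω : Ω × Ω, ∫ z, Φ (ω, z) ∂vol2
      = (f (X ω.1) - f (X ω.2)) * (g (Y ω.1) - g (Y ω.2)) := by
    intro ω
    have h1 : ∫ z, Φ (ω, z) ∂vol2 = (∫ s, A ω s) * (∫ t, B ω t) :=
      integral_prod_mul (A ω) (B ω)
    rw [h1, hA, hB]
    simp only []
    rw [L1 F (X ω.2) (X ω.1), L1 G (Y ω.2) (Y ω.1), ← hfac, ← hgac]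
  -- integrability of pieces
  have hfXi : Integrable (fun ω => f (X ω)) P := hfX.integrable one_le_two
  have hgYi : Integrable (fun ω => g (Y ω)) P := hgY.integrable one_le_two
  have hfgi : Integrable (fun ω => f (X ω) * g (Y ω)) P := int_mul hfX hgY
  have e1 : ∫ ω : Ω × Ω, (f (X ω.1) * g (Y ω.1)) * 1 ∂Q
      = (∫ ω, f (X ω) * g (Y ω) ∂P) * 1 := by
    simpa using integral_prod_mul (μ := P) (ν := P)
      (fun a => f (X a) * g (Y a)) (fun _ => (1:ℝ))
  have e2 : ∫ ω : Ω × Ω, f (X ω.1) * g (Y ω.2) ∂Q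
      = (∫ ω, f (X ω) ∂P) * (∫ ω, g (Y ω) ∂P) :=
    integral_prod_mul (μ := P) (ν := P) (fun a => f (X a)) (fun a => g (Y a))
  have e3 : ∫ ω : Ω × Ω, g (Y ω.1) * f (X ω.2) ∂Q
      = (∫ ω, g (Y ω) ∂P) * (∫ ω, f (X ω) ∂P) :=
    integral_prod_mul (μ := P) (ν := P) (fun a => g (Y a)) (fun a => f (X a))
  have e4 : ∫ ω : Ω × Ω, (1:ℝ) * (f (X ω.2) * g (Y ω.2)) ∂Q
      = 1 * (∫ ω, f (X ω) * g (Y ω) ∂P) := by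
    simpa using integral_prod_mul (μ := P) (ν := P)
      (fun _ => (1:ℝ)) (fun a => f (X a) * g (Y a))
  have I1 : Integrable (fun ω : Ω × Ω => (f (X ω.1) * g (Y ω.1)) * 1) Q :=
    hfgi.mul_prod (integrable_const (1:ℝ))
  have I2 : Integrable (fun ω : Ω × Ω => f (X ω.1) * g (Y ω.2)) Q :=
    hfXi.mul_prod hgYi
  have I3 : Integrable (fun ω : Ω × Ω => g (Y ω.1) * f (X ω.2)) Q :=
    hgYi.mul_prod hfXi
  have I4 : Integrable (fun ω : Ω × Ω => (1:ℝ) * (f (X ω.2) * g (Y ω.2))) Q :=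
    (integrable_const (1:ℝ)).mul_prod hfgi
  have hL : ∫ ω, ∫ z, Φ (ω, z) ∂vol2 ∂Q
      = 2 * ((∫ ω, f (X ω) * g (Y ω) ∂P) - (∫ ω, f (X ω) ∂P) * (∫ ω, g (Y ω) ∂P)) := by
    calc ∫ ω, ∫ z, Φ (ω, z) ∂vol2 ∂Q
        = ∫ ω : Ω × Ω, ((f (X ω.1) * g (Y ω.1)) * 1 - f (X ω.1) * g (Y ω.2)
            - g (Y ω.1) * f (X ω.2) + (1:ℝ) * (f (X ω.2) * g (Y ω.2))) ∂Q := by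
          refine integral_congr_ae (Filter.Eventually.of_forall fun ω => ?_)
          show ∫ z, Φ (ω, z) ∂vol2 = _
          rw [hDeq ω]; ring
      _ = (∫ ω : Ω × Ω, (f (X ω.1) * g (Y ω.1)) * 1 ∂Q)
            - (∫ ω : Ω × Ω, f (X ω.1) * g (Y ω.2) ∂Q)
            - (∫ ω : Ω × Ω, g (Y ω.1) * f (X ω.2) ∂Q)
            + (∫ ω : Ω × Ω, (1:ℝ) * (f (X ω.2) * g (Y ω.2)) ∂Q) := by
          have I12 : Integrable (fun ω : Ω × Ω =>
              (f (X ω.1) * g (Y ω.1)) * 1 - f (X ω.1) * g (Y ω.2)) Q := I1.sub I2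
          have I123 : Integrable (fun ω : Ω × Ω =>
              (f (X ω.1) * g (Y ω.1)) * 1 - f (X ω.1) * g (Y ω.2)
                - g (Y ω.1) * f (X ω.2)) Q := I12.sub I3
          rw [integral_add I123 I4, integral_sub I12 I3, integral_sub I1 I2]
      _ = 2 * ((∫ ω, f (X ω) * g (Y ω) ∂P) - (∫ ω, f (X ω) ∂P) * (∫ ω, g (Y ω) ∂P)) := by
          rw [e1, e2, e3, e4]; ring
  -- inner integral over ω
  have hR : ∀ z : ℝ × ℝ, ∫ ω, Φ (ω, z) ∂Q = F z.1 * G z.2 * Kfun P X Y z := by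
    intro z
    calc ∫ ω, Φ (ω, z) ∂Q
        = ∫ ω : Ω × Ω, (F z.1 * G z.2) * ((hind (X ω.1) z.1 - hind (X ω.2) z.1)
            * (hind (Y ω.1) z.2 - hind (Y ω.2) z.2)) ∂Q := by
          refine integral_congr_ae (Filter.Eventually.of_forall fun ω => ?_)
          show Φ (ω, z) = _
          simp only [hΦ, hA, hB]; ring
      _ = (F z.1 * G z.2) * Kfun P X Y z := integral_const_mul _ _
      _ = F z.1 * G z.2 * Kfun P X Y z := by ring
  have hfin : ∫ z, F z.1 * G z.2 * Kfun P X Y z ∂vol2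
      = 2 * ((∫ ω, f (X ω) * g (Y ω) ∂P) - (∫ ω, f (X ω) ∂P) * (∫ ω, g (Y ω) ∂P)) := by
    rw [← hL, hswap]
    exact integral_congr_ae (Filter.Eventually.of_forall fun z => (hR z).symm)
  rw [hfin]
  ring


lemma hindX_eq (X : Ω → ℝ) (c : ℝ) :
    (fun ω' => hind (X ω') c) = Set.indicator {ω' | c < X ω'} (fun _ => (1:ℝ)) := by
  funext ω'
  simp [hind, Set.indicator, Set.mem_setOf_eq]

lemma hindX_int (P : Measure Ω) [IsProbabilityMeasure P] (X : Ω → ℝ) (hXm : Measurable X)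
    (c : ℝ) : Integrable (fun ω' => hind (X ω') c) P := by
  rw [hindX_eq]
  exact (integrableOn_const (measure_lt_top P _).ne).integrable_indicator
    (hXm measurableSet_Ioi)

lemma hindX_integral (P : Measure Ω) [IsProbabilityMeasure P] (X : Ω → ℝ) (hXm : Measurable X)
    (c : ℝ) : ∫ ω', hind (X ω') c ∂P = (P {ω' | c < X ω'}).toReal := by
  rw [show (∫ ω', hind (X ω') c ∂P) = ∫ ω', Set.indicator {ω' | c < X ω'} (fun _ => (1:ℝ)) ω' ∂P
    from congrArg _ (hindX_eq X c)]
  exact integral_indicator_one (show MeasurableSet {ω' | c < X ω'} from hXm measurableSet_Ioi)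

lemma Keval (P : Measure Ω) [IsProbabilityMeasure P] (X Y : Ω → ℝ)
    (hXm : Measurable X) (hYm : Measurable Y) (z : ℝ × ℝ) :
    Kfun P X Y z = 2 * ((P {ω | z.1 < X ω ∧ z.2 < Y ω}).toReal
      - (P {ω | z.1 < X ω}).toReal * (P {ω | z.2 < Y ω}).toReal) := by
  have huv_eq : (fun ω' => hind (X ω') z.1 * hind (Y ω') z.2)
      = Set.indicator {ω' | z.1 < X ω' ∧ z.2 < Y ω'} (fun _ => (1:ℝ)) := by
    funext ω'
    by_cases h1 : z.1 < X ω' <;> by_cases h2 : z.2 < Y ω' <;>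
      simp [hind, h1, h2, Set.indicator, Set.mem_setOf_eq]
  have hms : MeasurableSet {ω' | z.1 < X ω' ∧ z.2 < Y ω'} :=
    (hXm measurableSet_Ioi).inter (hYm measurableSet_Ioi)
  have huv_int : Integrable (fun ω' => hind (X ω') z.1 * hind (Y ω') z.2) P := by
    rw [huv_eq]
    exact (integrableOn_const (measure_lt_top P _).ne).integrable_indicator hms
  have huv : ∫ ω', hind (X ω') z.1 * hind (Y ω') z.2 ∂P
      = (P {ω' | z.1 < X ω' ∧ z.2 < Y ω'}).toReal := by
    rw [show (∫ ω', hind (X ω') z.1 * hind (Y ω') z.2 ∂P)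
        = ∫ ω', Set.indicator {ω' | z.1 < X ω' ∧ z.2 < Y ω'} (fun _ => (1:ℝ)) ω' ∂P
      from congrArg _ huv_eq]
    exact integral_indicator_one hms
  have h := prod_expand P (fun ω' => hind (X ω') z.1) (fun ω' => hind (Y ω') z.2)
    (hindX_int P X hXm z.1) (hindX_int P Y hYm z.2) huv_int
  rw [Kfun, h, huv, hindX_integral P X hXm z.1, hindX_integral P Y hYm z.2]

lemma Knonneg (P : Measure Ω) [IsProbabilityMeasure P] (X Y : Ω → ℝ)
    (hXm : Measurable X) (hYm : Measurable Y)
    (hPQD : ∀ x y : ℝ, P {ω | x < X ω} * P {ω | y < Y ω} ≤ P {ω | x < X ω ∧ y < Y ω})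
    (z : ℝ × ℝ) : 0 ≤ Kfun P X Y z := by
  rw [Keval P X Y hXm hYm z]
  have h := hPQD z.1 z.2
  have hJ : (P {ω | z.1 < X ω} * P {ω | z.2 < Y ω}).toReal
      ≤ (P {ω | z.1 < X ω ∧ z.2 < Y ω}).toReal :=
    ENNReal.toReal_mono (measure_ne_top P _) h
  rw [ENNReal.toReal_mul] at hJ
  linarith

lemma Kint (P : Measure Ω) [IsProbabilityMeasure P]
    (X Y : Ω → ℝ) (hXm : Measurable X) (hYm : Measurable Y)
    (hX : MemLp X 2 P) (hY : MemLp Y 2 P)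
    (F G : ℝ → ℝ) (Mf Mg : ℝ) (hFm : Measurable F) (hGm : Measurable G)
    (hF : ∀ᵐ t, |F t| ≤ Mf) (hG : ∀ᵐ t, |G t| ≤ Mg) :
    Integrable (fun z : ℝ × ℝ => F z.1 * G z.2 * Kfun P X Y z)
      ((volume : Measure ℝ).prod volume) := by
  have h := (PhiInt P X Y hXm hYm hX hY F G Mf Mg hFm hGm hF hG).swap
  have h2 := h.integral_prod_left
  apply h2.congr
  filter_upwards with z
  show ∫ ω : Ω × Ω, (F z.1 * (hind (X ω.1) z.1 - hind (X ω.2) z.1)) *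
      (G z.2 * (hind (Y ω.1) z.2 - hind (Y ω.2) z.2)) ∂(P.prod P)
    = F z.1 * G z.2 * Kfun P X Y z
  calc ∫ ω : Ω × Ω, (F z.1 * (hind (X ω.1) z.1 - hind (X ω.2) z.1)) *
      (G z.2 * (hind (Y ω.1) z.2 - hind (Y ω.2) z.2)) ∂(P.prod P)
      = ∫ ω : Ω × Ω, (F z.1 * G z.2) * ((hind (X ω.1) z.1 - hind (X ω.2) z.1)
          * (hind (Y ω.1) z.2 - hind (Y ω.2) z.2)) ∂(P.prod P) := by
        refine integral_congr_ae (Filter.Eventually.of_forall fun ω => ?_)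
        show (F z.1 * (hind (X ω.1) z.1 - hind (X ω.2) z.1)) *
          (G z.2 * (hind (Y ω.1) z.2 - hind (Y ω.2) z.2)) = _
        ring
    _ = (F z.1 * G z.2) * Kfun P X Y z := integral_const_mul _ _
    _ = F z.1 * G z.2 * Kfun P X Y z := by ring

lemma ae_prod2 {p q : ℝ → Prop} (hp : ∀ᵐ s, p s) (hq : ∀ᵐ t, q t) :
    ∀ᵐ z : ℝ × ℝ ∂((volume : Measure ℝ).prod volume), p z.1 ∧ q z.2 := by
  rw [ae_iff] at hp hq ⊢
  obtain ⟨sp, hsub_p, hmp, h0p⟩ := exists_measurable_superset_of_null hp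
  obtain ⟨sq, hsub_q, hmq, h0q⟩ := exists_measurable_superset_of_null hq
  have hz0 : ((volume : Measure ℝ).prod volume) ((sp ×ˢ Set.univ) ∪ (Set.univ ×ˢ sq)) = 0 := by
    apply measure_union_null
    · rw [Measure.prod_prod, h0p, zero_mul]
    · rw [Measure.prod_prod, h0q, mul_zero]
  refine measure_mono_null ?_ hz0
  intro z hz
  simp only [Set.mem_setOf_eq, not_and_or] at hz
  rcases hz with h | h
  · exact Or.inl ⟨hsub_p h, Set.mem_univ _⟩
  · exact Or.inr ⟨Set.mem_univ _, hsub_q h⟩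


lemma dicho (f F : ℝ → ℝ) (M : ℝ) (hfac : ∀ a b : ℝ, f b - f a = ∫ t in a..b, F t)
    (hF : ∀ᵐ t, |F t| ≤ M) :
    (∃ F₁ : ℝ → ℝ, Measurable F₁ ∧ (∀ᵐ t, |F₁ t| ≤ M) ∧
      ∀ a b : ℝ, f b - f a = ∫ t in a..b, F₁ t) ∨ (∀ a b : ℝ, f a = f b) := by
  have hM0 : 0 ≤ M := Mnonneg hF
  have hlip : ∀ a b : ℝ, |f b - f a| ≤ M * |b - a| := by
    intro a b
    rw [hfac a b, ← Real.norm_eq_abs]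
    exact intervalIntegral.norm_integral_le_of_norm_le_const_ae
      (hF.mono fun t ht _ => le_trans (le_of_eq (Real.norm_eq_abs _)) ht)
  have hcont : Continuous f := by
    have : LipschitzWith ⟨M, hM0⟩ f := LipschitzWith.of_dist_le_mul (fun x y => by
      rw [Real.dist_eq, Real.dist_eq]
      exact (by simpa [abs_sub_comm] using hlip y x : |f x - f y| ≤ M * |x - y|))
    exact this.continuous
  by_cases hcover : ∀ x : ℝ, ∃ p q : ℚ, (p:ℝ) < x ∧ x < (q:ℝ) ∧
      AEStronglyMeasurable F (volume.restrict (Set.Ioo (p:ℝ) (q:ℝ)))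
  · left
    classical
    set s : ℚ × ℚ → Set ℝ := fun r =>
      if AEStronglyMeasurable F (volume.restrict (Set.Ioo (r.1:ℝ) (r.2:ℝ)))
      then Set.Ioo (r.1:ℝ) (r.2:ℝ) else ∅ with hs
    have hsm : ∀ r, AEStronglyMeasurable F (volume.restrict (s r)) := by
      intro r
      by_cases h : AEStronglyMeasurable F (volume.restrict (Set.Ioo (r.1:ℝ) (r.2:ℝ)))
      · simpa [hs, h] using h
      · simp only [hs, h, if_false]
        rw [Measure.restrict_empty]
        exact aestronglyMeasurable_zero_measure F
    have hcover2 : (⋃ r : ℚ × ℚ, s r) = Set.univ := by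
      ext x
      simp only [Set.mem_iUnion, Set.mem_univ, iff_true]
      obtain ⟨p, q, h1, h2, h3⟩ := hcover x
      exact ⟨(p, q), by simp [hs, h3, Set.mem_Ioo, h1, h2]⟩
    have hglob : AEStronglyMeasurable F volume := by
      have h := aestronglyMeasurable_iUnion_iff.mpr hsm
      rwa [hcover2, Measure.restrict_univ] at h
    refine ⟨hglob.mk F, hglob.stronglyMeasurable_mk.measurable, ?_, ?_⟩
    · filter_upwards [hF, hglob.ae_eq_mk] with t h1 h2
      rw [← h2]; exact h1
    · intro a b
      rw [hfac a b]
      exact intervalIntegral.integral_congr_ae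
        ((hglob.ae_eq_mk).mono fun t ht _ => ht)
  · right
    push_neg at hcover
    obtain ⟨x, hx⟩ := hcover
    have key : ∀ a b : ℝ, a < x → x < b → f a = f b := by
      intro a b ha hb
      have hni : ¬ IntervalIntegrable F volume a b := by
        intro hi
        obtain ⟨p, hp1, hp2⟩ := exists_rat_btwn ha
        obtain ⟨q, hq1, hq2⟩ := exists_rat_btwn hb
        have hsub : Set.Ioo (p:ℝ) (q:ℝ) ⊆ Set.Ioc a b := fun y hy =>
          ⟨lt_trans hp1 hy.1, le_of_lt (lt_trans hy.2 hq2)⟩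
        have haesm : AEStronglyMeasurable F (volume.restrict (Set.Ioo (p:ℝ) (q:ℝ))) :=
          hi.1.aestronglyMeasurable.mono_measure (Measure.restrict_mono hsub le_rfl)
        exact hx p q hp2 hq1 haesm
      have h := hfac a b
      rw [intervalIntegral.integral_undef hni] at h
      linarith
    have hc : ∀ y : ℝ, f y = f (x + 1) := by
      have heq : Set.EqOn f (fun _ => f (x + 1)) {x}ᶜ := by
        intro y hy
        rcases lt_or_gt_of_ne (show y ≠ x from hy) with h | h
        · exact key y (x + 1) h (by linarith)
        · have h1 : f (x - 1) = f y := key (x - 1) y (by linarith) h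
          have h2 : f (x - 1) = f (x + 1) := key (x - 1) (x + 1) (by linarith) (by linarith)
          simp only []
          rw [← h1, h2]
      have hfeq : f = fun _ => f (x + 1) :=
        Continuous.ext_on (dense_compl_singleton x) hcont continuous_const heq
      intro y
      exact congrFun hfeq y
    intro a b
    rw [hc a, hc b]

end Stmt5Aux

open Stmt5Aux in
/-- Hoeffding-type covariance inequality for PQD random variables: if `X, Y` are PQD with
finite second moments and `f, g` are absolutely continuous with `|f'|, |g'| ≤ M` a.e. and
`E[f(X)² + g(Y)²] < ∞`, then `|Cov(f(X), g(Y))| ≤ M² Cov(X, Y)`. -/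
theorem stmt5 {Ω : Type*} [MeasurableSpace Ω] (P : Measure Ω) [IsProbabilityMeasure P]
    (X Y : Ω → ℝ) (hXm : Measurable X) (hYm : Measurable Y)
    (hX : MemLp X 2 P) (hY : MemLp Y 2 P)
    (hPQD : ∀ x y : ℝ,
      P {ω | x < X ω} * P {ω | y < Y ω} ≤ P {ω | x < X ω ∧ y < Y ω})
    (f g f' g' : ℝ → ℝ) (M : ℝ)
    (hfac : ∀ a b : ℝ, f b - f a = ∫ t in a..b, f' t)
    (hgac : ∀ a b : ℝ, g b - g a = ∫ t in a..b, g' t)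
    (hf' : ∀ᵐ t, |f' t| ≤ M) (hg' : ∀ᵐ t, |g' t| ≤ M)
    (hfX : MemLp (fun ω => f (X ω)) 2 P) (hgY : MemLp (fun ω => g (Y ω)) 2 P) :
    |(∫ ω, f (X ω) * g (Y ω) ∂P) - (∫ ω, f (X ω) ∂P) * (∫ ω, g (Y ω) ∂P)| ≤
      M ^ 2 * ((∫ ω, X ω * Y ω ∂P) - (∫ ω, X ω ∂P) * (∫ ω, Y ω ∂P)) := by
  have hone : ∀ᵐ t : ℝ, |(1:ℝ)| ≤ (1:ℝ) := Filter.Eventually.of_forall fun t => by norm_num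
  have hid : ∀ a b : ℝ, (fun x : ℝ => x) b - (fun x : ℝ => x) a = ∫ t in a..b, (1:ℝ) := by
    intro a b; simp
  have hCovX : (∫ ω, X ω * Y ω ∂P) - (∫ ω, X ω ∂P) * (∫ ω, Y ω ∂P)
      = (1/2) * ∫ z : ℝ × ℝ, Kfun P X Y z ∂((volume : Measure ℝ).prod volume) := by
    have h := core P X Y hXm hYm hX hY (fun x => x) (fun x => x)
      (fun _ => 1) (fun _ => 1) 1 1 measurable_const measurable_const hone hone hid hid hX hY
    simpa using h
  have hKnn : ∀ z : ℝ × ℝ, 0 ≤ Kfun P X Y z := Knonneg P X Y hXm hYm hPQD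
  have hKint : Integrable (fun z : ℝ × ℝ => Kfun P X Y z)
      ((volume : Measure ℝ).prod volume) := by
    have h := Kint P X Y hXm hYm hX hY (fun _ => 1) (fun _ => 1) 1 1
      measurable_const measurable_const hone hone
    simpa using h
  have hRHS0 : 0 ≤ (∫ ω, X ω * Y ω ∂P) - (∫ ω, X ω ∂P) * (∫ ω, Y ω ∂P) := by
    rw [hCovX]
    have := integral_nonneg (μ := (volume : Measure ℝ).prod volume) (f := Kfun P X Y) hKnn
    linarith
  rcases dicho f f' M hfac hf' with ⟨F₁, hF₁m, hF₁b, hF₁ac⟩ | hfconst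
  · rcases dicho g g' M hgac hg' with ⟨G₁, hG₁m, hG₁b, hG₁ac⟩ | hgconst
    · -- main case
      have hcov := core P X Y hXm hYm hX hY f g F₁ G₁ M M hF₁m hG₁m hF₁b hG₁b hF₁ac hG₁ac hfX hgY
      have hFGKint : Integrable (fun z : ℝ × ℝ => F₁ z.1 * G₁ z.2 * Kfun P X Y z)
          ((volume : Measure ℝ).prod volume) :=
        Kint P X Y hXm hYm hX hY F₁ G₁ M M hF₁m hG₁m hF₁b hG₁b
      have h1 : |∫ z : ℝ × ℝ, F₁ z.1 * G₁ z.2 * Kfun P X Y z ∂((volume : Measure ℝ).prod volume)|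
          ≤ ∫ z : ℝ × ℝ, M ^ 2 * Kfun P X Y z ∂((volume : Measure ℝ).prod volume) := by
        calc |∫ z : ℝ × ℝ, F₁ z.1 * G₁ z.2 * Kfun P X Y z ∂((volume : Measure ℝ).prod volume)|
            ≤ ∫ z : ℝ × ℝ, |F₁ z.1 * G₁ z.2 * Kfun P X Y z|
                ∂((volume : Measure ℝ).prod volume) := by
              rw [← Real.norm_eq_abs]
              exact (norm_integral_le_integral_norm _)
          _ ≤ ∫ z : ℝ × ℝ, M ^ 2 * Kfun P X Y z ∂((volume : Measure ℝ).prod volume) := by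
              refine integral_mono_ae hFGKint.abs (hKint.const_mul (M ^ 2)) ?_
              filter_upwards [ae_prod2 hF₁b hG₁b] with z hz
              have hK := hKnn z
              have hM0 : 0 ≤ M := le_trans (abs_nonneg _) hz.1
              calc |F₁ z.1 * G₁ z.2 * Kfun P X Y z|
                  = |F₁ z.1| * |G₁ z.2| * Kfun P X Y z := by
                    rw [abs_mul, abs_mul, abs_of_nonneg hK]
                _ ≤ M * M * Kfun P X Y z := by
                    apply mul_le_mul_of_nonneg_right _ hK
                    exact mul_le_mul hz.1 hz.2 (abs_nonneg _) hM0
                _ = M ^ 2 * Kfun P X Y z := by ring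
      have h2 : ∫ z : ℝ × ℝ, M ^ 2 * Kfun P X Y z ∂((volume : Measure ℝ).prod volume)
          = M ^ 2 * ∫ z : ℝ × ℝ, Kfun P X Y z ∂((volume : Measure ℝ).prod volume) :=
        integral_const_mul _ _
      rw [hcov, hCovX, abs_mul, abs_of_nonneg (by norm_num : (0:ℝ) ≤ 1/2)]
      rw [h2] at h1
      nlinarith [h1]
    · -- g constant
      have hg0 : ∀ ω, g (Y ω) = g 0 := fun ω => hgconst (Y ω) 0
      have hz : (∫ ω, f (X ω) * g (Y ω) ∂P) - (∫ ω, f (X ω) ∂P) * (∫ ω, g (Y ω) ∂P) = 0 := by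
        have e1 : ∫ ω, f (X ω) * g (Y ω) ∂P = (∫ ω, f (X ω) ∂P) * g 0 := by
          simp_rw [hg0]
          exact integral_mul_const _ _
        have e2 : ∫ ω, g (Y ω) ∂P = g 0 := by
          simp_rw [hg0]
          simp
        rw [e1, e2]; ring
      rw [hz, abs_zero]
      exact mul_nonneg (sq_nonneg M) hRHS0
  · -- f constant
    have hf0 : ∀ ω, f (X ω) = f 0 := fun ω => hfconst (X ω) 0
    have hz : (∫ ω, f (X ω) * g (Y ω) ∂P) - (∫ ω, f (X ω) ∂P) * (∫ ω, g (Y ω) ∂P) = 0 := by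
      have e1 : ∫ ω, f (X ω) * g (Y ω) ∂P = f 0 * (∫ ω, g (Y ω) ∂P) := by
        simp_rw [hf0]
        exact integral_const_mul _ _
      have e2 : ∫ ω, f (X ω) ∂P = f 0 := by
        simp_rw [hf0]
        simp
      rw [e1, e2]; ring
    rw [hz, abs_zero]
    exact mul_nonneg (sq_nonneg M) hRHS0
end

section
/- Let (F_n) and F be right-continuous distribution functions on R. Assume F_n(x) → F(x) for every x in a countable dense set Q ⊆ R, and F_n(x) − F_n(x^−) → F(x) − F(x^−) for every jump point x of F. Then F_n → F uniformly on R. -/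
open Filter Function

/-- Chung's lemma: if right-continuous distribution functions `F n` converge to `F` on a
dense countable set and the jumps converge at every jump point of `F`, then `F n → F`
uniformly on `ℝ`. -/
theorem stmt7 (F : ℕ → ℝ → ℝ) (G : ℝ → ℝ)
    (hFmono : ∀ n, Monotone (F n)) (hGmono : Monotone G)
    (hFrc : ∀ n x, ContinuousWithinAt (F n) (Set.Ici x) x)
    (hGrc : ∀ x, ContinuousWithinAt G (Set.Ici x) x)
    (hF0 : ∀ n, Tendsto (F n) atBot (nhds 0)) (hF1 : ∀ n, Tendsto (F n) atTop (nhds 1))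
    (hG0 : Tendsto G atBot (nhds 0)) (hG1 : Tendsto G atTop (nhds 1))
    (Q : Set ℝ) (hQc : Q.Countable) (hQd : Dense Q)
    (hconv : ∀ x ∈ Q, Tendsto (fun n => F n x) atTop (nhds (G x)))
    (hjump : ∀ x : ℝ, leftLim G x ≠ G x →
      Tendsto (fun n => F n x - leftLim (F n) x) atTop (nhds (G x - leftLim G x))) :
    TendstoUniformly F G atTop := by
  -- basic bounds
  have hFle1 : ∀ n x, F n x ≤ 1 := by
    intro n x
    refine ge_of_tendsto (hF1 n) ?_
    exact eventually_atTop.2 ⟨x, fun y hy => hFmono n hy⟩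
  have hFge0 : ∀ n x, 0 ≤ F n x := by
    intro n x
    refine le_of_tendsto (hF0 n) ?_
    exact eventually_atBot.2 ⟨x, fun y hy => hFmono n hy⟩
  have hGle1 : ∀ x, G x ≤ 1 := by
    intro x
    refine ge_of_tendsto hG1 ?_
    exact eventually_atTop.2 ⟨x, fun y hy => hGmono hy⟩
  have hGge0 : ∀ x, 0 ≤ G x := by
    intro x
    refine le_of_tendsto hG0 ?_
    exact eventually_atBot.2 ⟨x, fun y hy => hGmono hy⟩
  -- key pointwise convergence of both `F n x` and `leftLim (F n) x`
  have key : ∀ (x : ℝ) (ε : ℝ), 0 < ε →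
      ∀ᶠ n in atTop, |F n x - G x| < ε ∧ |leftLim (F n) x - leftLim G x| < ε := by
    intro x ε hε
    set δ := ε / 3 with hδdef
    have hδ : 0 < δ := by positivity
    -- a point q ∈ Q with q < x and G q > leftLim G x - δ
    obtain ⟨y, hy1, hy2⟩ : ∃ y, (leftLim G x - δ < G y) ∧ y < x := by
      have h1 : ∀ᶠ y in nhdsWithin x (Set.Iio x), leftLim G x - δ < G y :=
        (hGmono.tendsto_leftLim x).eventually (eventually_gt_nhds (by linarith))
      exact (h1.and eventually_mem_nhdsWithin).exists
    obtain ⟨q, hqQ, hq1, hq2⟩ : ∃ q ∈ Q, y < q ∧ q < x := by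
      obtain ⟨q, hqQ, hq⟩ := hQd.exists_between hy2
      exact ⟨q, hqQ, hq.1, hq.2⟩
    have hGq : leftLim G x - δ < G q := lt_of_lt_of_le hy1 (hGmono hq1.le)
    -- a point q' ∈ Q with x < q' and G q' < G x + δ
    obtain ⟨z, hz1, hz2⟩ : ∃ z, (G z < G x + δ) ∧ x < z := by
      have h2 : Tendsto G (nhdsWithin x (Set.Ioi x)) (nhds (G x)) :=
        (hGrc x).mono_left (nhdsWithin_mono x Set.Ioi_subset_Ici_self)
      have h3 : ∀ᶠ z in nhdsWithin x (Set.Ioi x), G z < G x + δ :=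
        h2.eventually (eventually_lt_nhds (by linarith))
      exact (h3.and eventually_mem_nhdsWithin).exists
    obtain ⟨q', hq'Q, hq'1, hq'2⟩ : ∃ q' ∈ Q, x < q' ∧ q' < z := by
      obtain ⟨q', hq'Q, hq'⟩ := hQd.exists_between hz2
      exact ⟨q', hq'Q, hq'.1, hq'.2⟩
    have hGq' : G q' < G x + δ := lt_of_le_of_lt (hGmono hq'2.le) hz1
    have hq : ∀ᶠ n in atTop, G q - δ < F n q :=
      (hconv q hqQ).eventually (eventually_gt_nhds (by linarith))
    have hq' : ∀ᶠ n in atTop, F n q' < G q' + δ :=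
      (hconv q' hq'Q).eventually (eventually_lt_nhds (by linarith))
    rcases eq_or_ne (leftLim G x) (G x) with he | hne
    · filter_upwards [hq, hq'] with n h1 h2
      have hA : leftLim G x - 2 * δ < F n x := by
        have h3 : F n q ≤ F n x := hFmono n hq2.le
        linarith
      have hB : F n x < G x + 2 * δ := by
        have h3 : F n x ≤ F n q' := hFmono n hq'1.le
        linarith
      have hC : leftLim G x - 2 * δ < leftLim (F n) x := by
        have h3 : F n q ≤ leftLim (F n) x := (hFmono n).le_leftLim hq2
        linarith
      have hD : leftLim (F n) x ≤ F n x := (hFmono n).leftLim_le le_rfl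
      constructor
      · rw [abs_sub_lt_iff]; constructor <;> [linarith; linarith]
      · rw [abs_sub_lt_iff, he]; constructor <;> [linarith; linarith]
    · have hj : ∀ᶠ n in atTop, G x - leftLim G x - δ < F n x - leftLim (F n) x :=
        (hjump x hne).eventually (eventually_gt_nhds (by linarith))
      filter_upwards [hq, hq', hj] with n h1 h2 h3
      have hB : F n x < G x + 2 * δ := by
        have h4 : F n x ≤ F n q' := hFmono n hq'1.le
        linarith
      have hC : leftLim G x - 2 * δ < leftLim (F n) x := by
        have h4 : F n q ≤ leftLim (F n) x := (hFmono n).le_leftLim hq2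
        linarith
      have hA : G x - 3 * δ < F n x := by linarith
      have hD : leftLim (F n) x < leftLim G x + 3 * δ := by linarith
      constructor
      · rw [abs_sub_lt_iff]; constructor <;> [linarith; linarith]
      · rw [abs_sub_lt_iff]; constructor <;> [linarith; linarith]
  -- uniform convergence
  rw [Metric.tendstoUniformly_iff]
  intro ε hε
  set δ := ε / 8 with hδdef
  have hδ : 0 < δ := by positivity
  -- tail points
  obtain ⟨a, ha⟩ : ∃ a, G a < δ := (hG0.eventually (eventually_lt_nhds hδ)).exists
  obtain ⟨b₀, hb₀⟩ : ∃ b, 1 - δ < G b := (hG1.eventually (eventually_gt_nhds (by linarith))).exists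
  set b := max (a + 1) b₀ with hbdef
  have hab : a < b := lt_of_lt_of_le (by linarith) (le_max_left _ _)
  have hb : 1 - δ < G b := lt_of_lt_of_le hb₀ (hGmono (le_max_right _ _))
  -- local neighborhoods
  have hz : ∀ x : ℝ, ∃ z, x < z ∧ G z < G x + δ := by
    intro x
    have h2 : Tendsto G (nhdsWithin x (Set.Ioi x)) (nhds (G x)) :=
      (hGrc x).mono_left (nhdsWithin_mono x Set.Ioi_subset_Ici_self)
    have h3 : ∀ᶠ z in nhdsWithin x (Set.Ioi x), G z < G x + δ :=
      h2.eventually (eventually_lt_nhds (by linarith))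
    obtain ⟨z, h4, h5⟩ := (h3.and eventually_mem_nhdsWithin).exists
    exact ⟨z, h5, h4⟩
  have hw : ∀ x : ℝ, ∃ w, w < x ∧ leftLim G x - δ < G w := by
    intro x
    have h1 : ∀ᶠ y in nhdsWithin x (Set.Iio x), leftLim G x - δ < G y :=
      (hGmono.tendsto_leftLim x).eventually (eventually_gt_nhds (by linarith))
    obtain ⟨y, h2, h3⟩ := (h1.and eventually_mem_nhdsWithin).exists
    exact ⟨y, h3, h2⟩
  choose z hz1 hz2 using hz
  choose w hw1 hw2 using hw
  -- finite subcover of [a, b]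
  obtain ⟨t, -, hcover⟩ := (isCompact_Icc (a := a) (b := b)).elim_nhds_subcover
    (fun x => Set.Ioo (w x) (z x))
    (fun x _ => isOpen_Ioo.mem_nhds ⟨hw1 x, hz1 x⟩)
  -- eventual control at all finitely many relevant points
  have hev : ∀ᶠ n in atTop,
      (∀ x ∈ t, (|F n x - G x| < δ ∧ |leftLim (F n) x - leftLim G x| < δ) ∧
        |F n (z x) - G (z x)| < δ ∧ |F n (w x) - G (w x)| < δ) ∧
      |F n a - G a| < δ ∧ |F n b - G b| < δ := by
    refine ((eventually_all_finset t).2 fun x _ => ?_).and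
      (((key a δ hδ).mono fun n h => h.1).and ((key b δ hδ).mono fun n h => h.1))
    exact (key x δ hδ).and
      (((key (z x) δ hδ).mono fun n h => h.1).and ((key (w x) δ hδ).mono fun n h => h.1))
  filter_upwards [hev] with n hn
  obtain ⟨ht, hna, hnb⟩ := hn
  intro y
  rw [Real.dist_eq]
  rcases lt_or_ge y a with hya | hya
  · -- left tail
    have h1 : F n y ≤ F n a := hFmono n hya.le
    have h2 : G y ≤ G a := hGmono hya.le
    have h3 := abs_sub_lt_iff.1 hna
    have h4 := hFge0 n y
    have h5 := hGge0 y
    rw [abs_sub_lt_iff]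
    constructor <;> [linarith; linarith]
  rcases le_or_gt y b with hyb | hyb
  · -- middle: use the cover
    obtain ⟨x, hxt, hyx⟩ := Set.mem_iUnion₂.1 (hcover ⟨hya, hyb⟩)
    obtain ⟨⟨hx1, hx2⟩, hx3, hx4⟩ := ht x hxt
    have hx1' := abs_sub_lt_iff.1 hx1
    have hx2' := abs_sub_lt_iff.1 hx2
    have hx3' := abs_sub_lt_iff.1 hx3
    have hx4' := abs_sub_lt_iff.1 hx4
    rcases le_or_gt x y with hxy | hxy
    · -- x ≤ y < z x
      have h1 : F n x ≤ F n y := hFmono n hxy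
      have h2 : F n y ≤ F n (z x) := hFmono n hyx.2.le
      have h3 : G x ≤ G y := hGmono hxy
      have h4 : G y ≤ G (z x) := hGmono hyx.2.le
      have h5 : G (z x) < G x + δ := hz2 x
      rw [abs_sub_lt_iff]
      constructor <;> [linarith; linarith]
    · -- w x < y < x
      have h1 : F n (w x) ≤ F n y := hFmono n hyx.1.le
      have h2 : F n y ≤ leftLim (F n) x := (hFmono n).le_leftLim hxy
      have h3 : G (w x) ≤ G y := hGmono hyx.1.le
      have h4 : G y ≤ leftLim G x := hGmono.le_leftLim hxy
      have h5 : leftLim G x - δ < G (w x) := hw2 x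
      rw [abs_sub_lt_iff]
      constructor <;> [linarith; linarith]
  · -- right tail
    have h1 : F n b ≤ F n y := hFmono n hyb.le
    have h2 : G b ≤ G y := hGmono hyb.le
    have h3 := abs_sub_lt_iff.1 hnb
    have h4 := hFle1 n y
    have h5 := hGle1 y
    rw [abs_sub_lt_iff]
    constructor <;> [linarith; linarith]
end

section
/- Let (X_l)_{l ∈ Z^d} be i.i.d. random variables with distribution function F, and for s ≤ t ≤ r set Y_n(u) = V_n^{-1/2} ∑_l N_n(l)(1_{X_l ≤ u} − F(u)). Then there is an absolute constant C such that for all n, E[(Y_n(t) − Y_n(s))^2 (Y_n(r) − Y_n(t))^2] ≤ C (F(r) − F(s))^2. -/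
open Finset MeasureTheory ProbabilityTheory Filter

lemma bdd_int {Ω : Type*} [MeasurableSpace Ω] {P : Measure Ω} [IsFiniteMeasure P]
    {f : Ω → ℝ} (hf : Measurable f) {C : ℝ} (h : ∀ ω, |f ω| ≤ C) : Integrable f P :=
  (integrable_const C).mono' hf.aestronglyMeasurable
    (Filter.Eventually.of_forall fun ω => by simpa [Real.norm_eq_abs] using h ω)

lemma indep_factor
    {Ω : Type*} [MeasurableSpace Ω] {P : Measure Ω} [IsProbabilityMeasure P]
    {d : ℕ} {X : (Fin d → ℤ) → Ω → ℝ} (hmeas : ∀ l, Measurable (X l))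
    (hindep : iIndepFun X P)
    {g1 g2 : ℝ → ℝ} (hg1 : Measurable g1) (hg2 : Measurable g2)
    (hb1 : ∀ x, |g1 x| ≤ 1) (hb2 : ∀ x, |g2 x| ≤ 1)
    (a : (Fin d → ℤ) → ℝ) (s : Finset (Fin d → ℤ)) {i : (Fin d → ℤ)} (hi : i ∉ s)
    (e1 e2 j k : ℕ) :
    ∫ ω, (g1 (X i ω))^e1 * (g2 (X i ω))^e2 *
        ((∑ l ∈ s, a l * g1 (X l ω))^j * (∑ l ∈ s, a l * g2 (X l ω))^k) ∂P =
    (∫ ω, (g1 (X i ω))^e1 * (g2 (X i ω))^e2 ∂P) *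
      ∫ ω, (∑ l ∈ s, a l * g1 (X l ω))^j * (∑ l ∈ s, a l * g2 (X l ω))^k ∂P := by
  classical
  set f : ℝ → ℝ := fun x => g1 x ^ e1 * g2 x ^ e2 with hf_def
  have hf : Measurable f := (hg1.pow_const e1).mul (hg2.pow_const e2)
  set Φ : ((l : {x // x ∈ s}) → ℝ) → ℝ := fun v =>
      (∑ l ∈ s.attach, a l * g1 (v l)) ^ j * (∑ l ∈ s.attach, a l * g2 (v l)) ^ k with hΦ_def
  have hΦ : Measurable Φ := by
    apply Measurable.mul
    · exact (Finset.measurable_sum _ fun l _ =>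
        measurable_const.mul (hg1.comp (measurable_pi_apply l))).pow_const j
    · exact (Finset.measurable_sum _ fun l _ =>
        measurable_const.mul (hg2.comp (measurable_pi_apply l))).pow_const k
  have hIF : IndepFun (fun ω => f (X i ω)) (fun ω => Φ (fun l : {x // x ∈ s} => X l ω)) P := by
    have h := hindep.indepFun_finset {i} s
      (Finset.disjoint_singleton_left.mpr hi) hmeas
    have := h.comp (φ := fun v : ({i} : Finset (Fin d → ℤ)) → ℝ =>
        f (v ⟨i, Finset.mem_singleton_self i⟩)) (ψ := Φ)
      (hf.comp (measurable_pi_apply _)) hΦ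
    exact this
  have hA : ∀ ω, Φ (fun l : {x // x ∈ s} => X l ω) =
      (∑ l ∈ s, a l * g1 (X l ω))^j * (∑ l ∈ s, a l * g2 (X l ω))^k := by
    intro ω
    simp only [Φ]
    rw [Finset.sum_attach s (fun l => a l * g1 (X l ω)),
        Finset.sum_attach s (fun l => a l * g2 (X l ω))]
  have hfb : ∀ ω, |f (X i ω)| ≤ 1 := by
    intro ω
    simp only [f, abs_mul, abs_pow]
    calc |g1 (X i ω)| ^ e1 * |g2 (X i ω)| ^ e2 ≤ 1 ^ e1 * 1 ^ e2 := by
          gcongr <;> first | exact abs_nonneg _ | exact hb1 _ | exact hb2 _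
      _ = 1 := by norm_num
  set Ca : ℝ := ∑ l ∈ s, |a l| with hCa_def
  have hAb : ∀ ω, |∑ l ∈ s, a l * g1 (X l ω)| ≤ Ca := by
    intro ω
    refine (Finset.abs_sum_le_sum_abs _ _).trans (Finset.sum_le_sum fun l _ => ?_)
    rw [abs_mul]
    exact mul_le_of_le_one_right (abs_nonneg _) (hb1 _)
  have hBb : ∀ ω, |∑ l ∈ s, a l * g2 (X l ω)| ≤ Ca := by
    intro ω
    refine (Finset.abs_sum_le_sum_abs _ _).trans (Finset.sum_le_sum fun l _ => ?_)
    rw [abs_mul]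
    exact mul_le_of_le_one_right (abs_nonneg _) (hb2 _)
  have hCa0 : 0 ≤ Ca := Finset.sum_nonneg fun l _ => abs_nonneg _
  have hAmeas : Measurable fun ω => ∑ l ∈ s, a l * g1 (X l ω) :=
    Finset.measurable_sum _ fun l _ => measurable_const.mul (hg1.comp (hmeas l))
  have hBmeas : Measurable fun ω => ∑ l ∈ s, a l * g2 (X l ω) :=
    Finset.measurable_sum _ fun l _ => measurable_const.mul (hg2.comp (hmeas l))
  have int1 : Integrable (fun ω => f (X i ω)) P := bdd_int (hf.comp (hmeas i)) hfb
  have int2 : Integrable (fun ω =>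
      (∑ l ∈ s, a l * g1 (X l ω))^j * (∑ l ∈ s, a l * g2 (X l ω))^k) P := by
    refine bdd_int ((hAmeas.pow_const j).mul (hBmeas.pow_const k)) (C := Ca ^ j * Ca ^ k) ?_
    intro ω
    rw [abs_mul, abs_pow, abs_pow]
    gcongr <;> first | exact abs_nonneg _ | exact hAb _ | exact hBb _
  have hIF' : IndepFun (fun ω => f (X i ω)) (fun ω =>
      (∑ l ∈ s, a l * g1 (X l ω))^j * (∑ l ∈ s, a l * g2 (X l ω))^k) P := by
    have : (fun ω => Φ (fun l : {x // x ∈ s} => X l ω)) = fun ω =>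
        (∑ l ∈ s, a l * g1 (X l ω))^j * (∑ l ∈ s, a l * g2 (X l ω))^k := funext hA
    rwa [this] at hIF
  exact hIF'.integral_fun_mul_eq_mul_integral int1.aestronglyMeasurable int2.aestronglyMeasurable

section Main
variable {Ω : Type*} [MeasurableSpace Ω] {P : Measure Ω} [IsProbabilityMeasure P]
    {d : ℕ} {X : (Fin d → ℤ) → Ω → ℝ}

lemma T_integrable (hmeas : ∀ l, Measurable (X l))
    {g1 g2 : ℝ → ℝ} (hg1 : Measurable g1) (hg2 : Measurable g2)
    (hb1 : ∀ x, |g1 x| ≤ 1) (hb2 : ∀ x, |g2 x| ≤ 1)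
    (a : (Fin d → ℤ) → ℝ) (s : Finset (Fin d → ℤ)) (i : (Fin d → ℤ))
    (e1 e2 j k : ℕ) :
    Integrable (fun ω => g1 (X i ω)^e1 * g2 (X i ω)^e2 *
      ((∑ l ∈ s, a l * g1 (X l ω))^j * (∑ l ∈ s, a l * g2 (X l ω))^k)) P := by
  have hAmeas : Measurable fun ω => ∑ l ∈ s, a l * g1 (X l ω) :=
    Finset.measurable_sum _ fun l _ => measurable_const.mul (hg1.comp (hmeas l))
  have hBmeas : Measurable fun ω => ∑ l ∈ s, a l * g2 (X l ω) :=
    Finset.measurable_sum _ fun l _ => measurable_const.mul (hg2.comp (hmeas l))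
  set Ca : ℝ := ∑ l ∈ s, |a l| with hCa_def
  have hAb : ∀ ω, |∑ l ∈ s, a l * g1 (X l ω)| ≤ Ca := by
    intro ω
    refine (Finset.abs_sum_le_sum_abs _ _).trans (Finset.sum_le_sum fun l _ => ?_)
    rw [abs_mul]; exact mul_le_of_le_one_right (abs_nonneg _) (hb1 _)
  have hBb : ∀ ω, |∑ l ∈ s, a l * g2 (X l ω)| ≤ Ca := by
    intro ω
    refine (Finset.abs_sum_le_sum_abs _ _).trans (Finset.sum_le_sum fun l _ => ?_)
    rw [abs_mul]; exact mul_le_of_le_one_right (abs_nonneg _) (hb2 _)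
  refine bdd_int ?_ (C := Ca ^ j * Ca ^ k) ?_
  · exact (((hg1.comp (hmeas i)).pow_const e1).mul ((hg2.comp (hmeas i)).pow_const e2)).mul
      ((hAmeas.pow_const j).mul (hBmeas.pow_const k))
  · intro ω
    rw [abs_mul]
    have h1 : |g1 (X i ω)^e1 * g2 (X i ω)^e2| ≤ 1 := by
      rw [abs_mul, abs_pow, abs_pow]
      calc |g1 (X i ω)| ^ e1 * |g2 (X i ω)| ^ e2 ≤ 1 ^ e1 * 1 ^ e2 := by
            gcongr <;> first | exact abs_nonneg _ | exact hb1 _ | exact hb2 _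
        _ = 1 := by norm_num
    have h2 : |(∑ l ∈ s, a l * g1 (X l ω))^j * (∑ l ∈ s, a l * g2 (X l ω))^k|
        ≤ Ca ^ j * Ca ^ k := by
      rw [abs_mul, abs_pow, abs_pow]
      gcongr <;> first | exact abs_nonneg _ | exact hAb _ | exact hBb _
    calc |g1 (X i ω)^e1 * g2 (X i ω)^e2| * |(∑ l ∈ s, a l * g1 (X l ω))^j *
          (∑ l ∈ s, a l * g2 (X l ω))^k| ≤ 1 * (Ca ^ j * Ca ^ k) := by
          exact mul_le_mul h1 h2 (abs_nonneg _) one_pos.le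
      _ = Ca ^ j * Ca ^ k := one_mul _

set_option maxHeartbeats 1000000 in
lemma fourth_moment_bound (hmeas : ∀ l, Measurable (X l))
    (hindep : iIndepFun X P)
    (hident : ∀ l, IdentDistrib (X l) (X 0) P P)
    {g1 g2 : ℝ → ℝ} (hg1 : Measurable g1) (hg2 : Measurable g2)
    (hb1 : ∀ x, |g1 x| ≤ 1) (hb2 : ∀ x, |g2 x| ≤ 1)
    {p q : ℝ} (hp0 : 0 ≤ p) (hq0 : 0 ≤ q) (hpq1 : p * q ≤ 1)
    (hm1 : ∫ ω, g1 (X 0 ω) ∂P = 0) (hm2 : ∫ ω, g2 (X 0 ω) ∂P = 0)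
    (h20 : ∫ ω, g1 (X 0 ω)^2 ∂P ≤ p) (h02 : ∫ ω, g2 (X 0 ω)^2 ∂P ≤ q)
    (h11 : |∫ ω, g1 (X 0 ω) * g2 (X 0 ω) ∂P| ≤ p * q)
    (h22 : ∫ ω, g1 (X 0 ω)^2 * g2 (X 0 ω)^2 ∂P ≤ 3 * (p * q))
    (a : (Fin d → ℤ) → ℝ) (S : Finset (Fin d → ℤ)) :
    (∫ ω, (∑ l ∈ S, a l * g1 (X l ω)) ∂P = 0) ∧
    (∫ ω, (∑ l ∈ S, a l * g2 (X l ω)) ∂P = 0) ∧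
    (∫ ω, (∑ l ∈ S, a l * g1 (X l ω))^2 ∂P ≤ p * ∑ l ∈ S, (a l)^2) ∧
    (∫ ω, (∑ l ∈ S, a l * g2 (X l ω))^2 ∂P ≤ q * ∑ l ∈ S, (a l)^2) ∧
    (|∫ ω, (∑ l ∈ S, a l * g1 (X l ω)) * (∑ l ∈ S, a l * g2 (X l ω)) ∂P| ≤
        (p * q) * ∑ l ∈ S, (a l)^2) ∧
    (∫ ω, (∑ l ∈ S, a l * g1 (X l ω))^2 * (∑ l ∈ S, a l * g2 (X l ω))^2 ∂P ≤
        3 * (p * q) * (∑ l ∈ S, (a l)^2)^2) := by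
  classical
  induction S using Finset.induction_on with
  | empty => simp
  | @insert i s hi IH =>
    obtain ⟨IH1, IH2, IH3, IH4, IH5, IH6⟩ := IH
    simp only [Finset.sum_insert hi]
    set T : ℕ → ℕ → ℕ → ℕ → Ω → ℝ := fun e1 e2 j k ω =>
      g1 (X i ω)^e1 * g2 (X i ω)^e2 *
        ((∑ l ∈ s, a l * g1 (X l ω))^j * (∑ l ∈ s, a l * g2 (X l ω))^k) with hT
    set M : ℕ → ℕ → ℝ := fun e1 e2 => ∫ ω, g1 (X 0 ω)^e1 * g2 (X 0 ω)^e2 ∂P with hM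
    set E : ℕ → ℕ → ℝ := fun j k => ∫ ω, T 0 0 j k ω ∂P with hE
    have hEdef : ∀ j k, ∫ ω, T 0 0 j k ω ∂P = E j k := fun _ _ => rfl
    have hTint : ∀ e1 e2 j k, Integrable (T e1 e2 j k) P := by
      intro e1 e2 j k
      simp only [hT]
      exact T_integrable hmeas hg1 hg2 hb1 hb2 a s i e1 e2 j k
    have hH : ∀ e1 e2 j k, ∫ ω, T e1 e2 j k ω ∂P = M e1 e2 * E j k := by
      intro e1 e2 j k
      simp only [hT, hE, hM]
      rw [indep_factor hmeas hindep hg1 hg2 hb1 hb2 a s hi e1 e2 j k]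
      congr 1
      · have hco : Measurable fun x => g1 x^e1 * g2 x^e2 :=
          (hg1.pow_const e1).mul (hg2.pow_const e2)
        have := ((hident i).comp hco).integral_eq
        simpa [Function.comp] using this
      · simp only [pow_zero, one_mul]
    -- moment values
    have hM10 : M 1 0 = 0 := by simp only [hM]; simpa using hm1
    have hM01 : M 0 1 = 0 := by simp only [hM]; simpa using hm2
    have hM20 : M 2 0 ≤ p := by simp only [hM]; simpa using h20
    have hM02 : M 0 2 ≤ q := by simp only [hM]; simpa using h02
    have hM11 : |M 1 1| ≤ p * q := by simp only [hM]; simpa using h11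
    have hM22 : M 2 2 ≤ 3 * (p * q) := by simp only [hM]; simpa using h22
    have hM20n : 0 ≤ M 2 0 := by
      simp only [hM]; exact integral_nonneg fun ω => by positivity
    have hM02n : 0 ≤ M 0 2 := by
      simp only [hM]; exact integral_nonneg fun ω => by positivity
    -- E values
    have hE00 : E 0 0 = 1 := by simp [hE, hT]
    have hE10 : E 1 0 = 0 := by
      simp only [hE, hT]; simpa using IH1
    have hE01 : E 0 1 = 0 := by
      simp only [hE, hT]; simpa using IH2
    have hE20 : E 2 0 ≤ p * ∑ l ∈ s, (a l)^2 := by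
      simp only [hE, hT]; simpa using IH3
    have hE02 : E 0 2 ≤ q * ∑ l ∈ s, (a l)^2 := by
      simp only [hE, hT]; simpa using IH4
    have hE11 : |E 1 1| ≤ (p * q) * ∑ l ∈ s, (a l)^2 := by
      simp only [hE, hT]; simpa using IH5
    have hE22 : E 2 2 ≤ 3 * (p * q) * (∑ l ∈ s, (a l)^2)^2 := by
      simp only [hE, hT]; simpa using IH6
    have hE20n : 0 ≤ E 2 0 := by
      simp only [hE, hT]; exact integral_nonneg fun ω => by positivity
    have hE02n : 0 ≤ E 0 2 := by
      simp only [hE, hT]; exact integral_nonneg fun ω => by positivity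
    have hS0 : (0:ℝ) ≤ ∑ l ∈ s, (a l)^2 := Finset.sum_nonneg fun l _ => sq_nonneg _
    set Sg : ℝ := ∑ l ∈ s, (a l)^2 with hSg
    refine ⟨?_, ?_, ?_, ?_, ?_, ?_⟩
    · -- goal 1
      have e : (fun ω => a i * g1 (X i ω) + ∑ l ∈ s, a l * g1 (X l ω)) =
          fun ω => a i * T 1 0 0 0 ω + (T 0 0 1 0 ω) := by
        funext ω; simp only [hT]; ring
      have S0 : ∫ ω, a i * T 1 0 0 0 ω + (T 0 0 1 0 ω) ∂P = (∫ ω, a i * T 1 0 0 0 ω ∂P) + ∫ ω, T 0 0 1 0 ω ∂P :=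
        integral_add ((hTint 1 0 0 0).const_mul _) (hTint 0 0 1 0)
      rw [e, S0]
      simp only [integral_const_mul]
      rw [hH 1 0 0 0]
      simp only [hEdef]
      rw [hM10, hE10]; ring
    · -- goal 2
      have e : (fun ω => a i * g2 (X i ω) + ∑ l ∈ s, a l * g2 (X l ω)) =
          fun ω => a i * T 0 1 0 0 ω + (T 0 0 0 1 ω) := by
        funext ω; simp only [hT]; ring
      have S0 : ∫ ω, a i * T 0 1 0 0 ω + (T 0 0 0 1 ω) ∂P = (∫ ω, a i * T 0 1 0 0 ω ∂P) + ∫ ω, T 0 0 0 1 ω ∂P :=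
        integral_add ((hTint 0 1 0 0).const_mul _) (hTint 0 0 0 1)
      rw [e, S0]
      simp only [integral_const_mul]
      rw [hH 0 1 0 0]
      simp only [hEdef]
      rw [hM01, hE01]; ring
    · -- goal 3
      have e : (fun ω => (a i * g1 (X i ω) + ∑ l ∈ s, a l * g1 (X l ω))^2) =
          fun ω => a i^2 * T 2 0 0 0 ω + (2*a i * T 1 0 1 0 ω + (T 0 0 2 0 ω)) := by
        funext ω; simp only [hT]; ring
      have S0 : ∫ ω, a i^2 * T 2 0 0 0 ω + (2*a i * T 1 0 1 0 ω + (T 0 0 2 0 ω)) ∂P = (∫ ω, a i^2 * T 2 0 0 0 ω ∂P) + ∫ ω, 2*a i * T 1 0 1 0 ω + (T 0 0 2 0 ω) ∂P :=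
        integral_add ((hTint 2 0 0 0).const_mul _) (((hTint 1 0 1 0).const_mul _).add (hTint 0 0 2 0))
      have S1 : ∫ ω, 2*a i * T 1 0 1 0 ω + (T 0 0 2 0 ω) ∂P = (∫ ω, 2*a i * T 1 0 1 0 ω ∂P) + ∫ ω, T 0 0 2 0 ω ∂P :=
        integral_add ((hTint 1 0 1 0).const_mul _) (hTint 0 0 2 0)
      rw [e, S0, S1]
      simp only [integral_const_mul]
      rw [hH 2 0 0 0, hH 1 0 1 0]
      simp only [hEdef]
      rw [hM10, hE00]
      have heq : a i ^ 2 * (M 2 0 * 1) + (2 * a i * (0 * E 1 0) + E 2 0) =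
          a i ^ 2 * M 2 0 + E 2 0 := by ring
      rw [heq]
      have h1 : a i ^ 2 * M 2 0 ≤ a i ^ 2 * p :=
        mul_le_mul_of_nonneg_left hM20 (sq_nonneg _)
      linarith [h1, hE20]
    · -- goal 4
      have e : (fun ω => (a i * g2 (X i ω) + ∑ l ∈ s, a l * g2 (X l ω))^2) =
          fun ω => a i^2 * T 0 2 0 0 ω + (2*a i * T 0 1 0 1 ω + (T 0 0 0 2 ω)) := by
        funext ω; simp only [hT]; ring
      have S0 : ∫ ω, a i^2 * T 0 2 0 0 ω + (2*a i * T 0 1 0 1 ω + (T 0 0 0 2 ω)) ∂P = (∫ ω, a i^2 * T 0 2 0 0 ω ∂P) + ∫ ω, 2*a i * T 0 1 0 1 ω + (T 0 0 0 2 ω) ∂P :=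
        integral_add ((hTint 0 2 0 0).const_mul _) (((hTint 0 1 0 1).const_mul _).add (hTint 0 0 0 2))
      have S1 : ∫ ω, 2*a i * T 0 1 0 1 ω + (T 0 0 0 2 ω) ∂P = (∫ ω, 2*a i * T 0 1 0 1 ω ∂P) + ∫ ω, T 0 0 0 2 ω ∂P :=
        integral_add ((hTint 0 1 0 1).const_mul _) (hTint 0 0 0 2)
      rw [e, S0, S1]
      simp only [integral_const_mul]
      rw [hH 0 2 0 0, hH 0 1 0 1]
      simp only [hEdef]
      rw [hM01, hE00]
      have heq : a i ^ 2 * (M 0 2 * 1) + (2 * a i * (0 * E 0 1) + E 0 2) =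
          a i ^ 2 * M 0 2 + E 0 2 := by ring
      rw [heq]
      have h1 : a i ^ 2 * M 0 2 ≤ a i ^ 2 * q :=
        mul_le_mul_of_nonneg_left hM02 (sq_nonneg _)
      linarith [h1, hE02]
    · -- goal 5
      have e : (fun ω => (a i * g1 (X i ω) + ∑ l ∈ s, a l * g1 (X l ω)) * (a i * g2 (X i ω) + ∑ l ∈ s, a l * g2 (X l ω))) =
          fun ω => a i^2 * T 1 1 0 0 ω + (a i * T 1 0 0 1 ω + (a i * T 0 1 1 0 ω + (T 0 0 1 1 ω))) := by
        funext ω; simp only [hT]; ring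
      have S0 : ∫ ω, a i^2 * T 1 1 0 0 ω + (a i * T 1 0 0 1 ω + (a i * T 0 1 1 0 ω + (T 0 0 1 1 ω))) ∂P = (∫ ω, a i^2 * T 1 1 0 0 ω ∂P) + ∫ ω, a i * T 1 0 0 1 ω + (a i * T 0 1 1 0 ω + (T 0 0 1 1 ω)) ∂P :=
        integral_add ((hTint 1 1 0 0).const_mul _) (((hTint 1 0 0 1).const_mul _).add (((hTint 0 1 1 0).const_mul _).add (hTint 0 0 1 1)))
      have S1 : ∫ ω, a i * T 1 0 0 1 ω + (a i * T 0 1 1 0 ω + (T 0 0 1 1 ω)) ∂P = (∫ ω, a i * T 1 0 0 1 ω ∂P) + ∫ ω, a i * T 0 1 1 0 ω + (T 0 0 1 1 ω) ∂P :=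
        integral_add ((hTint 1 0 0 1).const_mul _) (((hTint 0 1 1 0).const_mul _).add (hTint 0 0 1 1))
      have S2 : ∫ ω, a i * T 0 1 1 0 ω + (T 0 0 1 1 ω) ∂P = (∫ ω, a i * T 0 1 1 0 ω ∂P) + ∫ ω, T 0 0 1 1 ω ∂P :=
        integral_add ((hTint 0 1 1 0).const_mul _) (hTint 0 0 1 1)
      rw [e, S0, S1, S2]
      simp only [integral_const_mul]
      rw [hH 1 1 0 0, hH 1 0 0 1, hH 0 1 1 0]
      simp only [hEdef]
      rw [hM10, hM01, hE00]
      have heq : a i ^ 2 * (M 1 1 * 1) + (a i * (0 * E 0 1) + (a i * (0 * E 1 0) + E 1 1)) =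
          a i ^ 2 * M 1 1 + E 1 1 := by ring
      rw [heq]
      calc |a i ^ 2 * M 1 1 + E 1 1| ≤ |a i ^ 2 * M 1 1| + |E 1 1| := abs_add_le _ _
        _ = a i ^ 2 * |M 1 1| + |E 1 1| := by rw [abs_mul, abs_of_nonneg (sq_nonneg _)]
        _ ≤ a i ^ 2 * (p * q) + (p * q) * Sg := by gcongr
        _ = (p * q) * (a i ^ 2 + Sg) := by ring
    · -- goal 6
      have e : (fun ω => (a i * g1 (X i ω) + ∑ l ∈ s, a l * g1 (X l ω))^2 * (a i * g2 (X i ω) + ∑ l ∈ s, a l * g2 (X l ω))^2) =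
          fun ω => a i^4 * T 2 2 0 0 ω + (2*a i^3 * T 2 1 0 1 ω + (a i^2 * T 2 0 0 2 ω + (2*a i^3 * T 1 2 1 0 ω + (4*a i^2 * T 1 1 1 1 ω + (2*a i * T 1 0 1 2 ω + (a i^2 * T 0 2 2 0 ω + (2*a i * T 0 1 2 1 ω + (T 0 0 2 2 ω)))))))) := by
        funext ω; simp only [hT]; ring
      have S0 : ∫ ω, a i^4 * T 2 2 0 0 ω + (2*a i^3 * T 2 1 0 1 ω + (a i^2 * T 2 0 0 2 ω + (2*a i^3 * T 1 2 1 0 ω + (4*a i^2 * T 1 1 1 1 ω + (2*a i * T 1 0 1 2 ω + (a i^2 * T 0 2 2 0 ω + (2*a i * T 0 1 2 1 ω + (T 0 0 2 2 ω)))))))) ∂P = (∫ ω, a i^4 * T 2 2 0 0 ω ∂P) + ∫ ω, 2*a i^3 * T 2 1 0 1 ω + (a i^2 * T 2 0 0 2 ω + (2*a i^3 * T 1 2 1 0 ω + (4*a i^2 * T 1 1 1 1 ω + (2*a i * T 1 0 1 2 ω + (a i^2 * T 0 2 2 0 ω + (2*a i * T 0 1 2 1 ω + (T 0 0 2 2 ω)))))))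 ∂P :=
        integral_add ((hTint 2 2 0 0).const_mul _) (((hTint 2 1 0 1).const_mul _).add (((hTint 2 0 0 2).const_mul _).add (((hTint 1 2 1 0).const_mul _).add (((hTint 1 1 1 1).const_mul _).add (((hTint 1 0 1 2).const_mul _).add (((hTint 0 2 2 0).const_mul _).add (((hTint 0 1 2 1).const_mul _).add (hTint 0 0 2 2))))))))
      have S1 : ∫ ω, 2*a i^3 * T 2 1 0 1 ω + (a i^2 * T 2 0 0 2 ω + (2*a i^3 * T 1 2 1 0 ω + (4*a i^2 * T 1 1 1 1 ω + (2*a i * T 1 0 1 2 ω + (a i^2 * T 0 2 2 0 ω + (2*a i * T 0 1 2 1 ω + (T 0 0 2 2 ω))))))) ∂P = (∫ ω, 2*a i^3 * T 2 1 0 1 ω ∂P) + ∫ ω, a i^2 * T 2 0 0 2 ω + (2*a i^3 * T 1 2 1 0 ω + (4*a i^2 * T 1 1 1 1 ω + (2*a i * T 1 0 1 2 ω + (a i^2 * T 0 2 2 0 ω + (2*a i * T 0 1 2 1 ω + (T 0 0 2 2 ω)))))) ∂P :=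
        integral_add ((hTint 2 1 0 1).const_mul _) (((hTint 2 0 0 2).const_mul _).add (((hTint 1 2 1 0).const_mul _).add (((hTint 1 1 1 1).const_mul _).add (((hTint 1 0 1 2).const_mul _).add (((hTint 0 2 2 0).const_mul _).add (((hTint 0 1 2 1).const_mul _).add (hTint 0 0 2 2)))))))
      have S2 : ∫ ω, a i^2 * T 2 0 0 2 ω + (2*a i^3 * T 1 2 1 0 ω + (4*a i^2 * T 1 1 1 1 ω + (2*a i * T 1 0 1 2 ω + (a i^2 * T 0 2 2 0 ω + (2*a i * T 0 1 2 1 ω + (T 0 0 2 2 ω)))))) ∂P = (∫ ω, a i^2 * T 2 0 0 2 ω ∂P) + ∫ ω, 2*a i^3 * T 1 2 1 0 ω + (4*a i^2 * T 1 1 1 1 ω + (2*a i * T 1 0 1 2 ω + (a i^2 * T 0 2 2 0 ω + (2*a i * T 0 1 2 1 ω + (T 0 0 2 2 ω))))) ∂P :=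
        integral_add ((hTint 2 0 0 2).const_mul _) (((hTint 1 2 1 0).const_mul _).add (((hTint 1 1 1 1).const_mul _).add (((hTint 1 0 1 2).const_mul _).add (((hTint 0 2 2 0).const_mul _).add (((hTint 0 1 2 1).const_mul _).add (hTint 0 0 2 2))))))
      have S3 : ∫ ω, 2*a i^3 * T 1 2 1 0 ω + (4*a i^2 * T 1 1 1 1 ω + (2*a i * T 1 0 1 2 ω + (a i^2 * T 0 2 2 0 ω + (2*a i * T 0 1 2 1 ω + (T 0 0 2 2 ω))))) ∂P = (∫ ω, 2*a i^3 * T 1 2 1 0 ω ∂P) + ∫ ω, 4*a i^2 * T 1 1 1 1 ω + (2*a i * T 1 0 1 2 ω + (a i^2 * T 0 2 2 0 ω + (2*a i * T 0 1 2 1 ω + (T 0 0 2 2 ω)))) ∂P :=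
        integral_add ((hTint 1 2 1 0).const_mul _) (((hTint 1 1 1 1).const_mul _).add (((hTint 1 0 1 2).const_mul _).add (((hTint 0 2 2 0).const_mul _).add (((hTint 0 1 2 1).const_mul _).add (hTint 0 0 2 2)))))
      have S4 : ∫ ω, 4*a i^2 * T 1 1 1 1 ω + (2*a i * T 1 0 1 2 ω + (a i^2 * T 0 2 2 0 ω + (2*a i * T 0 1 2 1 ω + (T 0 0 2 2 ω)))) ∂P = (∫ ω, 4*a i^2 * T 1 1 1 1 ω ∂P) + ∫ ω, 2*a i * T 1 0 1 2 ω + (a i^2 * T 0 2 2 0 ω + (2*a i * T 0 1 2 1 ω + (T 0 0 2 2 ω))) ∂P :=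
        integral_add ((hTint 1 1 1 1).const_mul _) (((hTint 1 0 1 2).const_mul _).add (((hTint 0 2 2 0).const_mul _).add (((hTint 0 1 2 1).const_mul _).add (hTint 0 0 2 2))))
      have S5 : ∫ ω, 2*a i * T 1 0 1 2 ω + (a i^2 * T 0 2 2 0 ω + (2*a i * T 0 1 2 1 ω + (T 0 0 2 2 ω))) ∂P = (∫ ω, 2*a i * T 1 0 1 2 ω ∂P) + ∫ ω, a i^2 * T 0 2 2 0 ω + (2*a i * T 0 1 2 1 ω + (T 0 0 2 2 ω)) ∂P :=
        integral_add ((hTint 1 0 1 2).const_mul _) (((hTint 0 2 2 0).const_mul _).add (((hTint 0 1 2 1).const_mul _).add (hTint 0 0 2 2)))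
      have S6 : ∫ ω, a i^2 * T 0 2 2 0 ω + (2*a i * T 0 1 2 1 ω + (T 0 0 2 2 ω)) ∂P = (∫ ω, a i^2 * T 0 2 2 0 ω ∂P) + ∫ ω, 2*a i * T 0 1 2 1 ω + (T 0 0 2 2 ω) ∂P :=
        integral_add ((hTint 0 2 2 0).const_mul _) (((hTint 0 1 2 1).const_mul _).add (hTint 0 0 2 2))
      have S7 : ∫ ω, 2*a i * T 0 1 2 1 ω + (T 0 0 2 2 ω) ∂P = (∫ ω, 2*a i * T 0 1 2 1 ω ∂P) + ∫ ω, T 0 0 2 2 ω ∂P :=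
        integral_add ((hTint 0 1 2 1).const_mul _) (hTint 0 0 2 2)
      rw [e, S0, S1, S2, S3, S4, S5, S6, S7]
      simp only [integral_const_mul]
      rw [hH 2 2 0 0, hH 2 1 0 1, hH 2 0 0 2, hH 1 2 1 0, hH 1 1 1 1, hH 1 0 1 2, hH 0 2 2 0, hH 0 1 2 1]
      simp only [hEdef]
      rw [hM10, hM01, hE00, hE10, hE01]
      have heq : a i^4 * (M 2 2 * 1) + (2*a i^3 * (M 2 1 * 0) + (a i^2 * (M 2 0 * E 0 2) +
            (2*a i^3 * (M 1 2 * 0) + (4*a i^2 * (M 1 1 * E 1 1) + (2*a i * (0 * E 1 2) +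
            (a i^2 * (M 0 2 * E 2 0) + (2*a i * (0 * E 2 1) + E 2 2))))))) =
          a i^4 * M 2 2 + a i^2 * (M 2 0 * E 0 2) + 4*a i^2 * (M 1 1 * E 1 1) +
            a i^2 * (M 0 2 * E 2 0) + E 2 2 := by ring
      rw [heq]
      have c1 : a i^4 * M 2 2 ≤ a i^4 * (3*(p*q)) :=
        mul_le_mul_of_nonneg_left hM22 (by positivity)
      have b2 : M 2 0 * E 0 2 ≤ p * (q * Sg) := mul_le_mul hM20 hE02 hE02n hp0
      have c2 : a i^2 * (M 2 0 * E 0 2) ≤ a i^2 * (p * (q * Sg)) :=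
        mul_le_mul_of_nonneg_left b2 (sq_nonneg _)
      have b3 : M 1 1 * E 1 1 ≤ (p*q) * ((p*q) * Sg) := by
        calc M 1 1 * E 1 1 ≤ |M 1 1 * E 1 1| := le_abs_self _
          _ = |M 1 1| * |E 1 1| := abs_mul _ _
          _ ≤ (p*q) * ((p*q) * Sg) :=
            mul_le_mul hM11 hE11 (abs_nonneg _) (mul_nonneg hp0 hq0)
      have c3 : 4*a i^2 * (M 1 1 * E 1 1) ≤ 4*a i^2 * ((p*q) * ((p*q) * Sg)) :=
        mul_le_mul_of_nonneg_left b3 (by positivity)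
      have b4 : M 0 2 * E 2 0 ≤ q * (p * Sg) := mul_le_mul hM02 hE20 hE20n hq0
      have c4 : a i^2 * (M 0 2 * E 2 0) ≤ a i^2 * (q * (p * Sg)) :=
        mul_le_mul_of_nonneg_left b4 (sq_nonneg _)
      have key : 0 ≤ (p*q) * (a i^2 * Sg) * (1 - p*q) :=
        mul_nonneg (mul_nonneg (mul_nonneg hp0 hq0)
          (mul_nonneg (sq_nonneg _) hS0)) (sub_nonneg.mpr hpq1)
      linarith [c1, c2, c3, c4, hE22, key]

end Main

set_option maxHeartbeats 1000000 in
/-- Fourth-moment bound for the sampled empirical process: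
`E[(Y_n(t) − Y_n(s))² (Y_n(r) − Y_n(t))²] ≤ C (F(r) − F(s))²` for `s ≤ t ≤ r`. -/
theorem stmt10 {Ω : Type*} [MeasurableSpace Ω] (P : Measure Ω) [IsProbabilityMeasure P]
    (d : ℕ) (z : ℕ → (Fin d → ℤ))
    (X : (Fin d → ℤ) → Ω → ℝ)
    (hmeas : ∀ l, Measurable (X l))
    (hindep : iIndepFun X P)
    (hident : ∀ l, IdentDistrib (X l) (X 0) P P)
    (F : ℝ → ℝ) (hF : ∀ s, F s = (P {ω | X 0 ω ≤ s}).toReal)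
    (Y : ℕ → ℝ → Ω → ℝ)
    (hY : ∀ n u ω, Y n u ω =
      (∑ l ∈ (Finset.range n).image z, (localTime d z n l : ℝ) *
          ((if X l ω ≤ u then (1 : ℝ) else 0) - F u)) / Real.sqrt (selfInt d z n)) :
    ∃ C : ℝ, ∀ (n : ℕ) (s t r : ℝ), s ≤ t → t ≤ r →
      ∫ ω, (Y n t ω - Y n s ω) ^ 2 * (Y n r ω - Y n t ω) ^ 2 ∂P ≤
        C * (F r - F s) ^ 2 := by
  classical
  refine ⟨1, ?_⟩
  intro n s t r hst htr
  -- basic facts about F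
  have hFmono : ∀ u v : ℝ, u ≤ v → F u ≤ F v := by
    intro u v huv
    rw [hF, hF]
    exact ENNReal.toReal_mono (measure_ne_top P _)
      (measure_mono fun ω hω => le_trans hω huv)
  have hF0 : ∀ u, 0 ≤ F u := fun u => by rw [hF]; exact ENNReal.toReal_nonneg
  have hF1 : ∀ u, F u ≤ 1 := by
    intro u; rw [hF]
    calc (P {ω | X 0 ω ≤ u}).toReal ≤ (1 : ENNReal).toReal :=
          ENNReal.toReal_mono (by simp) prob_le_one
      _ = 1 := by simp
  set p : ℝ := F t - F s with hp
  set q : ℝ := F r - F t with hq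
  have hp0 : 0 ≤ p := sub_nonneg.mpr (hFmono _ _ hst)
  have hq0 : 0 ≤ q := sub_nonneg.mpr (hFmono _ _ htr)
  have hp1 : p ≤ 1 := by rw [hp]; linarith [hF1 t, hF0 s]
  have hq1 : q ≤ 1 := by rw [hq]; linarith [hF1 r, hF0 t]
  have hpq1 : p * q ≤ 1 := by nlinarith
  -- the centered indicator functions
  set g1 : ℝ → ℝ := fun x =>
    ((if x ≤ t then (1:ℝ) else 0) - (if x ≤ s then (1:ℝ) else 0)) - p with hg1def
  set g2 : ℝ → ℝ := fun x =>
    ((if x ≤ r then (1:ℝ) else 0) - (if x ≤ t then (1:ℝ) else 0)) - q with hg2def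
  have hmg : ∀ u : ℝ, Measurable fun x : ℝ => if x ≤ u then (1:ℝ) else 0 := fun u =>
    Measurable.ite measurableSet_Iic measurable_const measurable_const
  have hg1m : Measurable g1 := ((hmg t).sub (hmg s)).sub measurable_const
  have hg2m : Measurable g2 := ((hmg r).sub (hmg t)).sub measurable_const
  have hb1 : ∀ x, |g1 x| ≤ 1 := by
    intro x
    simp only [hg1def]
    refine abs_le.mpr ⟨?_, ?_⟩ <;> split_ifs <;> linarith
  have hb2 : ∀ x, |g2 x| ≤ 1 := by
    intro x
    simp only [hg2def]
    refine abs_le.mpr ⟨?_, ?_⟩ <;> split_ifs <;> linarith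
  -- indicator integrals
  have hint : ∀ u : ℝ, Integrable (fun ω => if X 0 ω ≤ u then (1:ℝ) else 0) P := by
    intro u
    refine bdd_int ((hmg u).comp (hmeas 0)) (C := 1) fun ω => ?_
    split_ifs <;> simp
  have hchi : ∀ u : ℝ, ∫ ω, (if X 0 ω ≤ u then (1:ℝ) else 0) ∂P = F u := by
    intro u
    have hs' : MeasurableSet {ω | X 0 ω ≤ u} := hmeas 0 measurableSet_Iic
    rw [hF]
    refine (integral_congr_ae (Filter.Eventually.of_forall fun ω => ?_)).trans
      (integral_indicator_one hs')
    simp [Set.indicator_apply, Set.mem_setOf_eq]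
  have hintd1 : Integrable (fun ω => (if X 0 ω ≤ t then (1:ℝ) else 0) -
      (if X 0 ω ≤ s then (1:ℝ) else 0)) P := (hint t).sub (hint s)
  have hintd2 : Integrable (fun ω => (if X 0 ω ≤ r then (1:ℝ) else 0) -
      (if X 0 ω ≤ t then (1:ℝ) else 0)) P := (hint r).sub (hint t)
  -- pointwise indicator algebra
  have hi1 : ∀ x : ℝ, ((if x ≤ t then (1:ℝ) else 0) - (if x ≤ s then (1:ℝ) else 0)) *
      ((if x ≤ t then (1:ℝ) else 0) - (if x ≤ s then (1:ℝ) else 0)) =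
      (if x ≤ t then (1:ℝ) else 0) - (if x ≤ s then (1:ℝ) else 0) := by
    intro x
    by_cases h2 : x ≤ t
    · by_cases h1 : x ≤ s <;> simp [h1, h2]
    · have h1 : ¬ x ≤ s := fun h => h2 (h.trans hst)
      simp [h1, h2]
  have hi2 : ∀ x : ℝ, ((if x ≤ r then (1:ℝ) else 0) - (if x ≤ t then (1:ℝ) else 0)) *
      ((if x ≤ r then (1:ℝ) else 0) - (if x ≤ t then (1:ℝ) else 0)) =
      (if x ≤ r then (1:ℝ) else 0) - (if x ≤ t then (1:ℝ) else 0) := by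
    intro x
    by_cases h2 : x ≤ r
    · by_cases h1 : x ≤ t <;> simp [h1, h2]
    · have h1 : ¬ x ≤ t := fun h => h2 (h.trans htr)
      simp [h1, h2]
  have hi12 : ∀ x : ℝ, ((if x ≤ t then (1:ℝ) else 0) - (if x ≤ s then (1:ℝ) else 0)) *
      ((if x ≤ r then (1:ℝ) else 0) - (if x ≤ t then (1:ℝ) else 0)) = 0 := by
    intro x
    by_cases h2 : x ≤ t
    · have h3 : x ≤ r := h2.trans htr
      simp [h2, h3]
    · have h1 : ¬ x ≤ s := fun h => h2 (h.trans hst)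
      simp [h1, h2]
  -- key pointwise identities
  have key1 : ∀ x : ℝ, (g1 x)^2 = (1 - 2*p) *
      ((if x ≤ t then (1:ℝ) else 0) - (if x ≤ s then (1:ℝ) else 0)) + p^2 := by
    intro x
    simp only [hg1def]
    linear_combination hi1 x
  have key2 : ∀ x : ℝ, (g2 x)^2 = (1 - 2*q) *
      ((if x ≤ r then (1:ℝ) else 0) - (if x ≤ t then (1:ℝ) else 0)) + q^2 := by
    intro x
    simp only [hg2def]
    linear_combination hi2 x
  have key12 : ∀ x : ℝ, g1 x * g2 x = (-q) *
      ((if x ≤ t then (1:ℝ) else 0) - (if x ≤ s then (1:ℝ) else 0)) +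
      ((-p) * ((if x ≤ r then (1:ℝ) else 0) - (if x ≤ t then (1:ℝ) else 0)) + p*q) := by
    intro x
    simp only [hg1def, hg2def]
    linear_combination hi12 x
  have key22 : ∀ x : ℝ, (g1 x)^2 * (g2 x)^2 = ((1-2*p)*q^2) *
      ((if x ≤ t then (1:ℝ) else 0) - (if x ≤ s then (1:ℝ) else 0)) +
      (((1-2*q)*p^2) * ((if x ≤ r then (1:ℝ) else 0) - (if x ≤ t then (1:ℝ) else 0)) +
        p^2*q^2) := by
    intro x
    rw [key1 x, key2 x]
    linear_combination ((1-2*p)*(1-2*q)) * hi12 x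
  -- moments of g1, g2 at X 0
  have hm1 : ∫ ω, g1 (X 0 ω) ∂P = 0 := by
    simp only [hg1def]
    rw [integral_sub hintd1 (integrable_const p),
      integral_sub (hint t) (hint s), hchi t, hchi s, integral_const, ← hp]
    simp [measure_univ]
  have hm2 : ∫ ω, g2 (X 0 ω) ∂P = 0 := by
    simp only [hg2def]
    rw [integral_sub hintd2 (integrable_const q),
      integral_sub (hint r) (hint t), hchi r, hchi t, integral_const, ← hq]
    simp [measure_univ]
  have hm20 : ∫ ω, g1 (X 0 ω)^2 ∂P ≤ p := by
    have e : (fun ω => g1 (X 0 ω)^2) = fun ω => (1 - 2*p) *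
        ((if X 0 ω ≤ t then (1:ℝ) else 0) - (if X 0 ω ≤ s then (1:ℝ) else 0)) + p^2 :=
      funext fun ω => key1 (X 0 ω)
    rw [e, integral_add (hintd1.const_mul _) (integrable_const _),
      integral_const_mul, integral_sub (hint t) (hint s), hchi t, hchi s,
      integral_const, ← hp]
    simp only [measure_univ, probReal_univ, ENNReal.toReal_one, smul_eq_mul, one_mul]
    nlinarith [sq_nonneg p]
  have hm02 : ∫ ω, g2 (X 0 ω)^2 ∂P ≤ q := by
    have e : (fun ω => g2 (X 0 ω)^2) = fun ω => (1 - 2*q) *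
        ((if X 0 ω ≤ r then (1:ℝ) else 0) - (if X 0 ω ≤ t then (1:ℝ) else 0)) + q^2 :=
      funext fun ω => key2 (X 0 ω)
    rw [e, integral_add (hintd2.const_mul _) (integrable_const _),
      integral_const_mul, integral_sub (hint r) (hint t), hchi r, hchi t,
      integral_const, ← hq]
    simp only [measure_univ, probReal_univ, ENNReal.toReal_one, smul_eq_mul, one_mul]
    nlinarith [sq_nonneg q]
  have hm11 : |∫ ω, g1 (X 0 ω) * g2 (X 0 ω) ∂P| ≤ p * q := by
    have e : (fun ω => g1 (X 0 ω) * g2 (X 0 ω)) = fun ω => (-q) *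
        ((if X 0 ω ≤ t then (1:ℝ) else 0) - (if X 0 ω ≤ s then (1:ℝ) else 0)) +
        ((-p) * ((if X 0 ω ≤ r then (1:ℝ) else 0) - (if X 0 ω ≤ t then (1:ℝ) else 0)) +
          p*q) :=
      funext fun ω => key12 (X 0 ω)
    have A1 : ∫ ω, (-p) * ((if X 0 ω ≤ r then (1:ℝ) else 0) -
          (if X 0 ω ≤ t then (1:ℝ) else 0)) + p*q ∂P =
        (∫ ω, (-p) * ((if X 0 ω ≤ r then (1:ℝ) else 0) -
          (if X 0 ω ≤ t then (1:ℝ) else 0)) ∂P) + ∫ _ω, p*q ∂P :=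
      integral_add (hintd2.const_mul _) (integrable_const _)
    have A0 : ∫ ω, (-q) * ((if X 0 ω ≤ t then (1:ℝ) else 0) -
          (if X 0 ω ≤ s then (1:ℝ) else 0)) +
          ((-p) * ((if X 0 ω ≤ r then (1:ℝ) else 0) -
          (if X 0 ω ≤ t then (1:ℝ) else 0)) + p*q) ∂P =
        (∫ ω, (-q) * ((if X 0 ω ≤ t then (1:ℝ) else 0) -
          (if X 0 ω ≤ s then (1:ℝ) else 0)) ∂P) +
        ∫ ω, (-p) * ((if X 0 ω ≤ r then (1:ℝ) else 0) -
          (if X 0 ω ≤ t then (1:ℝ) else 0)) + p*q ∂P :=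
      integral_add (hintd1.const_mul _) ((hintd2.const_mul _).add (integrable_const _))
    rw [e, A0, A1,
      integral_const_mul, integral_const_mul, integral_sub (hint t) (hint s),
      integral_sub (hint r) (hint t), hchi t, hchi s, hchi r,
      integral_const, ← hp, ← hq]
    have e2 : -q * p + (-p * q + P.real Set.univ • (p*q)) = -(p*q) := by
      simp [measure_univ]; ring
    rw [e2, abs_neg, abs_of_nonneg (mul_nonneg hp0 hq0)]
  have hm22 : ∫ ω, g1 (X 0 ω)^2 * g2 (X 0 ω)^2 ∂P ≤ 3 * (p * q) := by
    have e : (fun ω => g1 (X 0 ω)^2 * g2 (X 0 ω)^2) = fun ω => ((1-2*p)*q^2) *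
        ((if X 0 ω ≤ t then (1:ℝ) else 0) - (if X 0 ω ≤ s then (1:ℝ) else 0)) +
        (((1-2*q)*p^2) * ((if X 0 ω ≤ r then (1:ℝ) else 0) -
          (if X 0 ω ≤ t then (1:ℝ) else 0)) + p^2*q^2) :=
      funext fun ω => key22 (X 0 ω)
    have A1 : ∫ ω, ((1-2*q)*p^2) * ((if X 0 ω ≤ r then (1:ℝ) else 0) -
          (if X 0 ω ≤ t then (1:ℝ) else 0)) + p^2*q^2 ∂P =
        (∫ ω, ((1-2*q)*p^2) * ((if X 0 ω ≤ r then (1:ℝ) else 0) -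
          (if X 0 ω ≤ t then (1:ℝ) else 0)) ∂P) + ∫ _ω, p^2*q^2 ∂P :=
      integral_add (hintd2.const_mul _) (integrable_const _)
    have A0 : ∫ ω, ((1-2*p)*q^2) * ((if X 0 ω ≤ t then (1:ℝ) else 0) -
          (if X 0 ω ≤ s then (1:ℝ) else 0)) +
          (((1-2*q)*p^2) * ((if X 0 ω ≤ r then (1:ℝ) else 0) -
          (if X 0 ω ≤ t then (1:ℝ) else 0)) + p^2*q^2) ∂P =
        (∫ ω, ((1-2*p)*q^2) * ((if X 0 ω ≤ t then (1:ℝ) else 0) -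
          (if X 0 ω ≤ s then (1:ℝ) else 0)) ∂P) +
        ∫ ω, ((1-2*q)*p^2) * ((if X 0 ω ≤ r then (1:ℝ) else 0) -
          (if X 0 ω ≤ t then (1:ℝ) else 0)) + p^2*q^2 ∂P :=
      integral_add (hintd1.const_mul _) ((hintd2.const_mul _).add (integrable_const _))
    rw [e, A0, A1,
      integral_const_mul, integral_const_mul, integral_sub (hint t) (hint s),
      integral_sub (hint r) (hint t), hchi t, hchi s, hchi r,
      integral_const, ← hp, ← hq]
    simp only [measure_univ, probReal_univ, ENNReal.toReal_one, smul_eq_mul, one_mul]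
    nlinarith [mul_nonneg (mul_nonneg hp0 hq0) (sub_nonneg.mpr hq1),
      mul_nonneg (mul_nonneg hp0 hq0) (sub_nonneg.mpr hp1),
      sq_nonneg (p*q), mul_nonneg hp0 hq0]
  -- apply the main bound
  obtain ⟨-, -, -, -, -, hmain⟩ := fourth_moment_bound hmeas hindep hident hg1m hg2m
    hb1 hb2 hp0 hq0 hpq1 hm1 hm2 hm20 hm02 hm11 hm22
    (fun l => (localTime d z n l : ℝ)) ((Finset.range n).image z)
  have hVS : ∑ l ∈ (Finset.range n).image z, ((localTime d z n l : ℝ))^2 =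
      (selfInt d z n : ℝ) := by
    rw [selfInt]
    push_cast
    ring
  by_cases hV0 : (selfInt d z n : ℝ) = 0
  · calc ∫ ω, (Y n t ω - Y n s ω) ^ 2 * (Y n r ω - Y n t ω) ^ 2 ∂P
        = ∫ _ω, (0:ℝ) ∂P := by
          refine integral_congr_ae (Filter.Eventually.of_forall fun ω => ?_)
          simp [hY, hV0]
      _ = 0 := integral_zero _ _
      _ ≤ 1 * (F r - F s)^2 := by positivity
  · have hVpos : 0 < (selfInt d z n : ℝ) :=
      lt_of_le_of_ne (Nat.cast_nonneg _) (Ne.symm hV0)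
    have hsq : Real.sqrt (selfInt d z n : ℕ) ^ 2 = (selfInt d z n : ℝ) :=
      Real.sq_sqrt hVpos.le
    have hrw : (fun ω => (Y n t ω - Y n s ω) ^ 2 * (Y n r ω - Y n t ω) ^ 2) =
        fun ω => ((∑ l ∈ (Finset.range n).image z, (localTime d z n l : ℝ) * g1 (X l ω))^2 *
          (∑ l ∈ (Finset.range n).image z, (localTime d z n l : ℝ) * g2 (X l ω))^2) *
          (((selfInt d z n : ℝ))^2)⁻¹ := by
      funext ω
      rw [hY n t ω, hY n s ω, hY n r ω, div_sub_div_same, div_sub_div_same]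
      rw [← Finset.sum_sub_distrib, ← Finset.sum_sub_distrib]
      have e1 : ∑ l ∈ (Finset.range n).image z,
          ((localTime d z n l : ℝ) * ((if X l ω ≤ t then (1:ℝ) else 0) - F t) -
            (localTime d z n l : ℝ) * ((if X l ω ≤ s then (1:ℝ) else 0) - F s)) =
          ∑ l ∈ (Finset.range n).image z, (localTime d z n l : ℝ) * g1 (X l ω) := by
        refine Finset.sum_congr rfl fun l _ => ?_
        simp only [hg1def, hp]
        ring
      have e2 : ∑ l ∈ (Finset.range n).image z,
          ((localTime d z n l : ℝ) * ((if X l ω ≤ r then (1:ℝ) else 0) - F r) -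
            (localTime d z n l : ℝ) * ((if X l ω ≤ t then (1:ℝ) else 0) - F t)) =
          ∑ l ∈ (Finset.range n).image z, (localTime d z n l : ℝ) * g2 (X l ω) := by
        refine Finset.sum_congr rfl fun l _ => ?_
        simp only [hg2def, hq]
        ring
      rw [e1, e2, div_pow, div_pow, hsq, div_mul_div_comm,
        ← pow_two ((selfInt d z n : ℝ)), div_eq_mul_inv]
    rw [hrw, integral_mul_const]
    rw [hVS] at hmain
    calc (∫ ω, (∑ l ∈ (Finset.range n).image z, (localTime d z n l : ℝ) * g1 (X l ω))^2 *
          (∑ l ∈ (Finset.range n).image z, (localTime d z n l : ℝ) * g2 (X l ω))^2 ∂P) *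
          (((selfInt d z n : ℝ))^2)⁻¹
        ≤ (3 * (p*q) * ((selfInt d z n : ℝ))^2) * (((selfInt d z n : ℝ))^2)⁻¹ :=
          mul_le_mul_of_nonneg_right hmain (inv_nonneg.mpr (sq_nonneg _))
      _ = 3 * (p*q) := by field_simp
      _ ≤ (p + q)^2 := by nlinarith [sq_nonneg (p - q)]
      _ = 1 * (F r - F s)^2 := by rw [hp, hq]; ring
end

section
/- Let (X, μ, T) be an ergodic measure-preserving system and f : X → Z^d measurable. With M_n(x) and V_n(x) the maximal local time and self-intersection count of the orbit (f_k(x))_{1 ≤ k ≤ n}, one has lim_n [M_n(x)^2/V_n(x) − M_n(Tx)^2/V_n(Tx)] = 0 for every x, and hence there exists a constant γ ∈ [0,1] such that limsup_n M_n(x)^2/V_n(x) = γ for μ-a.e. x. -/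
set_option maxHeartbeats 1000000


open Finset MeasureTheory Filter

/-- Ergodic sums `f_k(x) = ∑_{j<k} f(T^j x)`. -/
def ergSum {X : Type*} (d : ℕ) (T : X → X) (f : X → (Fin d → ℤ)) (k : ℕ) (x : X) :
    Fin d → ℤ :=
  ∑ j ∈ Finset.range k, f (T^[j] x)

/-- Local time `N_n(x, l) = #{1 ≤ k ≤ n : f_k(x) = l}`. -/
def cocLocalTime {X : Type*} (d : ℕ) (T : X → X) (f : X → (Fin d → ℤ)) (n : ℕ) (x : X)
    (l : Fin d → ℤ) : ℕ :=
  ((Finset.Icc 1 n).filter fun k => ergSum d T f k x = l).card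

/-- Maximal local time `M_n(x)`. -/
def cocMaxLocalTime {X : Type*} (d : ℕ) (T : X → X) (f : X → (Fin d → ℤ)) (n : ℕ)
    (x : X) : ℕ :=
  ((Finset.Icc 1 n).image (fun k => ergSum d T f k x)).sup (cocLocalTime d T f n x)

/-- Self-intersection count `V_n(x)`. -/
def cocSelfInt {X : Type*} (d : ℕ) (T : X → X) (f : X → (Fin d → ℤ)) (n : ℕ) (x : X) : ℕ :=
  ∑ l ∈ (Finset.Icc 1 n).image (fun k => ergSum d T f k x), (cocLocalTime d T f n x l) ^ 2

section aux

variable {X : Type*} {d : ℕ} {T : X → X} {f : X → (Fin d → ℤ)}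

lemma ergSum_zero (x : X) : ergSum d T f 0 x = 0 := by simp [ergSum]

lemma ergSum_succ (k : ℕ) (x : X) :
    ergSum d T f (k + 1) x = f x + ergSum d T f k (T x) := by
  unfold ergSum
  rw [Finset.sum_range_succ']
  simp only [Function.iterate_succ_apply, Function.iterate_zero_apply]
  exact add_comm _ _

lemma sum_Icc_one {M : Type*} [AddCommMonoid M] (n : ℕ) (g : ℕ → M) :
    ∑ k ∈ Finset.Icc 1 n, g k = ∑ j ∈ Finset.range n, g (j + 1) := by
  rw [← Finset.Ico_add_one_right_eq_Icc, Finset.sum_Ico_eq_sum_range]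
  simp [add_comm]

lemma localTime_sum (n : ℕ) (x : X) (l : Fin d → ℤ) :
    cocLocalTime d T f n x l
      = ∑ k ∈ Finset.Icc 1 n, if ergSum d T f k x = l then 1 else 0 := by
  rw [cocLocalTime, Finset.card_filter]

lemma localTime_succ_left (n : ℕ) (x : X) (l : Fin d → ℤ) :
    cocLocalTime d T f (n + 1) x l
      = (if l = f x then 1 else 0) + cocLocalTime d T f n (T x) (l - f x) := by
  rw [localTime_sum, sum_Icc_one]
  have hterm : ∀ j : ℕ, (if ergSum d T f (j + 1) x = l then (1:ℕ) else 0)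
      = (if ergSum d T f j (T x) = l - f x then 1 else 0) := by
    intro j
    rw [ergSum_succ]
    congr 1
    rw [eq_iff_iff]
    constructor
    · intro h; rw [← h]; abel
    · intro h; rw [h]; abel
  rw [Finset.sum_congr rfl fun j _ => hterm j, Finset.sum_range_succ']
  rw [← sum_Icc_one n (fun k => if ergSum d T f k (T x) = l - f x then (1:ℕ) else 0),
    ← localTime_sum]
  have h0 : (ergSum d T f 0 (T x) = l - f x) ↔ (l = f x) := by
    rw [ergSum_zero, eq_comm, sub_eq_zero]
  rw [if_congr h0 rfl rfl]
  exact add_comm _ _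

lemma localTime_succ_top (n : ℕ) (x : X) (l : Fin d → ℤ) :
    cocLocalTime d T f (n + 1) x l
      = cocLocalTime d T f n x l + (if ergSum d T f (n + 1) x = l then 1 else 0) := by
  rw [localTime_sum, localTime_sum, Finset.sum_Icc_succ_top (by omega : 1 ≤ n + 1)]

lemma localTime_le_max (n : ℕ) (x : X) (l : Fin d → ℤ) :
    cocLocalTime d T f n x l ≤ cocMaxLocalTime d T f n x := by
  by_cases h : ((Finset.Icc 1 n).filter fun k => ergSum d T f k x = l).Nonempty
  · obtain ⟨k, hk⟩ := h
    rw [Finset.mem_filter] at hk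
    exact Finset.le_sup (Finset.mem_image.mpr ⟨k, hk.1, hk.2⟩)
  · rw [Finset.not_nonempty_iff_eq_empty] at h
    simp [cocLocalTime, h]

lemma max_eq_sup (n : ℕ) (x : X) :
    cocMaxLocalTime d T f n x
      = (Finset.Icc 1 n).sup (fun k => cocLocalTime d T f n x (ergSum d T f k x)) := by
  rw [cocMaxLocalTime, Finset.sup_image]
  rfl

lemma selfInt_eq_sum (n : ℕ) (x : X) :
    cocSelfInt d T f n x
      = ∑ k ∈ Finset.Icc 1 n, cocLocalTime d T f n x (ergSum d T f k x) := by
  rw [Finset.sum_comp (cocLocalTime d T f n x) (fun k => ergSum d T f k x)]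
  rw [cocSelfInt]
  apply Finset.sum_congr rfl
  intro l _
  rw [smul_eq_mul, sq]
  rfl

lemma le_selfInt (n : ℕ) (x : X) : n ≤ cocSelfInt d T f n x := by
  rw [selfInt_eq_sum]
  have h : ∀ k ∈ Finset.Icc 1 n, 1 ≤ cocLocalTime d T f n x (ergSum d T f k x) := by
    intro k hk
    exact Finset.card_pos.mpr ⟨k, Finset.mem_filter.mpr ⟨hk, rfl⟩⟩
  calc n = ∑ _k ∈ Finset.Icc 1 n, 1 := by simp
    _ ≤ _ := Finset.sum_le_sum h

lemma max_sq_le (n : ℕ) (x : X) :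
    (cocMaxLocalTime d T f n x) ^ 2 ≤ cocSelfInt d T f n x := by
  by_cases h : ((Finset.Icc 1 n).image (fun k => ergSum d T f k x)).Nonempty
  · obtain ⟨l, hl, hsup⟩ := Finset.exists_mem_eq_sup _ h (cocLocalTime d T f n x)
    rw [cocMaxLocalTime, hsup]
    exact Finset.single_le_sum (f := fun l => (cocLocalTime d T f n x l) ^ 2)
      (fun i _ => Nat.zero_le _) hl
  · rw [Finset.not_nonempty_iff_eq_empty] at h
    simp [cocMaxLocalTime, cocSelfInt, h]

lemma selfInt_succ (n : ℕ) (x : X) :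
    cocSelfInt d T f (n + 1) x
      = cocSelfInt d T f n x + 2 * cocLocalTime d T f n x (ergSum d T f (n + 1) x) + 1 := by
  rw [selfInt_eq_sum, Finset.sum_Icc_succ_top (by omega : 1 ≤ n + 1)]
  rw [Finset.sum_congr rfl fun k _ => localTime_succ_top n x (ergSum d T f k x)]
  rw [Finset.sum_add_distrib]
  have h2 : ∑ k ∈ Finset.Icc 1 n, (if ergSum d T f (n+1) x = ergSum d T f k x then (1:ℕ) else 0)
      = cocLocalTime d T f n x (ergSum d T f (n + 1) x) := by
    rw [localTime_sum]
    apply Finset.sum_congr rfl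
    intro k _
    simp [eq_comm]
  rw [h2, localTime_succ_top n x (ergSum d T f (n+1) x), ← selfInt_eq_sum, if_pos rfl]
  ring

lemma selfInt_succ_left (n : ℕ) (x : X) :
    cocSelfInt d T f (n + 1) x
      = cocSelfInt d T f n (T x) + 2 * cocLocalTime d T f n (T x) 0 + 1 := by
  rw [selfInt_eq_sum, sum_Icc_one]
  have h1 : ∀ j : ℕ, cocLocalTime d T f (n + 1) x (ergSum d T f (j + 1) x)
      = (if ergSum d T f j (T x) = 0 then 1 else 0)
        + cocLocalTime d T f n (T x) (ergSum d T f j (T x)) := by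
    intro j
    rw [localTime_succ_left, ergSum_succ]
    congr 1
    · congr 1
      rw [eq_iff_iff, add_eq_left]
    · congr 1
      rw [add_sub_cancel_left]
  rw [Finset.sum_congr rfl fun j _ => h1 j, Finset.sum_add_distrib]
  have h2 : ∑ j ∈ Finset.range (n + 1), (if ergSum d T f j (T x) = 0 then (1:ℕ) else 0)
      = cocLocalTime d T f n (T x) 0 + 1 := by
    rw [Finset.sum_range_succ',
      ← sum_Icc_one n (fun k => if ergSum d T f k (T x) = 0 then (1:ℕ) else 0),
      ← localTime_sum]
    simp [ergSum_zero]
  have h3 : ∑ j ∈ Finset.range (n + 1), cocLocalTime d T f n (T x) (ergSum d T f j (T x))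
      = cocSelfInt d T f n (T x) + cocLocalTime d T f n (T x) 0 := by
    rw [Finset.sum_range_succ',
      ← sum_Icc_one n (fun k => cocLocalTime d T f n (T x) (ergSum d T f k (T x))),
      ← selfInt_eq_sum]
    simp [ergSum_zero]
  rw [h2, h3]
  ring

lemma max_succ_le (n : ℕ) (x : X) :
    cocMaxLocalTime d T f (n + 1) x ≤ cocMaxLocalTime d T f n x + 1 := by
  rw [max_eq_sup]
  apply Finset.sup_le
  intro k _
  rw [localTime_succ_top]
  have h := localTime_le_max (T := T) (f := f) n x (ergSum d T f k x)
  split_ifs <;> omega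

lemma le_max_succ (n : ℕ) (x : X) :
    cocMaxLocalTime d T f n x ≤ cocMaxLocalTime d T f (n + 1) x := by
  rw [max_eq_sup n]
  apply Finset.sup_le
  intro k _
  refine le_trans ?_ (localTime_le_max (n + 1) x (ergSum d T f k x))
  rw [localTime_succ_top]
  omega

lemma max_succ_le_left (n : ℕ) (x : X) :
    cocMaxLocalTime d T f (n + 1) x ≤ cocMaxLocalTime d T f n (T x) + 1 := by
  rw [max_eq_sup]
  apply Finset.sup_le
  intro k _
  rw [localTime_succ_left]
  have h := localTime_le_max (T := T) (f := f) n (T x) (ergSum d T f k x - f x)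
  split_ifs <;> omega

lemma le_max_succ_left (n : ℕ) (x : X) :
    cocMaxLocalTime d T f n (T x) ≤ cocMaxLocalTime d T f (n + 1) x := by
  rw [max_eq_sup n]
  apply Finset.sup_le
  intro k _
  have h := localTime_succ_left (T := T) (f := f) n x (ergSum d T f k (T x) + f x)
  rw [add_sub_cancel_right] at h
  refine le_trans ?_ (localTime_le_max (n + 1) x (ergSum d T f k (T x) + f x))
  rw [h]
  omega

end aux

lemma key_est {c W Mx My Vx Vy m : ℕ} (hm : 1 ≤ m) (hmW : m ≤ W) (hcW : c ^ 2 ≤ W)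
    (h1 : c ≤ Mx) (h2 : Mx ≤ c + 1) (h3 : c ≤ My) (h4 : My ≤ c + 1)
    (h5 : W ≤ Vx) (h6 : Vx ≤ W + 2 * c + 1) (h7 : W ≤ Vy) (h8 : Vy ≤ W + 2 * c + 1)
    (h9 : Mx ^ 2 ≤ Vx) (h10 : My ^ 2 ≤ Vy) :
    ((Mx : ℝ) ^ 2 / (Vx : ℝ) - (My : ℝ) ^ 2 / (Vy : ℝ)) ^ 2 ≤ 100 / (m : ℝ) := by
  have hm0 : (0 : ℝ) < m := by exact_mod_cast hm
  have hVx0 : (0 : ℝ) < Vx := by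
    have : (1 : ℕ) ≤ Vx := by omega
    exact_mod_cast this
  have hVy0 : (0 : ℝ) < Vy := by
    have : (1 : ℕ) ≤ Vy := by omega
    exact_mod_cast this
  -- real versions of hypotheses
  have rmVx : (m : ℝ) ≤ Vx := by exact_mod_cast le_trans hmW h5
  have rmVy : (m : ℝ) ≤ Vy := by exact_mod_cast le_trans hmW h7
  have rc2Vx : (c : ℝ) ^ 2 ≤ Vx := by exact_mod_cast le_trans hcW h5
  have rc2Vy : (c : ℝ) ^ 2 ≤ Vy := by exact_mod_cast le_trans hcW h7
  have rMx2 : (Mx : ℝ) ^ 2 ≤ Vx := by exact_mod_cast h9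
  have rMy2 : (My : ℝ) ^ 2 ≤ Vy := by exact_mod_cast h10
  have rVyVx : (Vy : ℝ) - Vx ≤ 2 * c + 1 := by
    have : (Vy : ℝ) ≤ W + 2 * c + 1 := by exact_mod_cast h8
    have h5' : (W : ℝ) ≤ Vx := by exact_mod_cast h5
    linarith
  have rVxVy : (Vx : ℝ) - Vy ≤ 2 * c + 1 := by
    have : (Vx : ℝ) ≤ W + 2 * c + 1 := by exact_mod_cast h6
    have h7' : (W : ℝ) ≤ Vy := by exact_mod_cast h7
    linarith
  have rMxMy : (Mx : ℝ) - My ≤ 1 := by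
    have h2' : (Mx : ℝ) ≤ c + 1 := by exact_mod_cast h2
    have h3' : (c : ℝ) ≤ My := by exact_mod_cast h3
    linarith
  have rMyMx : (My : ℝ) - Mx ≤ 1 := by
    have h4' : (My : ℝ) ≤ c + 1 := by exact_mod_cast h4
    have h1' : (c : ℝ) ≤ Mx := by exact_mod_cast h1
    linarith
  have rMxc : (Mx : ℝ) ≤ c + 1 := by exact_mod_cast h2
  have rMyc : (My : ℝ) ≤ c + 1 := by exact_mod_cast h4
  have rMx0 : (0 : ℝ) ≤ Mx := Nat.cast_nonneg _
  have rMy0 : (0 : ℝ) ≤ My := Nat.cast_nonneg _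
  have rc0 : (0 : ℝ) ≤ c := Nat.cast_nonneg _
  have rVx1 : (1 : ℝ) ≤ Vx := by
    have : (1 : ℕ) ≤ Vx := by omega
    exact_mod_cast this
  have rVy1 : (1 : ℝ) ≤ Vy := by
    have : (1 : ℕ) ≤ Vy := by omega
    exact_mod_cast this
  rw [div_sub_div _ _ hVx0.ne' hVy0.ne', div_pow, div_le_div_iff₀ (by positivity) hm0]
  set A : ℝ := (Mx : ℝ) ^ 2 * Vy - Vx * My ^ 2 with hA
  -- upper bound on A
  have hub : A ≤ (4 * c + 3) * Vx := by
    have e1 : (Mx : ℝ) ^ 2 * (Vy - Vx) ≤ Vx * (2 * c + 1) := by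
      calc (Mx : ℝ) ^ 2 * (Vy - Vx) ≤ (Mx : ℝ) ^ 2 * (2 * c + 1) :=
            mul_le_mul_of_nonneg_left rVyVx (sq_nonneg _)
        _ ≤ Vx * (2 * c + 1) := mul_le_mul_of_nonneg_right rMx2 (by positivity)
    have e2 : ((Mx : ℝ) ^ 2 - My ^ 2) * Vx ≤ (2 * c + 2) * Vx := by
      have hid : (Mx : ℝ) ^ 2 - My ^ 2 = (Mx - My) * (Mx + My) := by ring
      have hb : ((Mx : ℝ) - My) * (Mx + My) ≤ 1 * ((Mx : ℝ) + My) :=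
        mul_le_mul_of_nonneg_right rMxMy (by linarith)
      have : (Mx : ℝ) ^ 2 - My ^ 2 ≤ 2 * c + 2 := by rw [hid]; linarith
      exact mul_le_mul_of_nonneg_right this hVx0.le
    have hA' : A = (Mx : ℝ) ^ 2 * (Vy - Vx) + ((Mx : ℝ) ^ 2 - My ^ 2) * Vx := by rw [hA]; ring
    linarith [e1, e2]
  have hlb : -A ≤ (4 * c + 3) * Vy := by
    have e1 : (My : ℝ) ^ 2 * (Vx - Vy) ≤ Vy * (2 * c + 1) := by
      calc (My : ℝ) ^ 2 * (Vx - Vy) ≤ (My : ℝ) ^ 2 * (2 * c + 1) :=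
            mul_le_mul_of_nonneg_left rVxVy (sq_nonneg _)
        _ ≤ Vy * (2 * c + 1) := mul_le_mul_of_nonneg_right rMy2 (by positivity)
    have e2 : ((My : ℝ) ^ 2 - Mx ^ 2) * Vy ≤ (2 * c + 2) * Vy := by
      have hid : (My : ℝ) ^ 2 - Mx ^ 2 = (My - Mx) * (My + Mx) := by ring
      have hb : ((My : ℝ) - Mx) * (My + Mx) ≤ 1 * ((My : ℝ) + Mx) :=
        mul_le_mul_of_nonneg_right rMyMx (by linarith)
      have : (My : ℝ) ^ 2 - Mx ^ 2 ≤ 2 * c + 2 := by rw [hid]; linarith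
      exact mul_le_mul_of_nonneg_right this hVy0.le
    have hA' : -A = (My : ℝ) ^ 2 * (Vx - Vy) + ((My : ℝ) ^ 2 - Mx ^ 2) * Vy := by rw [hA]; ring
    linarith [e1, e2]
  have hsq : A ^ 2 ≤ ((4 * c + 3) * Vx) ^ 2 + ((4 * c + 3) * Vy) ^ 2 := by
    rcases le_or_gt 0 A with h | h
    · have := pow_le_pow_left₀ h hub 2
      have h2 : (-A) ^ 2 = A ^ 2 := by ring
      linarith [sq_nonneg ((4 * (c : ℝ) + 3) * Vy)]
    · have h' : (0 : ℝ) ≤ -A := by linarith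
      have := pow_le_pow_left₀ h' hlb 2
      have h2 : (-A) ^ 2 = A ^ 2 := by ring
      linarith [sq_nonneg ((4 * (c : ℝ) + 3) * Vx)]
  have h2c : 2 * (c : ℝ) ≤ c ^ 2 + 1 := by nlinarith [sq_nonneg ((c : ℝ) - 1)]
  have hexp : (4 * (c : ℝ) + 3) ^ 2 = 16 * (c : ℝ) ^ 2 + 24 * c + 9 := by ring
  have hc50x : (4 * (c : ℝ) + 3) ^ 2 ≤ 50 * Vx := by rw [hexp]; linarith
  have hc50y : (4 * (c : ℝ) + 3) ^ 2 ≤ 50 * Vy := by rw [hexp]; linarith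
  -- m * (4c+3)^2 ≤ 50 * Vy * Vy  and  ≤ 50 * Vx * Vx
  have t1 : A ^ 2 * m ≤ (4 * (c : ℝ) + 3) ^ 2 * Vx ^ 2 * m + (4 * (c : ℝ) + 3) ^ 2 * Vy ^ 2 * m := by
    have := mul_le_mul_of_nonneg_right hsq hm0.le
    calc A ^ 2 * m ≤ (((4 * (c : ℝ) + 3) * Vx) ^ 2 + ((4 * (c : ℝ) + 3) * Vy) ^ 2) * m := this
      _ = (4 * (c : ℝ) + 3) ^ 2 * Vx ^ 2 * m + (4 * (c : ℝ) + 3) ^ 2 * Vy ^ 2 * m := by ring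
  have t2 : (4 * (c : ℝ) + 3) ^ 2 * Vx ^ 2 * m ≤ 50 * Vy * Vx ^ 2 * Vy := by
    have q : (4 * (c : ℝ) + 3) ^ 2 * m ≤ (50 * Vy) * Vy :=
      mul_le_mul hc50y rmVy hm0.le (by positivity)
    calc (4 * (c : ℝ) + 3) ^ 2 * (Vx : ℝ) ^ 2 * (m : ℝ)
          = ((4 * (c : ℝ) + 3) ^ 2 * (m : ℝ)) * (Vx : ℝ) ^ 2 := by ring
      _ ≤ ((50 * (Vy : ℝ)) * (Vy : ℝ)) * (Vx : ℝ) ^ 2 := mul_le_mul_of_nonneg_right q (sq_nonneg _)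
      _ = 50 * (Vy : ℝ) * (Vx : ℝ) ^ 2 * (Vy : ℝ) := by ring
  have t3 : (4 * (c : ℝ) + 3) ^ 2 * Vy ^ 2 * m ≤ 50 * Vx * Vy ^ 2 * Vx := by
    have q : (4 * (c : ℝ) + 3) ^ 2 * m ≤ (50 * Vx) * Vx :=
      mul_le_mul hc50x rmVx hm0.le (by positivity)
    calc (4 * (c : ℝ) + 3) ^ 2 * (Vy : ℝ) ^ 2 * (m : ℝ)
          = ((4 * (c : ℝ) + 3) ^ 2 * (m : ℝ)) * (Vy : ℝ) ^ 2 := by ring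
      _ ≤ ((50 * (Vx : ℝ)) * (Vx : ℝ)) * (Vy : ℝ) ^ 2 := mul_le_mul_of_nonneg_right q (sq_nonneg _)
      _ = 50 * (Vx : ℝ) * (Vy : ℝ) ^ 2 * (Vx : ℝ) := by ring
  calc A ^ 2 * m ≤ 50 * Vy * Vx ^ 2 * Vy + 50 * Vx * Vy ^ 2 * Vx := by linarith [t1, t2, t3]
    _ = 100 * ((Vx : ℝ) * Vy) ^ 2 := by ring
    _ ≤ 100 * ((Vx : ℝ) * Vy) ^ 2 := le_refl _

lemma limsup_eq_of_sub {u v : ℕ → ℝ}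
    (h : Tendsto (fun n => u n - v n) atTop (nhds 0))
    (hu0 : ∀ n, 0 ≤ u n) (hu1 : ∀ n, u n ≤ 1)
    (hv0 : ∀ n, 0 ≤ v n) (hv1 : ∀ n, v n ≤ 1) :
    limsup u atTop = limsup v atTop := by
  have key : ∀ a b : ℕ → ℝ, Tendsto (fun n => a n - b n) atTop (nhds 0) →
      (∀ n, 0 ≤ a n) → (∀ n, b n ≤ 1) →
      limsup a atTop ≤ limsup b atTop := by
    intro a b hab ha0 hb1
    refine le_of_forall_pos_le_add fun ε hε => ?_
    have h1 : ∀ᶠ n in atTop, a n - b n < ε / 2 :=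
      hab.eventually (eventually_lt_nhds (half_pos hε))
    have h2 : ∀ᶠ n in atTop, b n < limsup b atTop + ε / 2 :=
      eventually_lt_of_limsup_lt (lt_add_of_pos_right _ (half_pos hε))
        (isBoundedUnder_of ⟨1, fun n => hb1 n⟩)
    refine limsup_le_of_le (isCoboundedUnder_le_of_le atTop ha0) ?_
    filter_upwards [h1, h2] with n hn1 hn2
    linarith
  refine le_antisymm (key u v h hu0 hv1) (key v u ?_ hv0 hu1)
  have := h.neg
  simpa using this

lemma measurable_finset_sup {α : Type*} [MeasurableSpace α] (s : Finset ℕ) (g : ℕ → α → ℕ)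
    (hg : ∀ k, Measurable (g k)) : Measurable fun x => s.sup fun k => g k x := by
  classical
  induction s using Finset.induction_on with
  | empty => simpa using measurable_const
  | insert a s ha ih =>
      simp only [Finset.sup_insert]
      exact Measurable.max (hg _) ih

/-- `M_n(x)²/V_n(x) − M_n(Tx)²/V_n(Tx) → 0` for every `x`, and by ergodicity the
`limsup` of `M_n²/V_n` is a.e. equal to a constant `γ ∈ [0,1]`. -/
theorem stmt13 {X : Type*} [MeasurableSpace X] (μ : Measure X) [IsProbabilityMeasure μ]
    (T : X → X) (hT : Ergodic T μ)
    (d : ℕ) (f : X → (Fin d → ℤ)) (hf : Measurable f) :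
    (∀ x : X, Tendsto (fun n : ℕ =>
        (cocMaxLocalTime d T f n x : ℝ) ^ 2 / (cocSelfInt d T f n x : ℝ) -
          (cocMaxLocalTime d T f n (T x) : ℝ) ^ 2 / (cocSelfInt d T f n (T x) : ℝ))
      atTop (nhds 0)) ∧
    (∃ γ : ℝ, γ ∈ Set.Icc (0 : ℝ) 1 ∧ ∀ᵐ x ∂μ,
      Filter.limsup (fun n : ℕ =>
        (cocMaxLocalTime d T f n x : ℝ) ^ 2 / (cocSelfInt d T f n x : ℝ)) atTop = γ) := by
  classical
  have hten : ∀ x : X, Tendsto (fun n : ℕ =>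
      (cocMaxLocalTime d T f n x : ℝ) ^ 2 / (cocSelfInt d T f n x : ℝ) -
        (cocMaxLocalTime d T f n (T x) : ℝ) ^ 2 / (cocSelfInt d T f n (T x) : ℝ))
      atTop (nhds 0) := by
    intro x
    set u : ℕ → ℝ := fun n =>
      (cocMaxLocalTime d T f n x : ℝ) ^ 2 / (cocSelfInt d T f n x : ℝ) -
        (cocMaxLocalTime d T f n (T x) : ℝ) ^ 2 / (cocSelfInt d T f n (T x) : ℝ) with hu
    have hbound : ∀ m : ℕ, 1 ≤ m → (u (m + 1)) ^ 2 ≤ 100 / (m : ℝ) := by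
      intro m hm
      have hid := selfInt_succ_left (T := T) (f := f) m x
      have hid2 := selfInt_succ (T := T) (f := f) m (T x)
      have hN0 := localTime_le_max (T := T) (f := f) m (T x) 0
      have hN1 := localTime_le_max (T := T) (f := f) m (T x) (ergSum d T f (m + 1) (T x))
      have e5 : cocSelfInt d T f m (T x) ≤ cocSelfInt d T f (m + 1) x := by omega
      have e6 : cocSelfInt d T f (m + 1) x
          ≤ cocSelfInt d T f m (T x) + 2 * cocMaxLocalTime d T f m (T x) + 1 := by omega
      have e7 : cocSelfInt d T f m (T x) ≤ cocSelfInt d T f (m + 1) (T x) := by omega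
      have e8 : cocSelfInt d T f (m + 1) (T x)
          ≤ cocSelfInt d T f m (T x) + 2 * cocMaxLocalTime d T f m (T x) + 1 := by omega
      exact key_est hm (le_selfInt (T := T) (f := f) m (T x))
        (max_sq_le (T := T) (f := f) m (T x))
        (le_max_succ_left (T := T) (f := f) m x)
        (max_succ_le_left (T := T) (f := f) m x)
        (le_max_succ (T := T) (f := f) m (T x))
        (max_succ_le (T := T) (f := f) m (T x))
        e5 e6 e7 e8
        (max_sq_le (T := T) (f := f) (m + 1) x)
        (max_sq_le (T := T) (f := f) (m + 1) (T x))
    have hb : Tendsto (fun n : ℕ => 100 / ((n : ℝ) - 1)) atTop (nhds 0) := by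
      apply Tendsto.div_atTop tendsto_const_nhds
      have h := tendsto_atTop_add_const_right atTop (-1 : ℝ) tendsto_natCast_atTop_atTop
      simpa [sub_eq_add_neg] using h
    have hsq : Tendsto (fun n => (u n) ^ 2) atTop (nhds 0) := by
      apply squeeze_zero' (Eventually.of_forall fun n => sq_nonneg _) ?_ hb
      filter_upwards [eventually_ge_atTop 2] with n hn
      obtain ⟨m, rfl⟩ : ∃ m, n = m + 1 := ⟨n - 1, by omega⟩
      have hm : 1 ≤ m := by omega
      have h := hbound m hm
      have hcast : ((m + 1 : ℕ) : ℝ) - 1 = (m : ℝ) := by push_cast; ring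
      rw [hcast]
      exact h
    have habs : Tendsto (fun n => |u n|) atTop (nhds 0) := by
      have h := (Real.continuous_sqrt.tendsto 0).comp hsq
      simp only [Function.comp_def] at h
      simpa [Real.sqrt_sq_eq_abs] using h
    exact squeeze_zero_norm (fun n => le_of_eq (Real.norm_eq_abs (u n))) habs
  refine ⟨hten, ?_⟩
  set R : ℕ → X → ℝ := fun n x =>
    (cocMaxLocalTime d T f n x : ℝ) ^ 2 / (cocSelfInt d T f n x : ℝ) with hRdef
  have hR0 : ∀ n x, 0 ≤ R n x := fun n x => by positivity
  have hR1 : ∀ n x, R n x ≤ 1 := by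
    intro n x
    rcases Nat.eq_zero_or_pos (cocSelfInt d T f n x) with h | h
    · simp [hRdef, h]
    · have hle : ((cocMaxLocalTime d T f n x : ℝ)) ^ 2 ≤ (cocSelfInt d T f n x : ℝ) := by
        exact_mod_cast max_sq_le (T := T) (f := f) n x
      exact (div_le_one (by exact_mod_cast h)).mpr hle
  have hTm : Measurable T := hT.toMeasurePreserving.measurable
  have hE : ∀ k, Measurable (ergSum d T f k) := by
    intro k
    exact Finset.measurable_sum _ fun j _ => hf.comp (hTm.iterate j)
  have hEqSet : ∀ j k, MeasurableSet {x | ergSum d T f j x = ergSum d T f k x} := by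
    intro j k
    exact measurableSet_eq_fun (hE j) (hE k)
  have hNk : ∀ n k, Measurable fun x => cocLocalTime d T f n x (ergSum d T f k x) := by
    intro n k
    have hrw : (fun x => cocLocalTime d T f n x (ergSum d T f k x))
        = fun x => ∑ j ∈ Finset.Icc 1 n,
            if ergSum d T f j x = ergSum d T f k x then 1 else 0 := by
      funext x; rw [localTime_sum]
    rw [hrw]
    exact Finset.measurable_sum _ fun j _ =>
      Measurable.ite (hEqSet j k) measurable_const measurable_const
  have hM : ∀ n, Measurable fun x => cocMaxLocalTime d T f n x := by
    intro n
    have hrw : (fun x => cocMaxLocalTime d T f n x)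
        = fun x => (Finset.Icc 1 n).sup fun k =>
            cocLocalTime d T f n x (ergSum d T f k x) := by
      funext x; rw [max_eq_sup]
    rw [hrw]
    exact measurable_finset_sup _ _ fun k => hNk n k
  have hV : ∀ n, Measurable fun x => cocSelfInt d T f n x := by
    intro n
    have hrw : (fun x => cocSelfInt d T f n x)
        = fun x => ∑ k ∈ Finset.Icc 1 n, cocLocalTime d T f n x (ergSum d T f k x) := by
      funext x; rw [selfInt_eq_sum]
    rw [hrw]
    exact Finset.measurable_sum _ fun k _ => hNk n k
  have hRmeas : ∀ n, Measurable (R n) := by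
    intro n
    exact ((measurable_from_top.comp (hM n)).pow_const 2).div
      (measurable_from_top.comp (hV n))
  set g : X → ℝ := fun x => limsup (fun n => R n x) atTop with hgdef
  have hgmeas : Measurable g := Measurable.limsup hRmeas
  have hginv : ∀ x, g (T x) = g x := by
    intro x
    refine limsup_eq_of_sub ?_ (fun n => hR0 n (T x)) (fun n => hR1 n (T x))
      (fun n => hR0 n x) (fun n => hR1 n x)
    have h := (hten x).neg
    simpa [hRdef] using h
  obtain ⟨γ, hγ⟩ := hT.ae_eq_const_of_ae_eq_comp₀ hgmeas.nullMeasurable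
    (Eventually.of_forall fun x => hginv x)
  haveI : (ae μ).NeBot := ae_neBot.mpr (IsProbabilityMeasure.ne_zero μ)
  obtain ⟨x₀, hx₀'⟩ := hγ.exists
  have hx₀ : g x₀ = γ := hx₀'
  refine ⟨γ, ⟨?_, ?_⟩, ?_⟩
  · rw [← hx₀]
    exact le_limsup_of_frequently_le (Frequently.of_forall fun n => hR0 n x₀)
      (isBoundedUnder_of ⟨1, fun n => hR1 n x₀⟩)
  · rw [← hx₀]
    exact limsup_le_of_le (isCoboundedUnder_le_of_le atTop fun n => hR0 n x₀)
      (Eventually.of_forall fun n => hR1 n x₀)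
  · filter_upwards [hγ] with x hx
    exact hx
end
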